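/- arXiv:1601.04850 — 10 statements merged into one kernel-verified Lean document; each statement's English description precedes it below -/
import Mathlib

section
/- There exists an absolute constant C > 0 such that for every integer n ≥ 2 the following holds. Let P(z) = Σ_{k=0}^n λ_k z^k be a random polynomial whose coefficients λ_0,…,λ_n are independent identically distributed complex random variables whose common law assigns probability 0 to {0}. Then 𝔼[V(P)] ≤ C log n. -/
open MeasureTheory ProbabilityTheory
open scoped ENNReal

/-- `V(P)`: the number of vertices of the Newton–Hadamard polygon, i.e. the number of
indices `ν` such that for some `r ∈ (0,∞)`, `ν` is the largest index with
`|λ_ν| r^ν = max_k |λ_k| r^k`. -/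
noncomputable def Vcount {n : ℕ} (lam : Fin (n + 1) → ℂ) : ℕ :=
  Finset.card (@Finset.filter (Fin (n + 1))
    (fun ν => ∃ r : ℝ, 0 < r ∧
      (∀ k : Fin (n + 1),
        ‖lam k‖ * r ^ (k : ℕ) ≤ ‖lam ν‖ * r ^ (ν : ℕ)) ∧
      (∀ k : Fin (n + 1),
        ‖lam k‖ * r ^ (k : ℕ) = ‖lam ν‖ * r ^ (ν : ℕ) → k ≤ ν))
    (Classical.decPred _) Finset.univ)

section Aux

lemma strictmax_set_measurable (N : ℕ) (k : Fin (N + 1)) :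
    MeasurableSet {x : Fin (N + 1) → ℂ | ∀ i, i ≠ k → ‖x i‖ < ‖x k‖} := by
  have mAbs : Measurable (fun z : ℂ => ‖z‖) := measurable_norm
  have : {x : Fin (N + 1) → ℂ | ∀ i, i ≠ k → ‖x i‖ < ‖x k‖}
      = ⋂ i, ⋂ (_ : i ≠ k), {x : Fin (N + 1) → ℂ | ‖x i‖ < ‖x k‖} := by
    ext x; simp [Set.mem_iInter]
  rw [this]
  exact MeasurableSet.iInter fun i => MeasurableSet.iInter fun _ =>
    measurableSet_lt (mAbs.comp (measurable_pi_apply i)) (mAbs.comp (measurable_pi_apply k))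

/-- Under the product of `N+1` copies of a probability measure, the probability that the
`k`-th coordinate is the strict maximum (in modulus) is at most `1/(N+1)`. -/
lemma pi_strictmax_le (N : ℕ) (m : Measure ℂ) [IsProbabilityMeasure m] (k : Fin (N + 1)) :
    Measure.pi (fun _ : Fin (N + 1) => m)
      {x | ∀ i, i ≠ k → ‖x i‖ < ‖x k‖} ≤ ((N : ENNReal) + 1)⁻¹ := by
  set A : Fin (N + 1) → Set (Fin (N + 1) → ℂ) :=
    fun j => {x | ∀ i, i ≠ j → ‖x i‖ < ‖x j‖} with hA
  have hmeas : ∀ j, MeasurableSet (A j) := fun j => strictmax_set_measurable N j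
  set π : Measure (Fin (N + 1) → ℂ) := Measure.pi (fun _ : Fin (N + 1) => m) with hπ
  have heq : ∀ j, π (A j) = π (A k) := by
    intro j
    set e : Fin (N + 1) ≃ Fin (N + 1) := Equiv.swap k j with he
    set T := MeasurableEquiv.piCongrLeft (fun _ : Fin (N + 1) => ℂ) e with hT
    have hmp : MeasurePreserving T π π := measurePreserving_piCongrLeft (fun _ => m) e
    have hpre : T ⁻¹' (A k) = A j := by
      ext x
      have hTx : ∀ i, T x i = x (e i) := by
        intro i
        have h1 : e (e i) = i := Equiv.swap_apply_self k j i
        have := Equiv.piCongrLeft_apply_apply (fun _ : Fin (N + 1) => ℂ) e x (e i)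
        rw [h1] at this
        simpa [hT, MeasurableEquiv.coe_piCongrLeft] using this
      have hek : e k = j := Equiv.swap_apply_left k j
      constructor
      · intro h i' hi'
        have h1 : e i' ≠ k := by
          intro hc
          apply hi'
          have := congrArg e hc
          rwa [Equiv.swap_apply_self, hek] at this
        have := h (e i') h1
        rw [hTx (e i'), hTx k, Equiv.swap_apply_self, hek] at this
        exact this
      · intro h i hi
        rw [hTx i, hTx k, hek]
        refine h (e i) fun hc => hi ?_
        rw [← hek] at hc
        exact e.injective hc
    calc π (A j) = π (T ⁻¹' (A k)) := by rw [hpre]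
    _ = π (A k) := hmp.measure_preimage (hmeas k).nullMeasurableSet
  have hdisj : Pairwise (Function.onFun Disjoint A) := by
    intro j j' hjj'
    refine Set.disjoint_left.2 fun x hx hx' => ?_
    exact absurd (lt_trans (hx' j hjj') (hx j' hjj'.symm)) (lt_irrefl _)
  have hsum : ∑ j, π (A j) ≤ 1 := by
    rw [← tsum_fintype (L := SummationFilter.unconditional _)]
    rw [← measure_iUnion hdisj hmeas]
    exact prob_le_one
  have : (N + 1 : ENNReal) * π (A k) ≤ 1 := by
    calc (N + 1 : ENNReal) * π (A k) = ∑ _j : Fin (N + 1), π (A k) := by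
          simp [Finset.sum_const, mul_comm]
    _ = ∑ j, π (A j) := by exact Finset.sum_congr rfl fun j _ => (heq j).symm
    _ ≤ 1 := hsum
  rw [ENNReal.le_inv_iff_mul_le]
  rwa [mul_comm] at this

/-- The joint law of any injectively-indexed subfamily of the i.i.d. coefficients is the
product of copies of the common law. -/
lemma map_tuple_eq_pi {Ω : Type} [MeasurableSpace Ω] (μ : Measure Ω) [IsProbabilityMeasure μ]
    {n N : ℕ} (lam : Ω → Fin (n + 1) → ℂ) (hmeas : ∀ k, Measurable fun ω => lam ω k)
    (hindep : iIndepFun (fun k ω => lam ω k) μ)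
    (hident : ∀ k, Measure.map (fun ω => lam ω k) μ = Measure.map (fun ω => lam ω 0) μ)
    (e : Fin (N + 1) → Fin (n + 1)) (he : Function.Injective e) :
    Measure.map (fun ω (i : Fin (N + 1)) => lam ω (e i)) μ
      = Measure.pi (fun _ => Measure.map (fun ω => lam ω 0) μ) := by
  have hm0 : IsProbabilityMeasure (Measure.map (fun ω => lam ω 0) μ) :=
    Measure.isProbabilityMeasure_map (hmeas 0).aemeasurable
  have hg : Measurable (fun ω (i : Fin (N + 1)) => lam ω (e i)) :=
    measurable_pi_lambda _ fun i => hmeas (e i)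
  refine (Measure.pi_eq fun s hs => ?_).symm
  classical
  rw [Measure.map_apply hg (MeasurableSet.univ_pi hs)]
  set sets : Fin (n + 1) → Set ℂ := fun j => if h : ∃ i, e i = j then s h.choose else Set.univ
    with hsets
  have hse : ∀ i, sets (e i) = s i := by
    intro i
    have hex : ∃ i', e i' = e i := ⟨i, rfl⟩
    simp only [hsets, dif_pos hex]
    rw [he hex.choose_spec]
  have hsets_meas : ∀ j, MeasurableSet (sets j) := by
    intro j
    by_cases h : ∃ i, e i = j
    · simp only [hsets, dif_pos h]; exact hs _
    · simp only [hsets, dif_neg h]; exact MeasurableSet.univ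
  have key := hindep.measure_inter_preimage_eq_mul (Finset.univ.image e)
    (sets := sets) (fun j _ => hsets_meas j)
  have hL : (⋂ j ∈ Finset.univ.image e, (fun ω => lam ω j) ⁻¹' sets j)
      = (fun ω (i : Fin (N + 1)) => lam ω (e i)) ⁻¹' Set.pi Set.univ s := by
    ext ω
    simp only [Set.mem_iInter, Finset.mem_image, Finset.mem_univ, true_and, Set.mem_preimage,
      Set.mem_pi, Set.mem_univ, forall_true_left]
    constructor
    · intro h i
      have := h (e i) ⟨i, rfl⟩
      rwa [hse i] at this
    · rintro h j ⟨i, rfl⟩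
      rw [hse i]
      exact h i
  have hR : (∏ j ∈ Finset.univ.image e, μ ((fun ω => lam ω j) ⁻¹' sets j))
      = ∏ i : Fin (N + 1), Measure.map (fun ω => lam ω 0) μ (s i) := by
    rw [Finset.prod_image (fun i _ i' _ h => he h)]
    refine Finset.prod_congr rfl fun i _ => ?_
    rw [hse i, ← hident (e i), Measure.map_apply (hmeas (e i)) (hs i)]
  rw [hL, hR] at key
  exact key

lemma prob_strictmax_le {Ω : Type} [MeasurableSpace Ω] (μ : Measure Ω) [IsProbabilityMeasure μ]
    {n N : ℕ} (lam : Ω → Fin (n + 1) → ℂ) (hmeas : ∀ k, Measurable fun ω => lam ω k)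
    (hindep : iIndepFun (fun k ω => lam ω k) μ)
    (hident : ∀ k, Measure.map (fun ω => lam ω k) μ = Measure.map (fun ω => lam ω 0) μ)
    (e : Fin (N + 1) → Fin (n + 1)) (he : Function.Injective e) (k : Fin (N + 1)) :
    μ {ω | ∀ i, i ≠ k → ‖lam ω (e i)‖ < ‖lam ω (e k)‖}
      ≤ ((N : ENNReal) + 1)⁻¹ := by
  have hm0 : IsProbabilityMeasure (Measure.map (fun ω => lam ω 0) μ) :=
    Measure.isProbabilityMeasure_map (hmeas 0).aemeasurable
  have hg : Measurable (fun ω (i : Fin (N + 1)) => lam ω (e i)) :=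
    measurable_pi_lambda _ fun i => hmeas (e i)
  have hset : {ω | ∀ i, i ≠ k → ‖lam ω (e i)‖ < ‖lam ω (e k)‖}
      = (fun ω (i : Fin (N + 1)) => lam ω (e i)) ⁻¹'
        {x : Fin (N + 1) → ℂ | ∀ i, i ≠ k → ‖x i‖ < ‖x k‖} := rfl
  rw [hset, ← Measure.map_apply hg (strictmax_set_measurable N k),
    map_tuple_eq_pi μ lam hmeas hindep hident e he]
  exact pi_strictmax_le N _ k

lemma prob_left_le {Ω : Type} [MeasurableSpace Ω] (μ : Measure Ω) [IsProbabilityMeasure μ]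
    {n : ℕ} (lam : Ω → Fin (n + 1) → ℂ) (hmeas : ∀ k, Measurable fun ω => lam ω k)
    (hindep : iIndepFun (fun k ω => lam ω k) μ)
    (hident : ∀ k, Measure.map (fun ω => lam ω k) μ = Measure.map (fun ω => lam ω 0) μ)
    (ν : Fin (n + 1)) :
    μ {ω | ∀ i, i < ν → ‖lam ω i‖ < ‖lam ω ν‖}
      ≤ (((ν : ℕ) : ENNReal) + 1)⁻¹ := by
  set N : ℕ := (ν : ℕ) with hN
  have hle : N + 1 ≤ n + 1 := Nat.succ_le_succ ν.is_le
  set e : Fin (N + 1) → Fin (n + 1) := Fin.castLE hle with he'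
  have he : Function.Injective e := Fin.castLE_injective hle
  have heν : e (Fin.last N) = ν := by
    apply Fin.ext; simp [he', Fin.last, hN]
  have hset : {ω | ∀ i, i < ν → ‖lam ω i‖ < ‖lam ω ν‖}
      = {ω | ∀ i, i ≠ Fin.last N →
          ‖lam ω (e i)‖ < ‖lam ω (e (Fin.last N))‖} := by
    ext ω
    simp only [Set.mem_setOf_eq]
    constructor
    · intro h i hi
      rw [heν]
      refine h (e i) ?_
      rw [Fin.lt_def]
      have h1 : (i : ℕ) < N := by
        have := i.is_le
        rcases lt_or_eq_of_le this with h2 | h2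
        · exact h2
        · exact absurd (Fin.ext h2) hi
      simpa [he'] using h1
    · intro h i hi
      have h1 : (i : ℕ) < N := by rw [Fin.lt_def] at hi; exact hi
      have h2 : (i : ℕ) < N + 1 := Nat.lt_succ_of_lt h1
      have h3 : (⟨(i : ℕ), h2⟩ : Fin (N + 1)) ≠ Fin.last N := by
        intro hc
        have := congrArg Fin.val hc
        simp [Fin.last] at this
        omega
      have := h ⟨(i : ℕ), h2⟩ h3
      rw [heν] at this
      have h4 : e ⟨(i : ℕ), h2⟩ = i := by apply Fin.ext; simp [he']
      rwa [h4] at this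
  rw [hset]
  exact prob_strictmax_le μ lam hmeas hindep hident e he (Fin.last N)

lemma prob_right_le {Ω : Type} [MeasurableSpace Ω] (μ : Measure Ω) [IsProbabilityMeasure μ]
    {n : ℕ} (lam : Ω → Fin (n + 1) → ℂ) (hmeas : ∀ k, Measurable fun ω => lam ω k)
    (hindep : iIndepFun (fun k ω => lam ω k) μ)
    (hident : ∀ k, Measure.map (fun ω => lam ω k) μ = Measure.map (fun ω => lam ω 0) μ)
    (ν : Fin (n + 1)) :
    μ {ω | ∀ j, ν < j → ‖lam ω j‖ < ‖lam ω ν‖}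
      ≤ (((n - (ν : ℕ) : ℕ) : ENNReal) + 1)⁻¹ := by
  set N : ℕ := n - (ν : ℕ) with hN
  have hν : (ν : ℕ) ≤ n := ν.is_le
  set e : Fin (N + 1) → Fin (n + 1) := fun i => ⟨(ν : ℕ) + (i : ℕ), by omega⟩ with he'
  have he : Function.Injective e := by
    intro a b hab
    have := congrArg Fin.val hab
    simp only [he'] at this
    exact Fin.ext (by omega)
  have heν : e 0 = ν := by apply Fin.ext; simp [he']
  have hset : {ω | ∀ j, ν < j → ‖lam ω j‖ < ‖lam ω ν‖}
      = {ω | ∀ i, i ≠ (0 : Fin (N + 1)) →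
          ‖lam ω (e i)‖ < ‖lam ω (e 0)‖} := by
    ext ω
    simp only [Set.mem_setOf_eq]
    constructor
    · intro h i hi
      rw [heν]
      refine h (e i) ?_
      rw [Fin.lt_def]
      have h1 : 0 < (i : ℕ) := by
        rcases Nat.eq_zero_or_pos (i : ℕ) with h2 | h2
        · exact absurd (Fin.ext (by simpa using h2)) hi
        · exact h2
      simp only [he']
      omega
    · intro h j hj
      have h1 : (ν : ℕ) < (j : ℕ) := hj
      have h2 : (j : ℕ) - (ν : ℕ) < N + 1 := by have := j.is_le; omega
      have h3 : (⟨(j : ℕ) - (ν : ℕ), h2⟩ : Fin (N + 1)) ≠ 0 := by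
        intro hc
        have := congrArg Fin.val hc
        simp at this
        omega
      have := h ⟨(j : ℕ) - (ν : ℕ), h2⟩ h3
      rw [heν] at this
      have h4 : e ⟨(j : ℕ) - (ν : ℕ), h2⟩ = j := by apply Fin.ext; simp [he']; omega
      rwa [h4] at this
  rw [hset]
  exact prob_strictmax_le μ lam hmeas hindep hident e he 0

/-- Deterministic key step: a vertex of the Newton–Hadamard polygon is a strict one-sided
maximum of the moduli of the coefficients. -/
lemma vertex_imp (n : ℕ) (lam : Fin (n + 1) → ℂ) (ν : Fin (n + 1))
    (hP : ∃ r : ℝ, 0 < r ∧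
      (∀ k : Fin (n + 1),
        ‖lam k‖ * r ^ (k : ℕ) ≤ ‖lam ν‖ * r ^ (ν : ℕ)) ∧
      (∀ k : Fin (n + 1),
        ‖lam k‖ * r ^ (k : ℕ) = ‖lam ν‖ * r ^ (ν : ℕ) → k ≤ ν)) :
    (∀ i, i < ν → ‖lam i‖ < ‖lam ν‖) ∨
    (∀ j, ν < j → ‖lam j‖ < ‖lam ν‖) := by
  obtain ⟨r, hr, hmax, htie⟩ := hP
  by_contra hcon
  push_neg at hcon
  obtain ⟨⟨i, hi, hi2⟩, ⟨j, hj, hj2⟩⟩ := hcon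
  have hjstrict : ‖lam j‖ * r ^ (j : ℕ) < ‖lam ν‖ * r ^ (ν : ℕ) := by
    rcases lt_or_eq_of_le (hmax j) with h | h
    · exact h
    · exact absurd (htie j h) (not_le.2 hj)
  have hrν : (0:ℝ) < r ^ (ν : ℕ) := pow_pos hr _
  have hrj : (0:ℝ) < r ^ (j : ℕ) := pow_pos hr _
  have hri : (0:ℝ) < r ^ (i : ℕ) := pow_pos hr _
  have h1 : ‖lam ν‖ * r ^ (j : ℕ) < ‖lam ν‖ * r ^ (ν : ℕ) :=
    lt_of_le_of_lt (mul_le_mul_of_nonneg_right hj2 hrj.le) hjstrict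
  have haν : 0 < ‖lam ν‖ := by
    by_contra h
    push_neg at h
    have h0 : ‖lam ν‖ = 0 := le_antisymm h (norm_nonneg _)
    rw [h0] at h1
    simp at h1
  have hpow1 : r ^ (j : ℕ) < r ^ (ν : ℕ) := lt_of_mul_lt_mul_left h1 haν.le
  have hrlt1 : r < 1 := by
    by_contra h
    push_neg at h
    exact absurd (pow_le_pow_right₀ h (le_of_lt (Fin.lt_def.1 hj))) (not_le.2 hpow1)
  have h2 : ‖lam ν‖ * r ^ (i : ℕ) ≤ ‖lam ν‖ * r ^ (ν : ℕ) :=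
    le_trans (mul_le_mul_of_nonneg_right hi2 hri.le) (hmax i)
  have hpow2 : r ^ (i : ℕ) ≤ r ^ (ν : ℕ) := le_of_mul_le_mul_left h2 haν
  have : r ^ (ν : ℕ) < r ^ (i : ℕ) :=
    pow_lt_pow_right_of_lt_one₀ hr hrlt1 (Fin.lt_def.1 hi)
  exact absurd hpow2 (not_le.2 this)

lemma vcount_le (n : ℕ) (lam : Fin (n + 1) → ℂ) [DecidablePred fun ν : Fin (n + 1) =>
      ∀ i, i < ν → ‖lam i‖ < ‖lam ν‖]
    [DecidablePred fun ν : Fin (n + 1) =>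
      ∀ j, ν < j → ‖lam j‖ < ‖lam ν‖] :
    Vcount lam ≤
      (Finset.univ.filter (fun ν : Fin (n + 1) =>
        ∀ i, i < ν → ‖lam i‖ < ‖lam ν‖)).card
      + (Finset.univ.filter (fun ν : Fin (n + 1) =>
        ∀ j, ν < j → ‖lam j‖ < ‖lam ν‖)).card := by
  classical
  refine le_trans (Finset.card_le_card ?_) (Finset.card_union_le _ _)
  intro ν hν
  rw [Finset.mem_filter] at hν
  rcases vertex_imp n lam ν hν.2 with h | h
  · exact Finset.mem_union_left _ (Finset.mem_filter.2 ⟨Finset.mem_univ _, h⟩)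
  · exact Finset.mem_union_right _ (Finset.mem_filter.2 ⟨Finset.mem_univ _, h⟩)

lemma harmonic_le_log (m : ℕ) (hm : 1 ≤ m) :
    ∑ k ∈ Finset.range m, (1 : ℝ) / (k + 1) ≤ 1 + Real.log m := by
  induction m with
  | zero => omega
  | succ p ih =>
    rcases Nat.eq_zero_or_pos p with hp | hp
    · subst hp; simp
    · have h1 := ih hp
      rw [Finset.sum_range_succ]
      have hplog : (1 : ℝ) / (p + 1) ≤ Real.log (p + 1) - Real.log p := by
        have hppos : (0 : ℝ) < p := by exact_mod_cast hp
        have hp1pos : (0 : ℝ) < (p : ℝ) + 1 := by linarith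
        have key := Real.log_le_sub_one_of_pos (x := (p : ℝ) / (p + 1))
          (div_pos hppos hp1pos)
        rw [Real.log_div (ne_of_gt hppos) (ne_of_gt hp1pos)] at key
        have : (p : ℝ) / (p + 1) - 1 = -(1 / (p + 1)) := by field_simp; ring
        rw [this] at key
        linarith
      have : ((p + 1 : ℕ) : ℝ) = (p : ℝ) + 1 := by push_cast; ring
      rw [this]
      linarith

end Aux

/-- **Lemma.** There is an absolute constant `C > 0` such that for every `n ≥ 2` and every
random polynomial `P(z) = ∑_{k=0}^n λ_k z^k` with i.i.d. complex coefficients whose common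
law assigns probability `0` to `{0}`, one has `𝔼[V(P)] ≤ C log n`. -/
theorem expected_newton_hadamard_vertices :
    ∃ C : ℝ, 0 < C ∧
      ∀ (n : ℕ), 2 ≤ n →
      ∀ (Ω : Type) (_ : MeasurableSpace Ω) (μ : Measure Ω), IsProbabilityMeasure μ →
      ∀ lam : Ω → Fin (n + 1) → ℂ,
        (∀ k, Measurable fun ω => lam ω k) →
        iIndepFun (fun k ω => lam ω k) μ →
        (∀ k, Measure.map (fun ω => lam ω k) μ = Measure.map (fun ω => lam ω 0) μ) →
        Measure.map (fun ω => lam ω 0) μ {0} = 0 →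
        ∫⁻ ω, (Vcount (lam ω) : ENNReal) ∂μ ≤ ENNReal.ofReal (C * Real.log n) := by
  classical
  refine ⟨10, by norm_num, ?_⟩
  intro n hn Ω mΩ μ hμ lam hmeas hindep hident _
  haveI := hμ
  have mAbs : Measurable (fun z : ℂ => ‖z‖) := measurable_norm
  set L : Fin (n + 1) → Set Ω :=
    fun ν => {ω | ∀ i, i < ν → ‖lam ω i‖ < ‖lam ω ν‖} with hLdef
  set R : Fin (n + 1) → Set Ω :=
    fun ν => {ω | ∀ j, ν < j → ‖lam ω j‖ < ‖lam ω ν‖} with hRdef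
  have hLmeas : ∀ ν, MeasurableSet (L ν) := by
    intro ν
    have : L ν = ⋂ i, ⋂ (_ : i < ν),
        {ω | ‖lam ω i‖ < ‖lam ω ν‖} := by
      ext ω; simp [hLdef]
    rw [this]
    exact MeasurableSet.iInter fun i => MeasurableSet.iInter fun _ =>
      measurableSet_lt (mAbs.comp (hmeas i)) (mAbs.comp (hmeas ν))
  have hRmeas : ∀ ν, MeasurableSet (R ν) := by
    intro ν
    have : R ν = ⋂ j, ⋂ (_ : ν < j),
        {ω | ‖lam ω j‖ < ‖lam ω ν‖} := by
      ext ω; simp [hRdef]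
    rw [this]
    exact MeasurableSet.iInter fun j => MeasurableSet.iInter fun _ =>
      measurableSet_lt (mAbs.comp (hmeas j)) (mAbs.comp (hmeas ν))
  -- pointwise bound by indicator sums
  have hpt : ∀ ω, (Vcount (lam ω) : ℝ≥0∞) ≤
      (∑ ν, (L ν).indicator (fun _ => (1 : ℝ≥0∞)) ω)
      + ∑ ν, (R ν).indicator (fun _ => (1 : ℝ≥0∞)) ω := by
    intro ω
    have h1 := vcount_le n (lam ω)
    have hLeq : ((Finset.univ.filter (fun ν : Fin (n + 1) =>
        ∀ i, i < ν → ‖lam ω i‖ < ‖lam ω ν‖)).card : ℝ≥0∞)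
        = ∑ ν, (L ν).indicator (fun _ => (1 : ℝ≥0∞)) ω := by
      rw [Finset.card_filter]
      push_cast
      refine Finset.sum_congr rfl fun ν _ => ?_
      by_cases h : ∀ i, i < ν → ‖lam ω i‖ < ‖lam ω ν‖
      · simp [h, Set.indicator_apply, hLdef, Set.mem_setOf_eq]
      · simp [h, Set.indicator_apply, hLdef, Set.mem_setOf_eq]
    have hReq : ((Finset.univ.filter (fun ν : Fin (n + 1) =>
        ∀ j, ν < j → ‖lam ω j‖ < ‖lam ω ν‖)).card : ℝ≥0∞)
        = ∑ ν, (R ν).indicator (fun _ => (1 : ℝ≥0∞)) ω := by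
      rw [Finset.card_filter]
      push_cast
      refine Finset.sum_congr rfl fun ν _ => ?_
      by_cases h : ∀ j, ν < j → ‖lam ω j‖ < ‖lam ω ν‖
      · simp [h, Set.indicator_apply, hRdef, Set.mem_setOf_eq]
      · simp [h, Set.indicator_apply, hRdef, Set.mem_setOf_eq]
    calc (Vcount (lam ω) : ℝ≥0∞) ≤
        ((Finset.univ.filter (fun ν : Fin (n + 1) =>
          ∀ i, i < ν → ‖lam ω i‖ < ‖lam ω ν‖)).card : ℝ≥0∞)
        + ((Finset.univ.filter (fun ν : Fin (n + 1) =>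
          ∀ j, ν < j → ‖lam ω j‖ < ‖lam ω ν‖)).card : ℝ≥0∞) := by
          exact_mod_cast h1
    _ = _ := by rw [hLeq, hReq]
  -- integrate
  have hintL : ∫⁻ ω, ∑ ν, (L ν).indicator (fun _ => (1 : ℝ≥0∞)) ω ∂μ = ∑ ν, μ (L ν) := by
    rw [lintegral_finset_sum _ (fun ν _ => (measurable_const.indicator (hLmeas ν)))]
    exact Finset.sum_congr rfl fun ν _ => by
      rw [lintegral_indicator_const (hLmeas ν), one_mul]
  have hintR : ∫⁻ ω, ∑ ν, (R ν).indicator (fun _ => (1 : ℝ≥0∞)) ω ∂μ = ∑ ν, μ (R ν) := by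
    rw [lintegral_finset_sum _ (fun ν _ => (measurable_const.indicator (hRmeas ν)))]
    exact Finset.sum_congr rfl fun ν _ => by
      rw [lintegral_indicator_const (hRmeas ν), one_mul]
  have hmeasL : Measurable fun ω => ∑ ν, (L ν).indicator (fun _ => (1 : ℝ≥0∞)) ω :=
    Finset.measurable_sum _ fun ν _ => measurable_const.indicator (hLmeas ν)
  set S : ℝ≥0∞ := ∑ k ∈ Finset.range (n + 1), ((k : ℝ≥0∞) + 1)⁻¹ with hS
  have hsumL : ∑ ν : Fin (n + 1), μ (L ν) ≤ S := by
    calc ∑ ν : Fin (n + 1), μ (L ν)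
        ≤ ∑ ν : Fin (n + 1), (((ν : ℕ) : ENNReal) + 1)⁻¹ :=
          Finset.sum_le_sum fun ν _ => prob_left_le μ lam hmeas hindep hident ν
    _ = S := by rw [hS, ← Fin.sum_univ_eq_sum_range (fun k => ((k : ℝ≥0∞) + 1)⁻¹) (n + 1)]
  have hsumR : ∑ ν : Fin (n + 1), μ (R ν) ≤ S := by
    calc ∑ ν : Fin (n + 1), μ (R ν)
        ≤ ∑ ν : Fin (n + 1), (((n - (ν : ℕ) : ℕ) : ENNReal) + 1)⁻¹ :=
          Finset.sum_le_sum fun ν _ => prob_right_le μ lam hmeas hindep hident ν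
    _ = ∑ k ∈ Finset.range (n + 1), (((n - k : ℕ) : ℝ≥0∞) + 1)⁻¹ :=
          Fin.sum_univ_eq_sum_range (fun k => (((n - k : ℕ) : ℝ≥0∞) + 1)⁻¹) (n + 1)
    _ = S := by
          rw [hS]
          rw [← Finset.sum_range_reflect (fun k => ((k : ℝ≥0∞) + 1)⁻¹) (n + 1)]
          exact Finset.sum_congr rfl fun k hk => rfl
  have hSle : S ≤ ENNReal.ofReal (1 + Real.log (n + 1)) := by
    have hterm : ∀ k : ℕ, ((k : ℝ≥0∞) + 1)⁻¹ = ENNReal.ofReal (1 / ((k : ℝ) + 1)) := by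
      intro k
      rw [one_div, ENNReal.ofReal_inv_of_pos (by positivity)]
      congr 1
      rw [ENNReal.ofReal_add (by positivity) zero_le_one, ENNReal.ofReal_natCast,
        ENNReal.ofReal_one]
    calc S = ∑ k ∈ Finset.range (n + 1), ENNReal.ofReal (1 / ((k : ℝ) + 1)) := by
          rw [hS]; exact Finset.sum_congr rfl fun k _ => hterm k
    _ = ENNReal.ofReal (∑ k ∈ Finset.range (n + 1), (1 : ℝ) / (k + 1)) := by
          rw [ENNReal.ofReal_sum_of_nonneg fun k _ => by positivity]
    _ ≤ ENNReal.ofReal (1 + Real.log (n + 1)) := by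
          refine ENNReal.ofReal_le_ofReal ?_
          have := harmonic_le_log (n + 1) (by omega)
          push_cast at this ⊢
          linarith
  -- final real arithmetic
  have hreal : 2 * (1 + Real.log ((n : ℝ) + 1)) ≤ 10 * Real.log n := by
    have h2n : (2 : ℝ) ≤ n := by exact_mod_cast hn
    have hlog2 : (1 : ℝ) / 3 < Real.log 2 := by
      have := Real.log_two_gt_d9
      linarith
    have hl2n : Real.log 2 ≤ Real.log n := Real.log_le_log (by norm_num) h2n
    have hup : Real.log ((n : ℝ) + 1) ≤ 2 * Real.log n := by
      have hsq : (n : ℝ) + 1 ≤ (n : ℝ) ^ 2 := by nlinarith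
      have h := Real.log_le_log (by positivity) hsq
      rwa [Real.log_pow, Nat.cast_ofNat] at h
    linarith
  calc ∫⁻ ω, (Vcount (lam ω) : ℝ≥0∞) ∂μ
      ≤ ∫⁻ ω, ((∑ ν, (L ν).indicator (fun _ => (1 : ℝ≥0∞)) ω)
          + ∑ ν, (R ν).indicator (fun _ => (1 : ℝ≥0∞)) ω) ∂μ := lintegral_mono hpt
  _ = (∑ ν, μ (L ν)) + ∑ ν, μ (R ν) := by
        rw [lintegral_add_left hmeasL, hintL, hintR]
  _ ≤ S + S := add_le_add hsumL hsumR
  _ ≤ ENNReal.ofReal (1 + Real.log (n + 1)) + ENNReal.ofReal (1 + Real.log (n + 1)) :=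
        add_le_add hSle hSle
  _ = ENNReal.ofReal (2 * (1 + Real.log ((n : ℝ) + 1))) := by
        have hlogpos : (0 : ℝ) ≤ 1 + Real.log ((n : ℝ) + 1) := by
          have : (0 : ℝ) ≤ Real.log ((n : ℝ) + 1) := Real.log_nonneg (by
            have : (0 : ℝ) ≤ (n : ℝ) := Nat.cast_nonneg n
            linarith)
          linarith
        rw [← ENNReal.ofReal_add hlogpos hlogpos]
        ring_nf
  _ ≤ ENNReal.ofReal (10 * Real.log n) := ENNReal.ofReal_le_ofReal hreal
end

section
/- Suppose the ℂ^{n+1}-valued random vector λ has property (Θ). Then for every Borel set Λ ⊂ ℂ^{n+1} and every ε > 0 there exist complex numbers (υ_k^+)_{k=0}^n, (υ_k^-)_{k=0}^n and a point a ∈ ℂ with |υ_k^+ − υ_k^-| ≥ ½(|υ_k^+ − a| + |υ_k^- − a|) for every k ∈ {0,…,n}, such that ℙ{λ ∈ Λ} ≤ ε + 2^{−(n+1)} · #{ σ ∈ {+,−}^{n+1} : (υ_0^{σ_0},…,υ_n^{σ_n}) ∈ Λ }. -/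
open MeasureTheory

/-- Property (Θ): there exist `λ'`, `λ''`, each equidistributed with `λ`, whose joint law
is flip-invariant (all the mixed vectors `λ^σ` are equidistributed with `λ`), and a point
`a ∈ ℂ` such that almost surely
`|λ_k^{σ_k} − λ_k^{−σ_k}| ≥ ½(|λ_k^{σ_k} − a| + |λ_k^{−σ_k} − a|)` for all `k`, `σ_k`. -/
def HasPropertyTheta {Ω : Type} [MeasurableSpace Ω] (μ : Measure Ω) {n : ℕ}
    (lam : Ω → Fin (n + 1) → ℂ) : Prop :=
  ∃ (lam' lam'' : Ω → Fin (n + 1) → ℂ) (a : ℂ),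
    Measurable lam' ∧ Measurable lam'' ∧
    (∀ σ : Fin (n + 1) → Bool,
      Measure.map (fun ω k => if σ k then lam' ω k else lam'' ω k) μ = Measure.map lam μ) ∧
    (∀ᵐ ω ∂μ, ∀ k : Fin (n + 1),
      (1 / 2) * (‖lam' ω k - a‖ + ‖lam'' ω k - a‖) ≤
        ‖lam' ω k - lam'' ω k‖)

/-- **The reduction principle.** If the coefficient vector `λ` has property (Θ), then for
every Borel set `Λ ⊂ ℂ^{n+1}` and every `ε > 0` there are complex numbers `(υ_k^±)` and a
point `a` satisfying `|υ_k^+ − υ_k^-| ≥ ½(|υ_k^+ − a| + |υ_k^- − a|)` for all `k`, such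
that `ℙ{λ ∈ Λ} ≤ ε + 2^{−(n+1)} #{σ ∈ {+,−}^{n+1} : υ^σ ∈ Λ}`. -/
theorem reduction_principle (n : ℕ)
    (Ω : Type) (_ : MeasurableSpace Ω) (μ : Measure Ω) (_ : IsProbabilityMeasure μ)
    (lam : Ω → Fin (n + 1) → ℂ) (hmeas : Measurable lam)
    (hTheta : HasPropertyTheta μ lam)
    (Λ : Set (Fin (n + 1) → ℂ)) (hΛ : MeasurableSet Λ) (ε : ℝ) (hε : 0 < ε) :
    ∃ (upsP upsM : Fin (n + 1) → ℂ) (a : ℂ),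
      (∀ k : Fin (n + 1),
        (1 / 2) * (‖upsP k - a‖ + ‖upsM k - a‖) ≤
          ‖upsP k - upsM k‖) ∧
      μ (lam ⁻¹' Λ) ≤ ENNReal.ofReal ε +
        (Finset.card (@Finset.filter (Fin (n + 1) → Bool)
          (fun σ => (fun k => if σ k then upsP k else upsM k) ∈ Λ)
          (Classical.decPred _) Finset.univ) : ENNReal) / 2 ^ (n + 1) := by
  classical
  obtain ⟨lam', lam'', a, hm', hm'', hflip, hae⟩ := hTheta
  set p : ENNReal := μ (lam ⁻¹' Λ) with hp
  set K : ENNReal := 2 ^ (n + 1) with hK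
  have hK0 : K ≠ 0 := by simp [hK]
  have hKtop : K ≠ ⊤ := by simp [hK]
  -- the mixed vectors
  set g : (Fin (n + 1) → Bool) → Ω → Fin (n + 1) → ℂ :=
    fun σ ω k => if σ k then lam' ω k else lam'' ω k with hg
  have hgm : ∀ σ, Measurable (g σ) := by
    intro σ
    rw [measurable_pi_iff]
    intro k
    cases h : σ k <;> simp [hg, h]
    · exact (measurable_pi_apply k).comp hm''
    · exact (measurable_pi_apply k).comp hm'
  have hgmeasΛ : ∀ σ, μ ((g σ) ⁻¹' Λ) = p := by
    intro σ
    have h1 : Measure.map (g σ) μ Λ = μ ((g σ) ⁻¹' Λ) := Measure.map_apply (hgm σ) hΛ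
    have h2 : Measure.map lam μ Λ = p := Measure.map_apply hmeas hΛ
    rw [← h1, hflip σ, h2]
  -- the counting function
  set f : Ω → ENNReal := fun ω => ∑ σ : Fin (n + 1) → Bool,
      Set.indicator ((g σ) ⁻¹' Λ) (fun _ => (1 : ENNReal)) ω with hf
  have hfm : Measurable f :=
    Finset.measurable_sum _ fun σ _ => measurable_const.indicator ((hgm σ) hΛ)
  have hfcard : ∀ ω, f ω =
      ((Finset.univ.filter (fun σ : Fin (n + 1) → Bool => g σ ω ∈ Λ)).card : ENNReal) := by
    intro ω
    rw [hf]
    push_cast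
    rw [← Finset.sum_boole]
    refine Finset.sum_congr rfl fun σ _ => ?_
    by_cases h : g σ ω ∈ Λ <;> simp [Set.indicator_apply, Set.mem_preimage, h]
  have hint : ∫⁻ ω, f ω ∂μ = K * p := by
    rw [hf]
    rw [lintegral_finset_sum _ fun σ _ => measurable_const.indicator ((hgm σ) hΛ)]
    have : ∀ σ : Fin (n + 1) → Bool,
        ∫⁻ ω, Set.indicator ((g σ) ⁻¹' Λ) (fun _ => (1 : ENNReal)) ω ∂μ = p := by
      intro σ
      rw [lintegral_indicator_const ((hgm σ) hΛ), one_mul]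
      exact hgmeasΛ σ
    simp only [this, Finset.sum_const, Finset.card_univ]
    simp [hK, Fintype.card_fun, mul_comm]
  have hintdiv : ∫⁻ ω, f ω / K ∂μ = p := by
    simp only [div_eq_mul_inv]
    rw [lintegral_mul_const _ hfm, hint, mul_comm K p, mul_assoc,
      ENNReal.mul_inv_cancel hK0 hKtop, mul_one]
  -- find a good ω
  have hptop : p ≠ ⊤ := (measure_lt_top μ _).ne
  have hex : ∃ ω, (∀ k : Fin (n + 1),
      (1 / 2) * (‖lam' ω k - a‖ + ‖lam'' ω k - a‖) ≤
        ‖lam' ω k - lam'' ω k‖) ∧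
      p ≤ ENNReal.ofReal ε + f ω / K := by
    by_contra hcon
    push_neg at hcon
    have hae2 : ∀ᵐ ω ∂μ, ENNReal.ofReal ε + f ω / K ≤ p := by
      filter_upwards [hae] with ω hω
      exact le_of_lt (hcon ω hω)
    have h1 : ∫⁻ ω, (ENNReal.ofReal ε + f ω / K) ∂μ ≤ ∫⁻ _, p ∂μ :=
      lintegral_mono_ae (hae2.mono fun ω hω => hω)
    rw [lintegral_const, measure_univ, mul_one,
      lintegral_add_left measurable_const, lintegral_const, measure_univ, mul_one,
      hintdiv] at h1
    have h2 : p < ENNReal.ofReal ε + p := by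
      rw [add_comm]
      exact ENNReal.lt_add_right hptop (ENNReal.ofReal_pos.mpr hε).ne'
    exact absurd h1 (not_le.mpr h2)
  obtain ⟨ω, hineq, hbound⟩ := hex
  refine ⟨lam' ω, lam'' ω, a, hineq, ?_⟩
  rw [hfcard ω] at hbound
  have hcardeq : (@Finset.filter (Fin (n + 1) → Bool)
      (fun σ => (fun k => if σ k then lam' ω k else lam'' ω k) ∈ Λ)
      (Classical.decPred _) Finset.univ).card
      = (Finset.univ.filter (fun σ => g σ ω ∈ Λ)).card := by
    congr 1
  rw [hcardeq]
  exact hbound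
end

section
/- There exists an absolute constant b > 0 such that the following holds. Let m ≥ 1, let ℓ_1,…,ℓ_m be pairwise distinct integers, let a_1,…,a_m ∈ ℂ, and let p(t) = Σ_{k=1}^m a_k e^{i ℓ_k t}. Then for every interval I ⊂ ℝ of length 0 < |I| ≤ 2π, max_{t∈I} |p(t)| ≥ (b|I|)^{m−1} · Σ_{k=1}^m |a_k|. -/
set_option maxHeartbeats 1600000

open Real Polynomial Finset

noncomputable def geomF (z : ℂ) : PowerSeries ℂ := PowerSeries.mk fun t => -((z⁻¹) ^ (t+1))

lemma geomF_inv (z : ℂ) (hz : z ≠ 0) :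
    ((X - C z : Polynomial ℂ) : PowerSeries ℂ) * geomF z = 1 := by
  have hcoe : ((X - C z : Polynomial ℂ) : PowerSeries ℂ)
      = PowerSeries.X - PowerSeries.C z := by
    push_cast
    simp
  rw [hcoe, sub_mul]
  ext n
  cases n with
  | zero =>
      simp [geomF, PowerSeries.coeff_zero_eq_constantCoeff, mul_comm, hz]
  | succ n =>
      rw [map_sub, PowerSeries.coeff_succ_X_mul, PowerSeries.coeff_C_mul]
      simp [geomF, pow_succ, hz]
      field_simp
      ring


lemma hs1 (k t : ℕ) : ∑ j ∈ Finset.range (t+1), (k+j).choose j = (k+t+1).choose t := by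
  induction t with
  | zero => simp
  | succ t ih =>
      rw [Finset.sum_range_succ, ih]
      have h := Nat.choose_succ_succ (k+t+1) t
      have e1 : k + (t+1) + 1 = (k+t+1) + 1 := by omega
      have e2 : k + (t+1) = k + t + 1 := by omega
      rw [e1, e2, Nat.choose_succ_succ (k+t+1) t]
      
lemma hs2 (k t : ℕ) :
    ∑ p ∈ Finset.HasAntidiagonal.antidiagonal t, (p.2 + k - 1).choose p.2 = (t + k).choose t := by
  rw [Finset.Nat.sum_antidiagonal_eq_sum_range_succ_mk]
  have : ∀ r ∈ Finset.range (t+1), (t - r + k - 1).choose (t - r) = (fun j => (j + k - 1).choose j) (t - r) := by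
    intro r _; rfl
  rw [Finset.sum_congr rfl this]
  have hrefl := Finset.sum_range_reflect (fun j => (j + k - 1).choose j) (t+1)
  simp only [Nat.add_sub_cancel] at hrefl
  rw [show (∑ r ∈ Finset.range (t+1), (fun j => (j + k - 1).choose j) (t - r)) = ∑ j ∈ Finset.range (t+1), (j + k - 1).choose j from hrefl]
  cases k with
  | zero =>
      have : ∀ j ∈ Finset.range (t+1), (j + 0 - 1).choose j = if j = 0 then 1 else 0 := by
        intro j _
        cases j with
        | zero => simp
        | succ j => simp [Nat.choose_eq_zero_of_lt]
      rw [Finset.sum_congr rfl this, Finset.sum_ite_eq' (Finset.range (t+1)) 0 (fun _ => 1)]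
      simp
  | succ c =>
      have : ∀ j ∈ Finset.range (t+1), (j + (c+1) - 1).choose j = (c + j).choose j := by
        intro j _; congr 1; omega
      rw [Finset.sum_congr rfl this, hs1]
      congr 1; omega


lemma norm_coeff_geomF (z : ℂ) (hz : ‖z‖ = 1) (i : ℕ) :
    ‖PowerSeries.coeff i (geomF z)‖ = 1 := by
  simp [geomF, norm_pow, norm_inv, hz]

lemma norm_coeff_geomF_prod_le {ι : Type*} [DecidableEq ι] (s : Finset ι) (z : ι → ℂ)
    (hz : ∀ j ∈ s, ‖z j‖ = 1) (t : ℕ) :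
    ‖PowerSeries.coeff t (∏ j ∈ s, geomF (z j))‖ ≤ ((t + s.card - 1).choose t : ℝ) := by
  induction s using Finset.induction_on generalizing t with
  | empty =>
      cases t with
      | zero => simp
      | succ t => simp [PowerSeries.coeff_one]
  | insert a s' ha ih =>
      have hz' : ∀ j ∈ s', ‖z j‖ = 1 := fun j hj => hz j (Finset.mem_insert_of_mem hj)
      rw [Finset.prod_insert ha, PowerSeries.coeff_mul]
      calc ‖∑ p ∈ Finset.HasAntidiagonal.antidiagonal t, (PowerSeries.coeff p.1) (geomF (z a)) *
              (PowerSeries.coeff p.2) (∏ j ∈ s', geomF (z j))‖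
          ≤ ∑ p ∈ Finset.HasAntidiagonal.antidiagonal t, ‖(PowerSeries.coeff p.1) (geomF (z a)) *
              (PowerSeries.coeff p.2) (∏ j ∈ s', geomF (z j))‖ := norm_sum_le _ _
        _ ≤ ∑ p ∈ Finset.HasAntidiagonal.antidiagonal t, (((p.2 + s'.card - 1).choose p.2 : ℕ) : ℝ) := by
            apply Finset.sum_le_sum
            intro p _
            rw [norm_mul, norm_coeff_geomF (z a) (hz a (Finset.mem_insert_self a s')), one_mul]
            exact ih hz' p.2
        _ = (((t + s'.card).choose t : ℕ) : ℝ) := by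
            rw [← Nat.cast_sum]
            rw [hs2 s'.card t]
        _ ≤ ((t + (insert a s').card - 1).choose t : ℝ) := by
            rw [Finset.card_insert_of_notMem ha]
            norm_cast

lemma norm_coeff_prod_X_sub_C_le {ι : Type*} [DecidableEq ι] (s : Finset ι) (z : ι → ℂ)
    (hz : ∀ j ∈ s, ‖z j‖ ≤ 1) (i : ℕ) :
    ‖(∏ j ∈ s, (X - C (z j))).coeff i‖ ≤ (s.card.choose i : ℝ) := by
  induction s using Finset.induction_on generalizing i with
  | empty =>
      cases i with
      | zero => simp
      | succ i => simp [Polynomial.coeff_one]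
  | insert a s' ha ih =>
      have hz' : ∀ j ∈ s', ‖z j‖ ≤ 1 := fun j hj => hz j (Finset.mem_insert_of_mem hj)
      have hza : ‖z a‖ ≤ 1 := hz a (Finset.mem_insert_self a s')
      rw [Finset.prod_insert ha, sub_mul, Finset.card_insert_of_notMem ha]
      cases i with
      | zero =>
          rw [Polynomial.coeff_sub]
          simp only [Polynomial.coeff_C_mul]
          have h0 : (X * ∏ j ∈ s', (X - C (z j))).coeff 0 = 0 := by
            simp [Polynomial.coeff_X_mul_zero]
          rw [h0, zero_sub, norm_neg, norm_mul]
          calc ‖z a‖ * ‖(∏ j ∈ s', (X - C (z j))).coeff 0‖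
              ≤ 1 * (s'.card.choose 0 : ℝ) := by
                apply mul_le_mul hza (ih hz' 0) (norm_nonneg _) zero_le_one
            _ ≤ ((s'.card + 1).choose 0 : ℝ) := by simp
      | succ i =>
          rw [Polynomial.coeff_sub, Polynomial.coeff_X_mul, Polynomial.coeff_C_mul]
          have h1 := ih hz' i
          have h2 := ih hz' (i+1)
          set u := (∏ j ∈ s', (X - C (z j))).coeff i with hu
          set v := (∏ j ∈ s', (X - C (z j))).coeff (i+1) with hv
          have key : ‖u - z a * v‖ ≤ ‖u‖ + ‖z a‖ * ‖v‖ := by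
            rw [← norm_mul]; exact norm_sub_le _ _
          have h3 : ‖z a‖ * ‖v‖ ≤ 1 * (s'.card.choose (i+1) : ℝ) :=
            mul_le_mul hza h2 (norm_nonneg _) zero_le_one
          have : (((s'.card + 1).choose (i+1) : ℕ) : ℝ)
              = (s'.card.choose i : ℝ) + (s'.card.choose (i+1) : ℝ) := by
            rw [Nat.choose_succ_succ]; push_cast; ring
          rw [this]
          linarith


lemma sum_choose_le (m n : ℕ) : ∑ r ∈ Finset.range n, m.choose r ≤ 2^m := by
  rcases le_total n (m+1) with h | h
  · calc ∑ r ∈ Finset.range n, m.choose r ≤ ∑ r ∈ Finset.range (m+1), m.choose r :=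
        Finset.sum_le_sum_of_subset (Finset.range_subset_range.2 h)
      _ = 2^m := Nat.sum_range_choose m
  · have : ∑ r ∈ Finset.range n, m.choose r = ∑ r ∈ Finset.range (m+1), m.choose r := by
      symm
      apply Finset.sum_subset (Finset.range_subset_range.2 h)
      intro x _ hx
      simp only [Finset.mem_range, not_lt] at hx
      exact Nat.choose_eq_zero_of_lt (by omega)
    rw [this, Nat.sum_range_choose]

theorem powersum_exists (m M : ℕ) (hm : 1 ≤ m) (z : Fin m → ℂ) (hz : ∀ k, ‖z k‖ = 1) :
    ∃ c : ℕ → ℂ,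
      (∀ k, ∑ ν ∈ Finset.Icc (M+1) (M+m), c ν * z k ^ ν = 1) ∧
      ∑ ν ∈ Finset.Icc (M+1) (M+m), ‖c ν‖
        ≤ (m : ℝ) * (2^m * ((M + 2*m - 1).choose (m-1) : ℝ)) := by
  classical
  have hz0 : ∀ k, z k ≠ 0 := fun k => by
    intro h; have := hz k; rw [h] at this; simp at this
  set h : Polynomial ℂ := ∏ k : Fin m, (X - C (z k)) with hh
  set G : PowerSeries ℂ := ∏ k : Fin m, geomF (z k) with hG
  have hhG : (h : PowerSeries ℂ) * G = 1 := by
    have hcoe : (h : PowerSeries ℂ) = ∏ k : Fin m, ((X - C (z k) : Polynomial ℂ) : PowerSeries ℂ) := by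
      rw [hh, ← Polynomial.coeToPowerSeries.ringHom_apply,
        map_prod (Polynomial.coeToPowerSeries.ringHom) (fun k => (X - C (z k) : Polynomial ℂ)) Finset.univ]
      exact Finset.prod_congr rfl fun k _ => Polynomial.coeToPowerSeries.ringHom_apply
    rw [hcoe, hG, ← Finset.prod_mul_distrib]
    rw [Finset.prod_congr rfl (fun k _ => geomF_inv (z k) (hz0 k))]
    simp
  set g : Polynomial ℂ := PowerSeries.trunc (M+1) G with hg
  set Q : Polynomial ℂ := 1 - h * g with hQ
  -- low coefficients vanish
  have hmullow : ∀ ν ≤ M, (h * g).coeff ν = (if ν = 0 then 1 else 0 : ℂ) := by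
    intro ν hν
    rw [Polynomial.coeff_mul]
    have : ∀ p ∈ Finset.HasAntidiagonal.antidiagonal ν, h.coeff p.1 * g.coeff p.2
        = (PowerSeries.coeff p.1 (h : PowerSeries ℂ)) * (PowerSeries.coeff p.2 G) := by
      intro p hp
      have hp2 : p.2 < M + 1 := by
        have := Finset.HasAntidiagonal.antidiagonal.snd_le hp
        omega
      rw [hg, PowerSeries.coeff_trunc, if_pos hp2, Polynomial.coeff_coe]
    rw [Finset.sum_congr rfl this, ← PowerSeries.coeff_mul, hhG]
    simp [PowerSeries.coeff_one]
  have hQlow : ∀ ν ≤ M, Q.coeff ν = 0 := by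
    intro ν hν
    rw [hQ, Polynomial.coeff_sub, hmullow ν hν, Polynomial.coeff_one]
    by_cases h0 : ν = 0 <;> simp [h0]
  -- degree bound
  have hdegh : h.natDegree ≤ m := by
    calc h.natDegree ≤ ∑ k : Fin m, (X - C (z k)).natDegree := Polynomial.natDegree_prod_le _ _
      _ = m := by simp [Polynomial.natDegree_X_sub_C]
  have hdegg : g.natDegree ≤ M := by
    have h2 := PowerSeries.natDegree_trunc_lt G M
    rw [hg]
    omega
  have hdegQ : Q.natDegree < M + m + 1 := by
    have h1 : (h * g).natDegree ≤ M + m := by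
      calc (h * g).natDegree ≤ h.natDegree + g.natDegree := Polynomial.natDegree_mul_le
        _ ≤ M + m := by omega
    have h2 : Q.natDegree ≤ max (1 : Polynomial ℂ).natDegree (h * g).natDegree :=
      Polynomial.natDegree_sub_le _ _
    simp only [Polynomial.natDegree_one] at h2
    omega
  -- evaluation
  have heval : ∀ k, Q.eval (z k) = 1 := by
    intro k
    rw [hQ]
    simp only [Polynomial.eval_sub, Polynomial.eval_one, Polynomial.eval_mul]
    have : h.eval (z k) = 0 := by
      rw [hh, Polynomial.eval_prod]
      apply Finset.prod_eq_zero (Finset.mem_univ k)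
      simp
    rw [this, zero_mul, sub_zero]
  refine ⟨fun ν => Q.coeff ν, ?_, ?_⟩
  · intro k
    have := Polynomial.eval_eq_sum_range' hdegQ (z k)
    rw [heval k] at this
    rw [this]
    apply Finset.sum_subset
    · intro x hx
      simp only [Finset.mem_Icc] at hx
      simp only [Finset.mem_range]
      omega
    · intro x hx hnx
      simp only [Finset.mem_range] at hx
      simp only [Finset.mem_Icc] at hnx
      have hz : Q.coeff x = 0 := hQlow x (by omega)
      show Q.coeff x * z k ^ x = 0
      rw [hz, zero_mul]
  · set B : ℝ := (((M + 2*m - 1).choose (m-1) : ℕ) : ℝ) with hB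
    have hBnn : 0 ≤ B := Nat.cast_nonneg _
    set w : ℕ → ℂ := fun j => PowerSeries.coeff j G - g.coeff j with hw
    have hwbound : ∀ j ≤ M + m, ‖w j‖ ≤ B := by
      intro j hj
      rw [hw]
      simp only
      rw [hg, PowerSeries.coeff_trunc]
      by_cases hjM : j < M + 1
      · rw [if_pos hjM]; simp [hBnn]
      · rw [if_neg hjM, sub_zero]
        have h1 : ‖PowerSeries.coeff j G‖ ≤ ((j + m - 1).choose j : ℝ) := by
          have := norm_coeff_geomF_prod_le Finset.univ z (fun k _ => hz k) j
          simpa [hG, Finset.card_univ] using this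
        refine h1.trans ?_
        rw [hB]
        norm_cast
        have hsymm : (j + m - 1).choose j = (j + m - 1).choose (m-1) := by
          have h2 : j ≤ j + m - 1 := by omega
          have := Nat.choose_symm h2
          rw [show j + m - 1 - j = m - 1 by omega] at this
          omega
        rw [hsymm]
        exact Nat.choose_le_choose _ (by omega)
    have hQhigh : ∀ ν ∈ Finset.Icc (M+1) (M+m), ‖Q.coeff ν‖ ≤ 2^m * B := by
      intro ν hν
      rw [Finset.mem_Icc] at hν
      have hν1 : ν ≠ 0 := by omega
      have e1 : ∑ p ∈ Finset.HasAntidiagonal.antidiagonal ν, h.coeff p.1 * (PowerSeries.coeff p.2 G) = 0 := by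
        have : ∀ p ∈ Finset.HasAntidiagonal.antidiagonal ν, h.coeff p.1 * (PowerSeries.coeff p.2 G)
            = (PowerSeries.coeff p.1 (h : PowerSeries ℂ)) * (PowerSeries.coeff p.2 G) := by
          intro p _; rw [Polynomial.coeff_coe]
        rw [Finset.sum_congr rfl this, ← PowerSeries.coeff_mul, hhG]
        simp [PowerSeries.coeff_one, hν1]
      have e2 : Q.coeff ν = ∑ p ∈ Finset.HasAntidiagonal.antidiagonal ν, h.coeff p.1 * w p.2 := by
        have : ∑ p ∈ Finset.HasAntidiagonal.antidiagonal ν, h.coeff p.1 * w p.2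
            = (∑ p ∈ Finset.HasAntidiagonal.antidiagonal ν, h.coeff p.1 * (PowerSeries.coeff p.2 G))
              - ∑ p ∈ Finset.HasAntidiagonal.antidiagonal ν, h.coeff p.1 * g.coeff p.2 := by
          rw [← Finset.sum_sub_distrib]
          apply Finset.sum_congr rfl
          intro p _
          rw [hw]; ring
        rw [this, e1, zero_sub, ← Polynomial.coeff_mul]
        rw [hQ, Polynomial.coeff_sub, Polynomial.coeff_one, if_neg hν1, zero_sub]
      rw [e2]
      calc ‖∑ p ∈ Finset.HasAntidiagonal.antidiagonal ν, h.coeff p.1 * w p.2‖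
          ≤ ∑ p ∈ Finset.HasAntidiagonal.antidiagonal ν, ‖h.coeff p.1 * w p.2‖ := norm_sum_le _ _
        _ ≤ ∑ p ∈ Finset.HasAntidiagonal.antidiagonal ν, ((m.choose p.1 : ℝ)) * B := by
            apply Finset.sum_le_sum
            intro p hp
            rw [norm_mul]
            apply mul_le_mul ?_ ?_ (norm_nonneg _) (Nat.cast_nonneg _)
            · have := norm_coeff_prod_X_sub_C_le Finset.univ z (fun k _ => (hz k).le) p.1
              simpa [hh, Finset.card_univ] using this
            · exact hwbound p.2 (le_trans (Finset.HasAntidiagonal.antidiagonal.snd_le hp) (by omega))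
        _ = (∑ p ∈ Finset.HasAntidiagonal.antidiagonal ν, (m.choose p.1 : ℝ)) * B := by
            rw [Finset.sum_mul]
        _ ≤ (2^m : ℝ) * B := by
            apply mul_le_mul_of_nonneg_right ?_ hBnn
            rw [Finset.Nat.sum_antidiagonal_eq_sum_range_succ_mk (fun p => ((m.choose p.1 : ℕ) : ℝ))]
            have := sum_choose_le m (ν+1)
            calc ∑ r ∈ Finset.range (ν+1), ((m.choose r : ℕ) : ℝ)
                = ((∑ r ∈ Finset.range (ν+1), m.choose r : ℕ) : ℝ) := by push_cast; ring
              _ ≤ ((2^m : ℕ) : ℝ) := by exact_mod_cast this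
              _ = (2^m : ℝ) := by push_cast; ring
    calc ∑ ν ∈ Finset.Icc (M+1) (M+m), ‖Q.coeff ν‖
        ≤ ∑ ν ∈ Finset.Icc (M+1) (M+m), (2^m * B) := Finset.sum_le_sum hQhigh
      _ = ((Finset.Icc (M+1) (M+m)).card : ℝ) * (2^m * B) := by
          rw [Finset.sum_const, nsmul_eq_mul]
      _ = (m : ℝ) * (2^m * B) := by
          rw [Nat.card_Icc]
          congr 1
          norm_cast
          omega

lemma fourier_coeff_le {m : ℕ} (ℓ : Fin m → ℤ) (hℓ : Function.Injective ℓ) (a : Fin m → ℂ) (C : ℝ)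
    (hC : ∀ t ∈ Set.Icc (0:ℝ) (2*π), ‖∑ j : Fin m, a j * Complex.exp (Complex.I * (ℓ j : ℂ) * (t : ℂ))‖ ≤ C)
    (k : Fin m) : ‖a k‖ ≤ C := by
  set P : ℝ → ℂ := fun t => ∑ j : Fin m, a j * Complex.exp (Complex.I * (ℓ j : ℂ) * (t : ℂ)) with hP
  set f : ℝ → ℂ := fun t => P t * Complex.exp (-(Complex.I * (ℓ k : ℂ) * (t : ℂ))) with hf
  have hfval : ∀ t : ℝ, f t = ∑ j : Fin m, a j * Complex.exp (Complex.I * ((ℓ j : ℂ) - (ℓ k : ℂ)) * (t : ℂ)) := by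
    intro t
    rw [hf, hP]
    simp only [Finset.sum_mul]
    apply Finset.sum_congr rfl
    intro j _
    rw [mul_assoc, ← Complex.exp_add]
    congr 2
    ring
  have hint : ∀ j : Fin m, IntervalIntegrable
      (fun t : ℝ => a j * Complex.exp (Complex.I * ((ℓ j : ℂ) - (ℓ k : ℂ)) * (t : ℂ))) MeasureTheory.volume 0 (2*π) := by
    intro j
    apply Continuous.intervalIntegrable
    continuity
  have hintval : ∫ t in (0:ℝ)..(2*π), f t = (2*π : ℝ) * a k := by
    have : ∫ t in (0:ℝ)..(2*π), f t
        = ∑ j : Fin m, ∫ t in (0:ℝ)..(2*π), a j * Complex.exp (Complex.I * ((ℓ j : ℂ) - (ℓ k : ℂ)) * (t : ℂ)) := by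
      rw [show (fun t : ℝ => f t) = fun t : ℝ => ∑ j : Fin m, a j * Complex.exp (Complex.I * ((ℓ j : ℂ) - (ℓ k : ℂ)) * (t : ℂ)) from funext hfval]
      exact intervalIntegral.integral_finset_sum (fun j _ => hint j)
    rw [this]
    have hterm : ∀ j : Fin m, (∫ t in (0:ℝ)..(2*π), a j * Complex.exp (Complex.I * ((ℓ j : ℂ) - (ℓ k : ℂ)) * (t : ℂ)))
        = if j = k then (2*π : ℝ) * a k else 0 := by
      intro j
      rw [intervalIntegral.integral_const_mul]
      by_cases hjk : j = k
      · subst hjk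
        rw [if_pos rfl]
        simp only [sub_self, mul_zero, zero_mul, Complex.exp_zero]
        rw [intervalIntegral.integral_const]
        push_cast
        simp [Complex.real_smul]
        ring
      · rw [if_neg hjk]
        have hne : ((ℓ j : ℂ) - (ℓ k : ℂ)) ≠ 0 := by
          intro h
          apply hjk
          apply hℓ
          have : ((ℓ j : ℂ)) = ((ℓ k : ℂ)) := by linear_combination h
          exact_mod_cast this
        have hc : Complex.I * ((ℓ j : ℂ) - (ℓ k : ℂ)) ≠ 0 := mul_ne_zero Complex.I_ne_zero hne
        have : ∀ t : ℝ, Complex.I * ((ℓ j : ℂ) - (ℓ k : ℂ)) * (t:ℂ) = (Complex.I * ((ℓ j : ℂ) - (ℓ k : ℂ))) * (t:ℂ) := fun t => rfl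
        rw [integral_exp_mul_complex hc]
        have h1 : Complex.exp (Complex.I * ((ℓ j : ℂ) - (ℓ k : ℂ)) * ((2*π : ℝ) : ℂ)) = 1 := by
          have := Complex.exp_int_mul_two_pi_mul_I (ℓ j - ℓ k)
          rw [← this]
          congr 1
          push_cast
          ring
        rw [h1]
        simp
    rw [Finset.sum_congr rfl (fun j _ => hterm j)]
    simp
  have hnorm : ‖∫ t in (0:ℝ)..(2*π), f t‖ ≤ C * |2*π - 0| := by
    apply intervalIntegral.norm_integral_le_of_norm_le_const
    intro x hx
    have hx' : x ∈ Set.Icc (0:ℝ) (2*π) := by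
      rw [Set.uIoc_of_le (by positivity : (0:ℝ) ≤ 2*π)] at hx
      exact ⟨hx.1.le, hx.2⟩
    rw [hf]
    simp only [norm_mul]
    have he : ‖Complex.exp (-(Complex.I * (ℓ k : ℂ) * (x : ℂ)))‖ = 1 := by
      rw [Complex.norm_exp]
      have : (-(Complex.I * (ℓ k : ℂ) * (x : ℂ))).re = 0 := by
        simp [Complex.mul_re, Complex.mul_im]
      rw [this, Real.exp_zero]
    rw [he, mul_one]
    exact hC x hx'
  rw [hintval] at hnorm
  have h2π : (0:ℝ) < 2*π := by positivity
  rw [abs_of_pos (by linarith : (0:ℝ) < 2*π - 0)] at hnorm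
  have : ‖((2*π : ℝ) : ℂ) * a k‖ = (2*π) * ‖a k‖ := by
    rw [norm_mul, Complex.norm_real]
    rw [Real.norm_eq_abs, abs_of_pos h2π]
  rw [this] at hnorm
  nlinarith [norm_nonneg (a k)]

lemma pow_le_exp_mul_fact (n : ℕ) : (n:ℝ)^n ≤ Real.exp 1 ^ n * n.factorial := by
  have h1 : ((n:ℝ))^n / n.factorial ≤ Real.exp n := by
    have h := Real.sum_le_exp_of_nonneg (x := (n:ℝ)) (Nat.cast_nonneg n) (n+1)
    refine le_trans ?_ h
    exact Finset.single_le_sum (f := fun i : ℕ => (n:ℝ)^i / (i.factorial : ℝ))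
      (fun i _ => by positivity) (Finset.self_mem_range_succ n)
  have h2 : Real.exp (n : ℝ) = Real.exp 1 ^ n := by
    rw [← Real.exp_nat_mul]
    norm_num
  have hfac : (0:ℝ) < n.factorial := by exact_mod_cast Nat.factorial_pos n
  rw [div_le_iff₀ hfac] at h1
  rw [← h2]
  exact h1

lemma choose_le_exp (N n : ℕ) (hn : 1 ≤ n) :
    ((N.choose n : ℕ) : ℝ) ≤ (Real.exp 1 * N / n)^n := by
  have h1 : ((N.choose n : ℕ) : ℝ) ≤ (N:ℝ)^n / n.factorial := Nat.choose_le_pow_div n N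
  refine h1.trans ?_
  have hfac : (0:ℝ) < n.factorial := by exact_mod_cast Nat.factorial_pos n
  have hnpos : (0:ℝ) < n := by exact_mod_cast hn
  rw [div_le_iff₀ hfac, div_pow, div_mul_eq_mul_div, le_div_iff₀ (by positivity)]
  calc (N:ℝ)^n * (n:ℝ)^n ≤ (N:ℝ)^n * (Real.exp 1 ^ n * n.factorial) := by
        apply mul_le_mul_of_nonneg_left (pow_le_exp_mul_fact n) (by positivity)
    _ = (Real.exp 1 * N)^n * n.factorial := by rw [mul_pow]; ring

lemma numeric_bound (m M : ℕ) (hm : 2 ≤ m) (L : ℝ) (hL : 0 < L) (hL2 : L ≤ 2*π)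
    (hM : (M:ℝ) ≤ 4*π*m/L + 1) :
    (L/4000)^(m-1) * ((m:ℝ)^2 * 2^m * (((M + 2*m - 1).choose (m-1) : ℕ) : ℝ)) ≤ 1 := by
  set n : ℕ := m - 1 with hn
  have hn1 : 1 ≤ n := by omega
  have hmn : m = n + 1 := by omega
  have hπ : (0:ℝ) < π := Real.pi_pos
  have he : (0:ℝ) < Real.exp 1 := Real.exp_pos 1
  -- N bound
  have hNcast : ((M + 2*m - 1 : ℕ) : ℝ) ≤ (M:ℝ) + 2*m := by
    have : (M + 2*m - 1 : ℕ) ≤ M + 2*m := by omega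
    calc ((M + 2*m - 1 : ℕ) : ℝ) ≤ ((M + 2*m : ℕ) : ℝ) := by exact_mod_cast this
      _ = (M:ℝ) + 2*m := by push_cast; ring
  have hN : ((M + 2*m - 1 : ℕ) : ℝ) ≤ 10*π*m/L := by
    refine hNcast.trans ?_
    have hmpos : (0:ℝ) < m := by exact_mod_cast (by omega : 0 < m)
    have h1 : (M:ℝ) + 2*m ≤ 4*π*m/L + 1 + 2*m := by linarith
    refine h1.trans ?_
    have h2 : (1:ℝ) + 2*m ≤ 3*(m:ℝ) := by
      have : (1:ℝ) ≤ m := by exact_mod_cast (by omega : 1 ≤ m)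
      linarith
    have h3 : (3:ℝ)*m ≤ 6*π*m/L := by
      rw [le_div_iff₀ hL]
      calc (3:ℝ)*m*L ≤ 3*m*(2*π) := by
            apply mul_le_mul_of_nonneg_left hL2 (by positivity)
        _ = 6*π*m := by ring
    have e1 : 4*π*(m:ℝ)/L + 6*π*(m:ℝ)/L = 10*π*(m:ℝ)/L := by ring
    linarith
  -- choose bound
  have hB : (((M + 2*m - 1).choose (m-1) : ℕ) : ℝ) ≤ (20*π*Real.exp 1/L)^n := by
    refine (choose_le_exp (M + 2*m - 1) n hn1).trans ?_
    apply pow_le_pow_left₀ (by positivity)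
    have hnpos : (0:ℝ) < n := by exact_mod_cast hn1
    have hm2n : (m:ℝ) ≤ 2*n := by
      have : m ≤ 2*n := by omega
      exact_mod_cast this
    have hNn : ((M + 2*m - 1 : ℕ) : ℝ) ≤ 20*π*n/L := by
      refine hN.trans ?_
      have h1 : 10*π*(m:ℝ) ≤ 20*π*n := by nlinarith
      have := (div_le_div_iff_of_pos_right hL).2 h1
      calc 10*π*(m:ℝ)/L ≤ 20*π*(n:ℝ)/L := this
        _ = 20*π*n/L := by ring
    have heq : Real.exp 1 * (20*π*(n:ℝ)/L)/n = 20*π*Real.exp 1/L := by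
      field_simp
    calc Real.exp 1 * ((M + 2*m - 1 : ℕ) : ℝ) / n ≤ Real.exp 1 * (20*π*(n:ℝ)/L) / n := by
          apply div_le_div_of_nonneg_right ?_ hnpos.le
          exact mul_le_mul_of_nonneg_left hNn he.le
      _ = 20*π*Real.exp 1/L := heq
  -- main chain
  have hm2 : (m:ℝ)^2 ≤ (4:ℝ)^n := by
    have h1 : m ≤ 2^n := by
      have := Nat.lt_two_pow_self (n := n)
      omega
    have h1' : (m:ℝ) ≤ (2:ℝ)^n := by exact_mod_cast h1
    have : ((m:ℝ))^2 ≤ ((2:ℝ)^n)^2 := by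
      apply pow_le_pow_left₀ (by positivity) h1'
    refine this.trans_eq ?_
    rw [← pow_mul, show (4:ℝ) = 2^2 by norm_num, ← pow_mul]
    ring_nf
  have h2m : (2:ℝ)^m ≤ (4:ℝ)^n := by
    rw [hmn, pow_succ]
    have h2 : (2:ℝ) ≤ 2^n := by
      calc (2:ℝ) = 2^1 := by norm_num
        _ ≤ 2^n := by apply pow_le_pow_right₀ (by norm_num) hn1
    calc (2:ℝ)^n * 2 ≤ 2^n * 2^n := by nlinarith [pow_pos (show (0:ℝ) < 2 by norm_num) n]
      _ = (4:ℝ)^n := by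
          rw [← pow_add, show (4:ℝ) = 2^2 by norm_num, ← pow_mul]
          ring_nf
  have hfinal : (L/4000) * (4*4*(20*π*Real.exp 1/L)) ≤ 1 := by
    have h315 := Real.pi_lt_d2
    have hed9 := Real.exp_one_lt_d9
    have heq : (L/4000) * (4*4*(20*π*Real.exp 1/L)) = 320*π*Real.exp 1/4000 := by
      field_simp
      ring
    rw [heq]
    nlinarith [Real.exp_pos 1, Real.pi_pos]
  calc (L/4000)^(m-1) * ((m:ℝ)^2 * 2^m * (((M + 2*m - 1).choose (m-1) : ℕ) : ℝ))
      ≤ (L/4000)^n * ((4:ℝ)^n * (4:ℝ)^n * (20*π*Real.exp 1/L)^n) := by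
        rw [← hn]
        apply mul_le_mul_of_nonneg_left ?_ (by positivity)
        apply mul_le_mul ?_ hB (Nat.cast_nonneg _) (by positivity)
        exact mul_le_mul hm2 h2m (by positivity) (by positivity)
    _ = ((L/4000) * (4*4*(20*π*Real.exp 1/L)))^n := by
        rw [mul_pow, mul_pow, mul_pow]
    _ ≤ 1^n := by
        apply pow_le_pow_left₀ ?_ hfinal
        positivity
    _ = 1 := one_pow n

/-- **Turán's lemma.** There is an absolute constant `b > 0` such that for every `m ≥ 1`,
pairwise distinct integers `ℓ_1,…,ℓ_m`, complex numbers `a_1,…,a_m`, and every interval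
`I = [α,β]` of length `0 < β − α ≤ 2π`, the exponential sum `p(t) = ∑_k a_k e^{iℓ_k t}`
satisfies `max_{t∈I} |p(t)| ≥ (b|I|)^{m−1} ∑_k |a_k|`. -/
theorem turan_lemma :
    ∃ b : ℝ, 0 < b ∧
      ∀ (m : ℕ), 1 ≤ m →
      ∀ (ℓ : Fin m → ℤ), Function.Injective ℓ →
      ∀ (a : Fin m → ℂ),
      ∀ (α β : ℝ), α < β → β - α ≤ 2 * π →
        ∃ t ∈ Set.Icc α β,
          (b * (β - α)) ^ (m - 1) * ∑ k : Fin m, ‖a k‖ ≤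
            ‖∑ k : Fin m, a k * Complex.exp (Complex.I * (ℓ k : ℂ) * (t : ℂ))‖ := by
  refine ⟨1/4000, by norm_num, ?_⟩
  intro m hm ℓ hℓ a α β hαβ hβ2π
  rcases eq_or_lt_of_le hm with hm1 | hm2
  · -- m = 1
    refine ⟨α, ⟨le_refl α, hαβ.le⟩, ?_⟩
    subst hm1
    rw [show (1:ℕ) - 1 = 0 from rfl, pow_zero, one_mul, Fin.sum_univ_one, Fin.sum_univ_one]
    rw [norm_mul]
    have : ‖Complex.exp (Complex.I * ((ℓ 0 : ℤ) : ℂ) * (α : ℂ))‖ = 1 := by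
      rw [Complex.norm_exp]
      have : (Complex.I * ((ℓ 0 : ℤ) : ℂ) * (α : ℂ)).re = 0 := by
        simp [Complex.mul_re, Complex.mul_im]
      rw [this, Real.exp_zero]
    rw [this, mul_one]
  · -- m ≥ 2
    have hm2' : 2 ≤ m := hm2
    set L : ℝ := β - α with hLdef
    have hL : 0 < L := by simp [hLdef]; linarith
    have hL2 : L ≤ 2*π := hβ2π
    have hπ := Real.pi_pos
    set P : ℝ → ℂ := fun t => ∑ k : Fin m, a k * Complex.exp (Complex.I * (ℓ k : ℂ) * (t : ℂ)) with hP
    have hPcont : Continuous P := by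
      rw [hP]
      apply continuous_finset_sum
      intro k _
      continuity
    -- max on period
    obtain ⟨t₀, ht₀mem, ht₀max⟩ := IsCompact.exists_isMaxOn (isCompact_Icc : IsCompact (Set.Icc (0:ℝ) (2*π)))
      ⟨0, Set.mem_Icc.2 ⟨le_refl 0, by positivity⟩⟩ (f := fun t => ‖P t‖)
      (Continuous.continuousOn (by continuity))
    have hmax : ∀ t ∈ Set.Icc (0:ℝ) (2*π), ‖P t‖ ≤ ‖P t₀‖ := fun t ht => ht₀max ht
    -- Fourier bound
    have hak : ∀ k, ‖a k‖ ≤ ‖P t₀‖ := fun k => fourier_coeff_le ℓ hℓ a _ hmax k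
    have hsum_a : ∑ k : Fin m, ‖a k‖ ≤ (m:ℝ) * ‖P t₀‖ := by
      have := Finset.sum_le_card_nsmul Finset.univ (fun k => ‖a k‖) (‖P t₀‖) (fun k _ => hak k)
      simpa [Finset.card_univ, nsmul_eq_mul] using this
    -- grid setup
    set δ : ℝ := L / (2*m) with hδdef
    have hmR : (0:ℝ) < m := by exact_mod_cast (by omega : 0 < m)
    have hδ : 0 < δ := by positivity
    set γ : ℝ := 2*π * Int.fract ((α - t₀)/(2*π)) with hγdef
    have hγ0 : 0 ≤ γ := by
      have := Int.fract_nonneg ((α - t₀)/(2*π))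
      positivity
    have hγ2π : γ < 2*π := by
      have h1 := Int.fract_lt_one ((α - t₀)/(2*π))
      calc γ = 2*π * Int.fract ((α - t₀)/(2*π)) := hγdef
        _ < 2*π * 1 := by apply mul_lt_mul_of_pos_left h1 (by positivity)
        _ = 2*π := by ring
    set n₀ : ℤ := ⌊(α - t₀)/(2*π)⌋ with hn₀
    have hγeq : α - t₀ - γ = 2*π * (n₀ : ℝ) := by
      rw [hγdef, hn₀, Int.fract]
      field_simp
      ring
    set M : ℕ := ⌈γ/δ⌉₊ with hM
    have hMδ : γ ≤ M * δ := by
      have := Nat.le_ceil (γ/δ)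
      calc γ = (γ/δ) * δ := by field_simp
        _ ≤ (M:ℝ) * δ := by apply mul_le_mul_of_nonneg_right this hδ.le
    have hMub : (M:ℝ) ≤ 4*π*m/L + 1 := by
      have h1 : (M:ℝ) < γ/δ + 1 := Nat.ceil_lt_add_one (by positivity)
      have h2 : γ/δ ≤ 2*π/δ := by
        apply div_le_div_of_nonneg_right hγ2π.le hδ.le
      have h3 : 2*π/δ = 4*π*m/L := by
        rw [hδdef]
        field_simp
        ring
      linarith
    -- nodes
    set z : Fin m → ℂ := fun k => Complex.exp (Complex.I * (ℓ k : ℂ) * (δ : ℂ)) with hz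
    have hznorm : ∀ k, ‖z k‖ = 1 := by
      intro k
      rw [hz]
      rw [Complex.norm_exp]
      have : (Complex.I * ((ℓ k : ℤ) : ℂ) * (δ : ℂ)).re = 0 := by
        simp [Complex.mul_re, Complex.mul_im]
      rw [this, Real.exp_zero]
    obtain ⟨c, hc1, hc2⟩ := powersum_exists m M hm z hznorm
    set u : ℕ → ℝ := fun ν => α + ((ν : ℝ)*δ - γ) with hu
    have humem : ∀ ν ∈ Finset.Icc (M+1) (M+m), u ν ∈ Set.Icc α β := by
      intro ν hν
      rw [Finset.mem_Icc] at hν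
      have hν1 : (M:ℝ) + 1 ≤ (ν:ℝ) := by exact_mod_cast hν.1
      have hν2 : (ν:ℝ) ≤ (M:ℝ) + m := by exact_mod_cast hν.2
      constructor
      · have : (ν:ℝ)*δ ≥ ((M:ℝ)+1)*δ := by apply mul_le_mul_of_nonneg_right hν1 hδ.le
        have h2 : ((M:ℝ)+1)*δ = M*δ + δ := by ring
        simp only [hu]
        nlinarith
      · have h1 : (ν:ℝ)*δ ≤ ((M:ℝ)+m)*δ := by apply mul_le_mul_of_nonneg_right hν2 hδ.le
        have h2 : (M:ℝ) < γ/δ + 1 := Nat.ceil_lt_add_one (by positivity)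
        have h3 : ((M:ℝ)+m)*δ < (γ/δ + 1 + m)*δ := by nlinarith
        have h4 : (γ/δ + 1 + m)*δ = γ + (1+m)*δ := by field_simp; ring
        have h5 : (1+(m:ℝ))*δ ≤ L := by
          rw [hδdef]
          rw [div_eq_mul_inv, ← mul_assoc]
          have hm1R : 1+(m:ℝ) ≤ 2*m := by
            have : (1:ℝ) ≤ m := by exact_mod_cast hm
            linarith
          calc (1+(m:ℝ))*L*(2*(m:ℝ))⁻¹ ≤ (2*(m:ℝ))*L*(2*(m:ℝ))⁻¹ := by
                apply mul_le_mul_of_nonneg_right (mul_le_mul_of_nonneg_right hm1R hL.le) (by positivity)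
            _ = L := by field_simp
          
        simp only [hu, hLdef] at *
        nlinarith
    -- periodicity / power structure
    set b' : Fin m → ℂ := fun k => a k * Complex.exp (Complex.I * (ℓ k : ℂ) * (t₀ : ℂ)) with hb'
    have hPu : ∀ ν : ℕ, P (u ν) = ∑ k : Fin m, b' k * z k ^ ν := by
      intro ν
      rw [hP]
      apply Finset.sum_congr rfl
      intro k _
      have hureal : u ν = t₀ + (ν:ℝ)*δ + 2*π*(n₀:ℝ) := by
        simp only [hu]
        linarith [hγeq]
      have hexpn : Complex.exp (((ℓ k * n₀ : ℤ) : ℂ) * (2*(π:ℂ)*Complex.I)) = 1 :=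
        Complex.exp_int_mul_two_pi_mul_I (ℓ k * n₀)
      have key : Complex.exp (Complex.I * ((ℓ k : ℤ) : ℂ) * ((u ν : ℝ) : ℂ))
          = Complex.exp (Complex.I * ((ℓ k : ℤ) : ℂ) * (t₀:ℂ))
            * (Complex.exp (Complex.I * ((ℓ k : ℤ) : ℂ) * (δ:ℂ)))^ν := by
        rw [← Complex.exp_nat_mul, ← Complex.exp_add]
        rw [show Complex.I * ((ℓ k : ℤ) : ℂ) * ((u ν : ℝ) : ℂ)
            = (Complex.I * ((ℓ k : ℤ) : ℂ) * (t₀:ℂ) + (ν:ℂ) * (Complex.I * ((ℓ k : ℤ) : ℂ) * (δ:ℂ)))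
              + ((ℓ k * n₀ : ℤ) : ℂ) * (2*(π:ℂ)*Complex.I) by push_cast [hureal]; ring]
        rw [Complex.exp_add, hexpn, mul_one]
      simp only [hb', hz]
      rw [key]; ring
    -- interchange
    have hPt₀ : P t₀ = ∑ ν ∈ Finset.Icc (M+1) (M+m), c ν * P (u ν) := by
      have h1 : P t₀ = ∑ k : Fin m, b' k := by rw [hP, hb']
      rw [h1]
      have h2 : ∀ k : Fin m, b' k = ∑ ν ∈ Finset.Icc (M+1) (M+m), b' k * (c ν * z k ^ ν) := by
        intro k
        rw [← Finset.mul_sum, hc1 k, mul_one]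
      rw [Finset.sum_congr rfl (fun k _ => h2 k), Finset.sum_comm]
      apply Finset.sum_congr rfl
      intro ν _
      rw [hPu ν, Finset.mul_sum]
      apply Finset.sum_congr rfl
      intro k _
      ring
    -- max over nodes
    obtain ⟨ν', hν'mem, hν'max⟩ := Finset.exists_max_image (Finset.Icc (M+1) (M+m))
      (fun ν => ‖P (u ν)‖) ⟨M+1, by rw [Finset.mem_Icc]; omega⟩
    have hPt₀le : ‖P t₀‖ ≤ (∑ ν ∈ Finset.Icc (M+1) (M+m), ‖c ν‖) * ‖P (u ν')‖ := by
      rw [hPt₀]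
      calc ‖∑ ν ∈ Finset.Icc (M+1) (M+m), c ν * P (u ν)‖
          ≤ ∑ ν ∈ Finset.Icc (M+1) (M+m), ‖c ν * P (u ν)‖ := norm_sum_le _ _
        _ ≤ ∑ ν ∈ Finset.Icc (M+1) (M+m), ‖c ν‖ * ‖P (u ν')‖ := by
            apply Finset.sum_le_sum
            intro ν hν
            rw [norm_mul]
            exact mul_le_mul_of_nonneg_left (hν'max ν hν) (norm_nonneg _)
        _ = (∑ ν ∈ Finset.Icc (M+1) (M+m), ‖c ν‖) * ‖P (u ν')‖ := by rw [Finset.sum_mul]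
    -- final
    refine ⟨u ν', humem ν' hν'mem, ?_⟩
    have hgoal : (1/4000 * L)^(m-1) * ∑ k : Fin m, ‖a k‖ ≤ ‖P (u ν')‖ := by
      set B : ℝ := (((M + 2*m - 1).choose (m-1) : ℕ) : ℝ) with hB
      have hBnn : (0:ℝ) ≤ B := Nat.cast_nonneg _
      have hKb : (∑ ν ∈ Finset.Icc (M+1) (M+m), ‖c ν‖) ≤ (m:ℝ) * (2^m * B) := hc2
      have hPnn : (0:ℝ) ≤ ‖P (u ν')‖ := norm_nonneg _
      have step1 : ∑ k : Fin m, ‖a k‖ ≤ (m:ℝ)^2 * 2^m * B * ‖P (u ν')‖ := by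
        calc ∑ k : Fin m, ‖a k‖ ≤ (m:ℝ) * ‖P t₀‖ := hsum_a
          _ ≤ (m:ℝ) * ((∑ ν ∈ Finset.Icc (M+1) (M+m), ‖c ν‖) * ‖P (u ν')‖) := by
              apply mul_le_mul_of_nonneg_left hPt₀le hmR.le
          _ ≤ (m:ℝ) * (((m:ℝ) * (2^m * B)) * ‖P (u ν')‖) := by
              apply mul_le_mul_of_nonneg_left (mul_le_mul_of_nonneg_right hKb hPnn) hmR.le
          _ = (m:ℝ)^2 * 2^m * B * ‖P (u ν')‖ := by ring
      have hnum := numeric_bound m M hm2' L hL hL2 hMub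
      have hpow_nn : (0:ℝ) ≤ (1/4000 * L)^(m-1) := by positivity
      calc (1/4000 * L)^(m-1) * ∑ k : Fin m, ‖a k‖
          ≤ (1/4000 * L)^(m-1) * ((m:ℝ)^2 * 2^m * B * ‖P (u ν')‖) := by
            apply mul_le_mul_of_nonneg_left step1 hpow_nn
        _ = ((L/4000)^(m-1) * ((m:ℝ)^2 * 2^m * B)) * ‖P (u ν')‖ := by
            rw [show (1/4000 * L : ℝ) = L/4000 by ring]
            ring
        _ ≤ 1 * ‖P (u ν')‖ := by
            apply mul_le_mul_of_nonneg_right hnum hPnn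
        _ = ‖P (u ν')‖ := one_mul _
    exact hgoal
end

section
/- Let P(z) = Σ_{k=0}^n λ_k z^k be a polynomial with complex coefficients and let P̄(z) = (1−z)P(z), with coefficients λ̄_0,…,λ̄_{n+1}. Then for every r ∈ (0,∞), S(r,P̄) ≥ (1+r)/(2(n+1)) · S(r,P), where S(r,P) = Σ_{k=0}^n |λ_k| r^k and S(r,P̄) = Σ_{k=0}^{n+1} |λ̄_k| r^k. -/
noncomputable def polyOf {n : ℕ} (lam : Fin (n + 1) → ℂ) : Polynomial ℂ :=
  ∑ k : Fin (n + 1), Polynomial.C (lam k) * Polynomial.X ^ (k : ℕ)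

lemma coeff_polyOf {n : ℕ} (lam : Fin (n + 1) → ℂ) (k : ℕ) :
    (polyOf lam).coeff k = if h : k < n + 1 then lam ⟨k, h⟩ else 0 := by
  unfold polyOf
  rw [Polynomial.finset_sum_coeff]
  simp only [Polynomial.coeff_C_mul, Polynomial.coeff_X_pow, mul_ite, mul_one, mul_zero]
  split
  · next h =>
    rw [Finset.sum_eq_single (⟨k, h⟩ : Fin (n+1))]
    · simp
    · intro b _ hb
      simp only [ite_eq_right_iff]
      intro hkb
      exact absurd (Fin.ext hkb.symm) hb
    · simp
  · next h =>
    apply Finset.sum_eq_zero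
    intro i _
    rw [if_neg]
    intro hk
    exact h (hk ▸ i.isLt)

/-- **Claim.** For `P(z) = ∑_{k=0}^n λ_k z^k` and `P̄(z) = (1−z)P(z)` with coefficients
`λ̄_0,…,λ̄_{n+1}`, one has `S(r,P̄) ≥ (1+r)/(2(n+1)) · S(r,P)` for every `r ∈ (0,∞)`,
where `S(r,Q) = ∑_k |μ_k| r^k`. -/
theorem S_of_one_sub_z_mul (n : ℕ) (lam : Fin (n + 1) → ℂ) (r : ℝ) (hr : 0 < r) :
    (1 + r) / (2 * (n + 1)) * (∑ k : Fin (n + 1), ‖lam k‖ * r ^ (k : ℕ)) ≤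
      ∑ k ∈ Finset.range (n + 2),
        ‖((1 - Polynomial.X) * polyOf lam).coeff k‖ * r ^ k := by
  set P := polyOf lam with hP
  set c : ℕ → ℂ := fun i => ((1 - Polynomial.X) * P).coeff i with hc
  set Sbar : ℝ := ∑ k ∈ Finset.range (n + 2), ‖c k‖ * r ^ k with hSbar
  have hcoeff : ∀ i : ℕ, c (i + 1) = P.coeff (i + 1) - P.coeff i := by
    intro i
    simp [hc, sub_mul, Polynomial.coeff_X_mul]
  have hc0 : c 0 = P.coeff 0 := by
    simp [hc, sub_mul]
  have hsum : ∀ j : ℕ, ∑ i ∈ Finset.range (j + 1), c i = P.coeff j := by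
    intro j
    induction j with
    | zero => simpa using hc0
    | succ j ih =>
      rw [Finset.sum_range_succ, ih, hcoeff j]; ring
  have htop : P.coeff (n + 1) = 0 := by
    rw [hP, coeff_polyOf]; simp
  have htail : ∀ j, j ≤ n → ∑ i ∈ Finset.Ico (j + 1) (n + 2), c i = -P.coeff j := by
    intro j hj
    rw [Finset.sum_Ico_eq_sub _ (by omega : j + 1 ≤ n + 2)]
    rw [show n + 2 = (n + 1) + 1 from rfl, hsum, hsum, htop]
    ring
  -- nonnegativity of Sbar terms
  have hterm : ∀ j, j ≤ n → (1 + r) / 2 * (‖P.coeff j‖ * r ^ j) ≤ Sbar := by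
    intro j hj
    rcases le_total r 1 with hr1 | hr1
    · -- head case
      have h1 : ‖P.coeff j‖ * r ^ j ≤ Sbar := by
        calc ‖P.coeff j‖ * r ^ j
            ≤ (∑ i ∈ Finset.range (j + 1), ‖c i‖) * r ^ j := by
              apply mul_le_mul_of_nonneg_right _ (by positivity)
              rw [← hsum j]
              exact (norm_sum_le _ _)
          _ = ∑ i ∈ Finset.range (j + 1), ‖c i‖ * r ^ j := by
              rw [Finset.sum_mul]
          _ ≤ ∑ i ∈ Finset.range (j + 1), ‖c i‖ * r ^ i := by
              apply Finset.sum_le_sum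
              intro i hi
              apply mul_le_mul_of_nonneg_left _ (norm_nonneg _)
              exact pow_le_pow_of_le_one hr.le hr1 (Nat.lt_succ_iff.mp (Finset.mem_range.mp hi))
          _ ≤ Sbar := by
              apply Finset.sum_le_sum_of_subset_of_nonneg
              · exact Finset.range_subset_range.mpr (by omega)
              · intro i _ _; positivity
      have h2 : (1 + r) / 2 ≤ 1 := by linarith
      calc (1 + r) / 2 * (‖P.coeff j‖ * r ^ j)
          ≤ 1 * (‖P.coeff j‖ * r ^ j) :=
            mul_le_mul_of_nonneg_right h2 (by positivity)
        _ = ‖P.coeff j‖ * r ^ j := one_mul _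
        _ ≤ Sbar := h1
    · -- tail case, 1 ≤ r
      have h1 : ‖P.coeff j‖ * r ^ (j + 1) ≤ Sbar := by
        calc ‖P.coeff j‖ * r ^ (j + 1)
            ≤ (∑ i ∈ Finset.Ico (j + 1) (n + 2), ‖c i‖) * r ^ (j + 1) := by
              apply mul_le_mul_of_nonneg_right _ (by positivity)
              have := htail j hj
              calc ‖P.coeff j‖ = ‖-P.coeff j‖ :=
                    (norm_neg _).symm
                _ = ‖∑ i ∈ Finset.Ico (j + 1) (n + 2), c i‖ := by rw [this]
                _ ≤ _ := norm_sum_le _ _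
          _ = ∑ i ∈ Finset.Ico (j + 1) (n + 2), ‖c i‖ * r ^ (j + 1) := by
              rw [Finset.sum_mul]
          _ ≤ ∑ i ∈ Finset.Ico (j + 1) (n + 2), ‖c i‖ * r ^ i := by
              apply Finset.sum_le_sum
              intro i hi
              apply mul_le_mul_of_nonneg_left _ (norm_nonneg _)
              exact pow_le_pow_right₀ hr1 (Finset.mem_Ico.mp hi).1
          _ ≤ Sbar := by
              rw [hSbar, Finset.range_eq_Ico]
              apply Finset.sum_le_sum_of_subset_of_nonneg
              · exact Finset.Ico_subset_Ico (by omega) le_rfl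
              · intro i _ _; positivity
      have h2 : (1 + r) / 2 ≤ r := by linarith
      calc (1 + r) / 2 * (‖P.coeff j‖ * r ^ j)
          ≤ r * (‖P.coeff j‖ * r ^ j) :=
            mul_le_mul_of_nonneg_right h2 (by positivity)
        _ = ‖P.coeff j‖ * r ^ (j + 1) := by ring
        _ ≤ Sbar := h1
  have hlam : ∀ k : Fin (n + 1), ‖lam k‖ = ‖P.coeff k‖ := by
    intro k
    rw [hP, coeff_polyOf, dif_pos k.isLt]
  have key : (1 + r) / 2 * (∑ k : Fin (n + 1), ‖lam k‖ * r ^ (k : ℕ))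
      ≤ (n + 1 : ℝ) * Sbar := by
    rw [Finset.mul_sum]
    calc (∑ k : Fin (n + 1), (1 + r) / 2 * (‖lam k‖ * r ^ (k : ℕ)))
        ≤ ∑ _k : Fin (n + 1), Sbar := by
          apply Finset.sum_le_sum
          intro k _
          rw [hlam k]
          exact hterm k (by omega)
      _ = (n + 1 : ℝ) * Sbar := by
          rw [Finset.sum_const, Finset.card_univ, Fintype.card_fin, nsmul_eq_mul]
          push_cast; ring
  have hn1 : (0 : ℝ) < n + 1 := by positivity
  rw [div_mul_eq_mul_div, div_le_iff₀ (by positivity)]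
  calc (1 + r) * (∑ k : Fin (n + 1), ‖lam k‖ * r ^ (k : ℕ))
      = 2 * ((1 + r) / 2 * (∑ k : Fin (n + 1), ‖lam k‖ * r ^ (k : ℕ))) := by ring
    _ ≤ 2 * ((n + 1 : ℝ) * Sbar) := by linarith [key]
    _ = Sbar * (2 * (n + 1)) := by ring
end

section
/- Let P(z) = Σ_{k=0}^n λ_k z^k be a polynomial with complex coefficients, let a ∈ ℂ, δ > 0, r > 0, and let m be a positive integer. Suppose #{ k ∈ {0,…,n} : |λ_k − a| r^k ≥ δ S(r,P) } ≤ 2m. Then the coefficients λ̄_0,…,λ̄_{n+1} of P̄(z) = (1−z)P(z) satisfy #{ k ∈ {0,…,n+1} : |λ̄_k| r^k ≥ 2δ(1+r) S(r,P) } ≤ 4m + 2, where S(r,P) = Σ_{k=0}^n |λ_k| r^k. -/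
lemma polyOf_coeff {n : ℕ} (lam : Fin (n + 1) → ℂ) (j : ℕ) :
    (polyOf lam).coeff j = if h : j < n + 1 then lam ⟨j, h⟩ else 0 := by
  unfold polyOf
  rw [Polynomial.finset_sum_coeff]
  simp only [Polynomial.coeff_C_mul, Polynomial.coeff_X_pow, mul_ite, mul_one, mul_zero]
  split_ifs with h
  · rw [Finset.sum_eq_single (⟨j, h⟩ : Fin (n+1))]
    · simp
    · intro b _ hb
      simp only [ite_eq_right_iff]
      intro hbj
      exact absurd (Fin.ext hbj.symm) hb
    · simp
  · apply Finset.sum_eq_zero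
    intro b _
    simp only [ite_eq_right_iff]
    intro hbj
    exact absurd (hbj ▸ b.isLt) h


lemma key_disj (dl r S A Bv C : ℝ) (hdl : 0 < dl) (hr : 0 < r) (hS : 0 < S)
    (h1 : 2 * dl * (1 + r) * S ≤ C) (h2 : C ≤ A + r * Bv) :
    dl * S ≤ A ∨ dl * S ≤ Bv := by
  by_contra hcon
  push_neg at hcon
  obtain ⟨ha, hb⟩ := hcon
  have h3 := mul_lt_mul_of_pos_left hb hr
  have h4 : 0 < dl * S := mul_pos hdl hS
  have h5 : 0 < dl * S * r := mul_pos h4 hr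
  linarith

set_option maxHeartbeats 2000000 in
/-- **Claim.** Let `P(z) = ∑_{k=0}^n λ_k z^k`, `a ∈ ℂ`, `δ > 0`, `r > 0`, `m ≥ 1`.
If `#{k : |λ_k − a| r^k ≥ δ S(r,P)} ≤ 2m`, then the coefficients `λ̄_k` of
`P̄(z) = (1−z)P(z)` satisfy `#{k ∈ {0,…,n+1} : |λ̄_k| r^k ≥ 2δ(1+r) S(r,P)} ≤ 4m + 2`. -/
theorem few_large_coefficients_of_one_sub_z_mul
    (n : ℕ) (lam : Fin (n + 1) → ℂ) (a : ℂ) (δ r : ℝ) (hδ : 0 < δ) (hr : 0 < r)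
    (m : ℕ) (hm : 1 ≤ m)
    (hfew : Finset.card (@Finset.filter (Fin (n + 1))
        (fun k => δ * (∑ j : Fin (n + 1), ‖lam j‖ * r ^ (j : ℕ)) ≤
          ‖lam k - a‖ * r ^ (k : ℕ))
        (Classical.decPred _) Finset.univ) ≤ 2 * m) :
    Finset.card (@Finset.filter ℕ
        (fun k => 2 * δ * (1 + r) * (∑ j : Fin (n + 1), ‖lam j‖ * r ^ (j : ℕ)) ≤
          ‖((1 - Polynomial.X) * polyOf lam).coeff k‖ * r ^ k)
        (Classical.decPred _) (Finset.range (n + 2))) ≤ 4 * m + 2 := by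
  classical
  set S : ℝ := ∑ j : Fin (n + 1), ‖lam j‖ * r ^ (j : ℕ) with hSdef
  have hS0 : 0 ≤ S :=
    Finset.sum_nonneg fun j _ => mul_nonneg (norm_nonneg _) (le_of_lt (pow_pos hr _))
  set B := (@Finset.filter (Fin (n + 1))
        (fun k => δ * S ≤ ‖lam k - a‖ * r ^ (k : ℕ))
        (Classical.decPred _) Finset.univ) with hBdef
  have hBcard : B.card ≤ 2 * m := hfew
  set T := (@Finset.filter ℕ
        (fun k => 2 * δ * (1 + r) * S ≤
          ‖((1 - Polynomial.X) * polyOf lam).coeff k‖ * r ^ k)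
        (Classical.decPred _) (Finset.range (n + 2))) with hTdef
  set g : Fin (n + 1) → ℕ := fun b => (b : ℕ) + 1 with hgdef
  rcases eq_or_lt_of_le hS0 with hSz | hSpos
  · -- S = 0 : B = univ, so n + 1 ≤ 2m
    have hBuniv : B = Finset.univ := by
      apply Finset.filter_true_of_mem
      intro k _
      rw [← hSz]
      simpa using mul_nonneg (norm_nonneg _) (le_of_lt (pow_pos hr _))
    have hn : n + 1 ≤ 2 * m := by
      have := hBcard
      rw [hBuniv, Finset.card_univ, Fintype.card_fin] at this
      exact this
    calc T.card ≤ (Finset.range (n + 2)).card := Finset.card_filter_le _ _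
      _ = n + 2 := Finset.card_range _
      _ ≤ 2 * m + 1 := by omega
      _ ≤ 4 * m + 2 := by omega
  · -- S > 0
    have hsub : T ⊆ insert 0 (insert (n + 1)
        (B.image (Fin.val) ∪ B.image g)) := by
      intro k hk
      rw [hTdef, Finset.mem_filter, Finset.mem_range] at hk
      obtain ⟨hk2, hkbig⟩ := hk
      rcases Nat.eq_zero_or_pos k with rfl | hk1
      · exact Finset.mem_insert_self _ _
      rcases eq_or_lt_of_le (Nat.lt_succ_iff.mp hk2) with rfl | hkn
      · exact Finset.mem_insert_of_mem (Finset.mem_insert_self _ _)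
      -- now 1 ≤ k ≤ n
      obtain ⟨j, rfl⟩ : ∃ j, k = j + 1 := ⟨k - 1, by omega⟩
      have hjn : j < n + 1 := by omega
      have hj1n : j + 1 < n + 1 := by omega
      have hco : ((1 - Polynomial.X) * polyOf lam).coeff (j + 1) =
          (lam ⟨j + 1, hj1n⟩ - a) - (lam ⟨j, hjn⟩ - a) := by
        rw [sub_mul, one_mul, Polynomial.coeff_sub, Polynomial.coeff_X_mul,
          polyOf_coeff, polyOf_coeff, dif_pos hjn, dif_pos hj1n]
        ring
      -- bound
      have habs : ‖((1 - Polynomial.X) * polyOf lam).coeff (j + 1)‖ * r ^ (j + 1) ≤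
          ‖lam ⟨j + 1, hj1n⟩ - a‖ * r ^ (j + 1) +
          r * (‖lam ⟨j, hjn⟩ - a‖ * r ^ j) := by
        rw [hco]
        have := norm_sub_le (lam ⟨j + 1, hj1n⟩ - a) (lam ⟨j, hjn⟩ - a)
        calc ‖(lam ⟨j + 1, hj1n⟩ - a) - (lam ⟨j, hjn⟩ - a)‖ * r ^ (j + 1)
            ≤ (‖lam ⟨j + 1, hj1n⟩ - a‖ + ‖lam ⟨j, hjn⟩ - a‖) * r ^ (j + 1) := by
              apply mul_le_mul_of_nonneg_right this (le_of_lt (pow_pos hr _))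
          _ = ‖lam ⟨j + 1, hj1n⟩ - a‖ * r ^ (j + 1) +
              r * (‖lam ⟨j, hjn⟩ - a‖ * r ^ j) := by ring
      -- one of the indices is in B
      have hkey := key_disj δ r S _ _ _ hδ hr hSpos hkbig habs
      apply Finset.mem_insert_of_mem
      apply Finset.mem_insert_of_mem
      rcases hkey with h | h
      · apply Finset.mem_union_left
        have hmem : (⟨j + 1, hj1n⟩ : Fin (n + 1)) ∈ B := by
          rw [hBdef, Finset.mem_filter]; exact ⟨Finset.mem_univ _, h⟩
        exact Finset.mem_image_of_mem Fin.val hmem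
      · apply Finset.mem_union_right
        have hmem : (⟨j, hjn⟩ : Fin (n + 1)) ∈ B := by
          rw [hBdef, Finset.mem_filter]; exact ⟨Finset.mem_univ _, h⟩
        exact Finset.mem_image_of_mem g hmem
    calc T.card ≤ (insert 0 (insert (n + 1)
          (B.image (Fin.val) ∪ B.image g))).card :=
        Finset.card_le_card hsub
      _ ≤ 1 + (1 + (B.image (Fin.val) ∪ B.image g).card) := by
          refine le_trans (Finset.card_insert_le _ _) ?_
          exact by
            have := Finset.card_insert_le (n + 1)
              (B.image (Fin.val) ∪ B.image g)
            omega
      _ ≤ 1 + (1 + (B.card + B.card)) := by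
          have h1 := Finset.card_image_le (s := B) (f := Fin.val)
          have h2 := Finset.card_image_le (s := B) (f := g)
          have h3 := Finset.card_union_le (B.image (Fin.val)) (B.image g)
          omega
      _ ≤ 4 * m + 2 := by omega
end

section
/- There exists an absolute constant b > 0 such that the following holds. Let n ≥ 2 and m ≥ 1 be integers, r > 0, δ > 0, δ₁ > 0, and let I ⊂ ℝ be an interval of length 0 < |I| ≤ 2π. Let (λ_k^+)_{k=0}^n, (λ_k^-)_{k=0}^n be complex numbers and a ∈ ℂ with |λ_k^+ − λ_k^-| ≥ ½(|λ_k^+ − a| + |λ_k^- − a|) for every k. Let σ ∈ {+,−}^{n+1}, let U₁, U₂ ⊂ {0,…,n} be two distinct m-element subsets, and for j = 1,2 let σ^j be the sign sequence obtained from σ by flipping the signs σ_k for k ∈ U_j, and put P_j(z) = Σ_{k=0}^n λ_k^{σ^j_k} z^k. Suppose that for j = 1,2: S(r,P_j) > 0, |λ_k^{σ^j_k} − a| r^k ≥ δ S(r,P_j) for every k ∈ U_j, and max_{θ∈I} |P_j(r e^{iθ})| ≤ δ₁ S(r,P_j). Then δ₁ > ¼ δ (b|I|)^{2m−1}. -/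
set_option maxHeartbeats 1000000

open Real

/-- The sign sequence obtained from `σ` by flipping the signs at the indices in `U`. -/
def flipped {n : ℕ} (σ : Fin (n + 1) → Bool) (U : Finset (Fin (n + 1))) :
    Fin (n + 1) → Bool :=
  fun k => if k ∈ U then !σ k else σ k

/-- The coefficient vector chosen according to the sign sequence `τ`. -/
def coefOf {n : ℕ} (lamP lamM : Fin (n + 1) → ℂ) (τ : Fin (n + 1) → Bool) :
    Fin (n + 1) → ℂ :=
  fun k => if τ k then lamP k else lamM k

/-- `S(r,P) = ∑_k |λ_k| r^k`. -/
noncomputable def Sof {n : ℕ} (lam : Fin (n + 1) → ℂ) (r : ℝ) : ℝ :=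
  ∑ k : Fin (n + 1), ‖lam k‖ * r ^ (k : ℕ)

/-- The value `P(z) = ∑_k λ_k z^k`. -/
noncomputable def Pval {n : ℕ} (lam : Fin (n + 1) → ℂ) (z : ℂ) : ℂ :=
  ∑ k : Fin (n + 1), lam k * z ^ (k : ℕ)


section Helpers
open Finset

lemma u_le_exp (u : ℝ) : u ≤ Real.exp (u / Real.exp 1) := by
  have h := Real.add_one_le_exp (u / Real.exp 1 - 1)
  rw [Real.exp_sub] at h
  have hee : (0:ℝ) < Real.exp 1 := Real.exp_pos 1
  have h2 := mul_le_mul_of_nonneg_right h (le_of_lt hee)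
  calc u = (u / Real.exp 1 - 1 + 1) * Real.exp 1 := by field_simp; ring
    _ ≤ Real.exp (u / Real.exp 1) / Real.exp 1 * Real.exp 1 := h2
    _ = Real.exp (u / Real.exp 1) := by field_simp

lemma pow_le_exp_mul_factorial : ∀ a : ℕ, (a:ℝ)^a ≤ Real.exp a * (Nat.factorial a) := by
  intro a
  induction a with
  | zero => simp
  | succ a ih =>
    have h1 : ((a:ℝ)+1)^a ≤ Real.exp 1 * (a:ℝ)^a := by
      rcases Nat.eq_zero_or_pos a with h | h
      · subst h; simpa using Real.one_le_exp (by norm_num)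
      · have ha : (0:ℝ) < a := by exact_mod_cast h
        have h2 : (a:ℝ) + 1 = (a:ℝ) * (1 + 1/(a:ℝ)) := by field_simp
        rw [h2, mul_pow]
        have h3 : (1 + 1/(a:ℝ)) ≤ Real.exp (1/(a:ℝ)) := by
          have := Real.add_one_le_exp (1/(a:ℝ)); linarith
        have h4 : (1 + 1/(a:ℝ))^a ≤ Real.exp (1/(a:ℝ)) ^ a :=
          pow_le_pow_left₀ (by positivity) h3 a
        have h5 : Real.exp (1/(a:ℝ)) ^ a = Real.exp 1 := by
          rw [← Real.exp_nat_mul]; congr 1; field_simp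
        calc ((a:ℝ))^a * (1 + 1/(a:ℝ))^a ≤ (a:ℝ)^a * Real.exp 1 := by
              rw [h5] at h4
              exact mul_le_mul_of_nonneg_left h4 (by positivity)
          _ = Real.exp 1 * (a:ℝ)^a := by ring
    have hcast : ((a+1:ℕ):ℝ) = (a:ℝ)+1 := by push_cast; ring
    calc ((a+1:ℕ):ℝ)^(a+1) = ((a:ℝ)+1) * ((a:ℝ)+1)^a := by rw [hcast, pow_succ]; ring
      _ ≤ ((a:ℝ)+1) * (Real.exp 1 * (a:ℝ)^a) := by
          exact mul_le_mul_of_nonneg_left h1 (by positivity)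
      _ ≤ ((a:ℝ)+1) * (Real.exp 1 * (Real.exp a * (Nat.factorial a))) := by
          have := mul_le_mul_of_nonneg_left ih (le_of_lt (Real.exp_pos 1))
          exact mul_le_mul_of_nonneg_left this (by positivity)
      _ = Real.exp ((a:ℝ)+1) * (((a:ℝ)+1) * (Nat.factorial a)) := by
          rw [Real.exp_add]; ring
      _ = Real.exp ((a+1:ℕ):ℝ) * (Nat.factorial (a+1)) := by
          rw [hcast, Nat.factorial_succ]; push_cast; ring

lemma exp_const_bound : Real.exp (1 + 2 / Real.exp 1) ≤ 20 / π := by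
  have he : (2.7182818283:ℝ) < Real.exp 1 := Real.exp_one_gt_d9
  have he2 : Real.exp 1 < 2.7182818286 := Real.exp_one_lt_d9
  have h1 : 1 + 2 / Real.exp 1 ≤ 7/4 := by
    have : 2 / Real.exp 1 ≤ 3/4 := by
      rw [div_le_iff₀ (Real.exp_pos 1)]; nlinarith
    linarith
  have h2 : Real.exp (1 + 2 / Real.exp 1) ≤ Real.exp (7/4) := Real.exp_le_exp.2 h1
  have h3 : Real.exp (7/4) ^ 4 = Real.exp 7 := by
    rw [← Real.exp_nat_mul]; norm_num
  have h4 : Real.exp 7 = (Real.exp 1)^7 := by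
    rw [← Real.exp_nat_mul]; norm_num
  have hpi : π < 3.15 := Real.pi_lt_d2
  have hpi0 : (0:ℝ) < π := Real.pi_pos
  have h5 : Real.exp (7/4) ^ 4 < (20/π)^4 := by
    rw [h3, h4]
    have : (Real.exp 1)^7 < 2.7182818286^7 := by
      exact pow_lt_pow_left₀ he2 (le_of_lt (Real.exp_pos 1)) (by norm_num)
    have h6 : (20/3.15:ℝ)^4 ≤ (20/π)^4 := by
      apply pow_le_pow_left₀ (by norm_num)
      exact div_le_div_of_nonneg_left (by norm_num) hpi0 (le_of_lt hpi)
    nlinarith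
  have := lt_of_pow_lt_pow_left₀ 4 (by positivity) h5
  linarith

lemma sin_le_abs_exp_sub (x y : ℝ) :
    |Real.sin (x - y)| ≤ ‖Complex.exp (Complex.I * x) - Complex.exp (Complex.I * y)‖ := by
  have key : Complex.exp (Complex.I * x) - Complex.exp (Complex.I * y)
      = Complex.exp (Complex.I * y) * (Complex.exp (((x - y : ℝ) : ℂ) * Complex.I) - 1) := by
    rw [mul_sub, mul_one, ← Complex.exp_add]
    push_cast
    ring_nf
  rw [key, norm_mul]
  have h1 : ‖Complex.exp (Complex.I * y)‖ = 1 := by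
    rw [mul_comm]; exact Complex.norm_exp_ofReal_mul_I y
  rw [h1, one_mul]
  have h2 : (Complex.exp (((x - y : ℝ) : ℂ) * Complex.I) - 1).im = Real.sin (x - y) := by
    have := Complex.exp_ofReal_mul_I_im (x - y)
    push_cast at this ⊢
    simp [this]
  calc |Real.sin (x - y)| = |(Complex.exp (((x - y : ℝ) : ℂ) * Complex.I) - 1).im| := by rw [h2]
    _ ≤ _ := Complex.abs_im_le_norm _

/-- product over a finset of naturals not containing `0`, of a monotone nonneg function,
dominates the product over `1..card`. -/
lemma ranked_prod (h : ℕ → ℝ) (hmono : Monotone h) (hnn : ∀ i, 0 ≤ h i) :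
    ∀ (a : ℕ) (B : Finset ℕ), B.card = a → 0 ∉ B →
      ∏ i ∈ Finset.range a, h (i + 1) ≤ ∏ j ∈ B, h j := by
  intro a
  induction a with
  | zero => intro B hB _; rw [Finset.card_eq_zero.1 hB]; simp
  | succ a ih =>
    intro B hB h0
    have hne : B.Nonempty := Finset.card_pos.1 (by omega)
    set M := B.max' hne with hM
    have hMB : M ∈ B := B.max'_mem hne
    have hsub : B ⊆ Finset.Icc 1 M := by
      intro j hj
      refine Finset.mem_Icc.2 ⟨?_, B.le_max' j hj⟩
      rcases Nat.eq_zero_or_pos j with rfl | h; · exact absurd hj h0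
      · exact h
    have hcard : a + 1 ≤ M := by
      have := Finset.card_le_card hsub
      rwa [hB, Nat.card_Icc, Nat.add_sub_cancel] at this
    have hBer : (B.erase M).card = a := by rw [Finset.card_erase_of_mem hMB, hB]; omega
    have h0e : 0 ∉ B.erase M := fun h => h0 (Finset.mem_of_mem_erase h)
    have ihh := ih (B.erase M) hBer h0e
    rw [Finset.prod_range_succ, ← Finset.prod_erase_mul B h hMB]
    exact mul_le_mul ihh (hmono hcard) (hnn _) (Finset.prod_nonneg fun _ _ => hnn _)


lemma group_bound (N a : ℕ) (hN : 1 ≤ N) (ha : a ≤ N) (L : ℝ) (hL0 : 0 < L)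
    (hL : L ≤ 2 * π) :
    Real.exp (-(a:ℝ) - (N:ℝ) / Real.exp 1) * (L / (2*π))^a ≤
      ∏ i ∈ Finset.range a, min (((i:ℝ)+1) * (L / (π * N))) 1 := by
  have hpi : (0:ℝ) < π := Real.pi_pos
  have hNR : (0:ℝ) < (N:ℝ) := by exact_mod_cast hN
  set x : ℝ := L / (π * N) with hx
  have hx0 : 0 < x := by positivity
  have hL2pi : 0 < L / (2*π) := by positivity
  have hL2pi1 : L / (2*π) ≤ 1 := by
    rw [div_le_one (by positivity)]; linarith
  rcases Nat.eq_zero_or_pos a with rfl | hapos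
  · simp only [Finset.range_zero, Finset.prod_empty, pow_zero, mul_one, Nat.cast_zero,
      neg_zero, zero_sub]
    refine Real.exp_le_one_iff.2 ?_
    have : (0:ℝ) ≤ (N:ℝ)/Real.exp 1 := by positivity
    linarith
  have haR : (0:ℝ) < (a:ℝ) := by exact_mod_cast hapos
  set C : ℝ := min ((a:ℝ) * x) 1 with hC
  have hC0 : 0 < C := lt_min (by positivity) one_pos
  -- per-factor bound
  have hfac : ∀ i ∈ Finset.range a, ((i:ℝ)+1) * (C / (a:ℝ)) ≤ min (((i:ℝ)+1) * x) 1 := by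
    intro i hi
    have hi' : (i:ℝ) + 1 ≤ (a:ℝ) := by
      have := Finset.mem_range.1 hi; exact_mod_cast Nat.succ_le_of_lt this
    rcases le_or_gt ((a:ℝ) * x) 1 with h | h
    · have hCx : C = (a:ℝ) * x := min_eq_left h
      rw [hCx]
      have : ((i:ℝ)+1) * ((a:ℝ) * x / (a:ℝ)) = ((i:ℝ)+1) * x := by field_simp
      rw [this]
      refine le_min le_rfl (le_trans ?_ h)
      have : ((i:ℝ)+1) * x ≤ (a:ℝ) * x := mul_le_mul_of_nonneg_right hi' (le_of_lt hx0)
      linarith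
    · have hCx : C = 1 := min_eq_right (le_of_lt h)
      rw [hCx]
      have hxa : 1 / (a:ℝ) ≤ x := by
        rw [div_le_iff₀ haR]; nlinarith
      have h1 : ((i:ℝ)+1) * (1 / (a:ℝ)) ≤ ((i:ℝ)+1) * x :=
        mul_le_mul_of_nonneg_left hxa (by positivity)
      have h2 : ((i:ℝ)+1) * (1 / (a:ℝ)) ≤ 1 := by
        have := mul_le_mul_of_nonneg_right hi' (le_of_lt (one_div_pos.2 haR))
        calc ((i:ℝ)+1) * (1 / (a:ℝ)) ≤ (a:ℝ) * (1/(a:ℝ)) := this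
          _ = 1 := by field_simp
      exact le_min h1 h2
  have hprod : ∏ i ∈ Finset.range a, (((i:ℝ)+1) * (C / (a:ℝ))) ≤
      ∏ i ∈ Finset.range a, min (((i:ℝ)+1) * x) 1 := by
    refine Finset.prod_le_prod (fun i _ => by positivity) hfac
  -- compute LHS product
  have hfact : (∏ i ∈ Finset.range a, ((i:ℝ)+1)) = (Nat.factorial a : ℝ) := by
    rw [← Finset.prod_range_add_one_eq_factorial]; push_cast; rfl
  have hsplit : ∏ i ∈ Finset.range a, (((i:ℝ)+1) * (C / (a:ℝ)))
      = (Nat.factorial a : ℝ) * (C / (a:ℝ))^a := by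
    rw [Finset.prod_mul_distrib, hfact, Finset.prod_const, Finset.card_range]
  -- factorial lower bound
  have hfa : Real.exp (-(a:ℝ)) * (a:ℝ)^a ≤ (Nat.factorial a : ℝ) := by
    have h := pow_le_exp_mul_factorial a
    have := mul_le_mul_of_nonneg_left h (le_of_lt (Real.exp_pos (-(a:ℝ))))
    calc Real.exp (-(a:ℝ)) * (a:ℝ)^a ≤ Real.exp (-(a:ℝ)) * (Real.exp a * (Nat.factorial a)) := this
      _ = (Nat.factorial a : ℝ) := by rw [← mul_assoc, ← Real.exp_add]; simp
  -- C^a lower bound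
  have hCa : Real.exp (-(N:ℝ) / Real.exp 1) * (L / (2*π))^a ≤ C^a := by
    rcases le_or_gt ((a:ℝ) * x) 1 with h | h
    · -- C = a x ; (a x)^a = (2a/N)^a (L/2π)^a ≥ exp(-N/e) (L/2π)^a
      have hCx : C = (a:ℝ) * x := min_eq_left h
      have key : Real.exp (-(N:ℝ) / Real.exp 1) ≤ ((a:ℝ)/(N:ℝ))^a := by
        have h1 : (N:ℝ)/(a:ℝ) ≤ Real.exp ((N:ℝ)/(a:ℝ) / Real.exp 1) := u_le_exp _
        have h2 : Real.exp (-((N:ℝ)/(a:ℝ) / Real.exp 1)) ≤ (a:ℝ)/(N:ℝ) := by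
          rw [Real.exp_neg]
          have hpos : (0:ℝ) < (N:ℝ)/(a:ℝ) := by positivity
          have := inv_anti₀ hpos h1
          rwa [inv_div] at this
        have h3 := pow_le_pow_left₀ (le_of_lt (Real.exp_pos _)) h2 a
        rw [← Real.exp_nat_mul] at h3
        have : (a:ℝ) * -((N:ℝ)/(a:ℝ) / Real.exp 1) = -(N:ℝ) / Real.exp 1 := by
          field_simp
        rwa [this] at h3
      have heq : ((a:ℝ) * x)^a = ((a:ℝ)/(N:ℝ))^a * 2^a * (L/(2*π))^a := by
        rw [← mul_pow, ← mul_pow]; congr 1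
        rw [hx]; field_simp
      rw [hCx, heq]
      have h4 : Real.exp (-(N:ℝ) / Real.exp 1) * (L / (2*π))^a ≤
          ((a:ℝ)/(N:ℝ))^a * (L/(2*π))^a :=
        mul_le_mul_of_nonneg_right key (by positivity)
      calc Real.exp (-(N:ℝ) / Real.exp 1) * (L / (2*π))^a ≤ ((a:ℝ)/(N:ℝ))^a * (L/(2*π))^a := h4
        _ ≤ ((a:ℝ)/(N:ℝ))^a * 2^a * (L/(2*π))^a := by
            have h1 : (1:ℝ) ≤ 2^a := by exact_mod_cast Nat.one_le_two_pow (n := a)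
            have h0 : (0:ℝ) ≤ ((a:ℝ)/(N:ℝ))^a * (L/(2*π))^a := by positivity
            nlinarith [mul_le_mul_of_nonneg_left h1 h0]
    · have hCx : C = 1 := min_eq_right (le_of_lt h)
      rw [hCx, one_pow]
      calc Real.exp (-(N:ℝ) / Real.exp 1) * (L / (2*π))^a ≤ 1 * 1 := by
            refine mul_le_mul ?_ (pow_le_one₀ (le_of_lt hL2pi) hL2pi1) (by positivity) one_pos.le
            refine Real.exp_le_one_iff.2 ?_
            have : (0:ℝ) ≤ (N:ℝ)/Real.exp 1 := by positivity
            rw [neg_div]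
            linarith
        _ = 1 := by ring
  -- assemble
  have hmain : Real.exp (-(a:ℝ) - (N:ℝ) / Real.exp 1) * (L / (2*π))^a ≤
      (Nat.factorial a : ℝ) * (C / (a:ℝ))^a := by
    have hCdiv : (Nat.factorial a : ℝ) * (C / (a:ℝ))^a ≥
        (Real.exp (-(a:ℝ)) * (a:ℝ)^a) * (C / (a:ℝ))^a :=
      mul_le_mul_of_nonneg_right hfa (by positivity)
    have heq2 : (Real.exp (-(a:ℝ)) * (a:ℝ)^a) * (C / (a:ℝ))^a = Real.exp (-(a:ℝ)) * C^a := by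
      rw [mul_assoc, ← mul_pow]
      congr 2
      field_simp
    rw [heq2] at hCdiv
    refine le_trans ?_ hCdiv
    have := mul_le_mul_of_nonneg_left hCa (le_of_lt (Real.exp_pos (-(a:ℝ))))
    calc Real.exp (-(a:ℝ) - (N:ℝ) / Real.exp 1) * (L / (2*π))^a
        = Real.exp (-(a:ℝ)) * (Real.exp (-(N:ℝ) / Real.exp 1) * (L / (2*π))^a) := by
          rw [← mul_assoc, ← Real.exp_add]; ring_nf
      _ ≤ Real.exp (-(a:ℝ)) * C^a := this
  calc Real.exp (-(a:ℝ) - (N:ℝ) / Real.exp 1) * (L / (2*π))^a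
      ≤ (Nat.factorial a : ℝ) * (C / (a:ℝ))^a := hmain
    _ = ∏ i ∈ Finset.range a, (((i:ℝ)+1) * (C / (a:ℝ))) := hsplit.symm
    _ ≤ _ := hprod

lemma kill {n : ℕ} (r : ℝ) (hr : 0 < r) (kstar : Fin (n+1)) (s : Fin (n+1) → ℝ)
    (hs : ∀ k, 0 ≤ s k) :
    ∀ (T : Finset (Fin (n+1))), kstar ∉ T → ∀ (c : Fin (n+1) → ℂ) (α β M : ℝ),
      (∀ k, k ≠ kstar → k ∉ T → c k = 0) →
      (∑ k ∈ T, s k) ≤ β - α →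
      (∀ θ ∈ Set.Icc α β, ‖∑ k : Fin (n+1),
          c k * ((r:ℂ) * Complex.exp (Complex.I * (θ:ℂ)))^(k:ℕ)‖ ≤ M) →
      ‖c kstar‖ * r^(kstar:ℕ) *
        ∏ k ∈ T, ‖Complex.exp (Complex.I * ((kstar:ℕ):ℂ) * ((s k : ℝ):ℂ))
          - Complex.exp (Complex.I * ((k:ℕ):ℂ) * ((s k : ℝ):ℂ))‖ ≤ 2^T.card * M := by
  intro T
  induction T using Finset.induction with
  | empty =>
    intro _ c α β M hc hsum hbd
    have hβ : α ≤ β := by simp at hsum; linarith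
    have h1 := hbd α ⟨le_refl α, hβ⟩
    have h2 : (∑ k : Fin (n+1), c k * ((r:ℂ) * Complex.exp (Complex.I * (α:ℂ)))^(k:ℕ))
        = c kstar * ((r:ℂ) * Complex.exp (Complex.I * (α:ℂ)))^(kstar:ℕ) := by
      apply Finset.sum_eq_single
      · intro k _ hk
        rw [hc k hk (Finset.notMem_empty k), zero_mul]
      · intro h; exact absurd (Finset.mem_univ kstar) h
    rw [h2] at h1
    rw [norm_mul, norm_pow, norm_mul, Complex.norm_real, Real.norm_eq_abs, abs_of_pos hr, mul_comm Complex.I,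
      Complex.norm_exp_ofReal_mul_I, mul_one] at h1
    simpa using h1
  | @insert k₀ T' hk₀ ih =>
    intro hks c α β M hc hsum hbd
    have hkstar' : kstar ∉ T' := fun h => hks (Finset.mem_insert_of_mem h)
    have hkk₀ : kstar ≠ k₀ := fun h => hks (h ▸ Finset.mem_insert_self k₀ T')
    set s₀ := s k₀ with hs₀
    set c' : Fin (n+1) → ℂ := fun k =>
      c k * (Complex.exp (Complex.I * ((k:ℕ):ℂ) * ((s₀ : ℝ):ℂ))
        - Complex.exp (Complex.I * ((k₀:ℕ):ℂ) * ((s₀ : ℝ):ℂ))) with hc'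
    have hsum' : (∑ k ∈ T', s k) ≤ (β - s₀) - α := by
      rw [Finset.sum_insert hk₀] at hsum; linarith
    have hc'0 : ∀ k, k ≠ kstar → k ∉ T' → c' k = 0 := by
      intro k hk hkT
      by_cases h : k = k₀
      · subst h; show c k * _ = 0; simp
      · have hne : k ∉ insert k₀ T' := by
          simp [Finset.mem_insert, h, hkT]
        show c k * _ = 0
        rw [hc k hk hne, zero_mul]
    have hbd' : ∀ θ ∈ Set.Icc α (β - s₀), ‖∑ k : Fin (n+1),
        c' k * ((r:ℂ) * Complex.exp (Complex.I * (θ:ℂ)))^(k:ℕ)‖ ≤ 2 * M := by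
      intro θ hθ
      obtain ⟨hθ1, hθ2⟩ := hθ
      have hsplit : (∑ k : Fin (n+1), c' k * ((r:ℂ) * Complex.exp (Complex.I * (θ:ℂ)))^(k:ℕ))
          = (∑ k : Fin (n+1), c k * ((r:ℂ) * Complex.exp (Complex.I * ((θ + s₀ : ℝ):ℂ)))^(k:ℕ))
            - Complex.exp (Complex.I * ((k₀:ℕ):ℂ) * ((s₀ : ℝ):ℂ)) *
              (∑ k : Fin (n+1), c k * ((r:ℂ) * Complex.exp (Complex.I * (θ:ℂ)))^(k:ℕ)) := by
        rw [Finset.mul_sum, ← Finset.sum_sub_distrib]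
        apply Finset.sum_congr rfl
        intro k _
        have hW : ((r:ℂ) * Complex.exp (Complex.I * ((θ + s₀ : ℝ):ℂ)))^(k:ℕ)
            = ((r:ℂ) * Complex.exp (Complex.I * (θ:ℂ)))^(k:ℕ)
              * Complex.exp (Complex.I * ((k:ℕ):ℂ) * ((s₀ : ℝ):ℂ)) := by
          have h1 : ((θ + s₀ : ℝ):ℂ) = (θ:ℂ) + (s₀:ℂ) := by push_cast; ring
          rw [h1, mul_add, Complex.exp_add, ← mul_assoc, mul_pow, ← Complex.exp_nat_mul]
          rw [show ((k:ℕ):ℂ) * (Complex.I * ((s₀:ℝ):ℂ)) = Complex.I * ((k:ℕ):ℂ) * ((s₀:ℝ):ℂ) by ring]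
        simp only [hc']
        rw [hW]
        ring
      rw [hsplit]
      have hb1 := hbd (θ + s₀) ⟨by linarith [hs k₀], by linarith⟩
      have hb2 := hbd θ ⟨hθ1, by linarith [hs k₀]⟩
      calc ‖_‖ ≤ ‖∑ k : Fin (n+1),
              c k * ((r:ℂ) * Complex.exp (Complex.I * ((θ + s₀ : ℝ):ℂ)))^(k:ℕ)‖
            + ‖Complex.exp (Complex.I * ((k₀:ℕ):ℂ) * ((s₀ : ℝ):ℂ)) *
              (∑ k : Fin (n+1), c k * ((r:ℂ) * Complex.exp (Complex.I * (θ:ℂ)))^(k:ℕ))‖ :=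
            norm_sub_le _ _
        _ ≤ M + M := by
            rw [norm_mul]
            have habs1 : ‖Complex.exp (Complex.I * ((k₀:ℕ):ℂ) * ((s₀ : ℝ):ℂ))‖ = 1 := by
              rw [mul_assoc, mul_comm Complex.I]
              rw [show ((k₀:ℕ):ℂ) * ((s₀:ℝ):ℂ) * Complex.I = (((k₀:ℕ) * s₀ : ℝ):ℂ) * Complex.I by push_cast; ring]
              exact Complex.norm_exp_ofReal_mul_I _
            rw [habs1, one_mul]
            exact add_le_add hb1 hb2
        _ = 2 * M := by ring
    have ihh := ih hkstar' c' α (β - s₀) (2*M) hc'0 hsum' hbd'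
    have hckstar : ‖c' kstar‖ = ‖c kstar‖ *
        ‖Complex.exp (Complex.I * ((kstar:ℕ):ℂ) * ((s₀ : ℝ):ℂ))
          - Complex.exp (Complex.I * ((k₀:ℕ):ℂ) * ((s₀ : ℝ):ℂ))‖ := by
      simp only [hc', norm_mul]
    rw [Finset.prod_insert hk₀, Finset.card_insert_of_notMem hk₀]
    rw [hckstar] at ihh
    calc ‖c kstar‖ * r^(kstar:ℕ) *
          (‖Complex.exp (Complex.I * ((kstar:ℕ):ℂ) * ((s k₀ : ℝ):ℂ))
            - Complex.exp (Complex.I * ((k₀:ℕ):ℂ) * ((s k₀ : ℝ):ℂ))‖ *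
           ∏ k ∈ T', ‖Complex.exp (Complex.I * ((kstar:ℕ):ℂ) * ((s k : ℝ):ℂ))
            - Complex.exp (Complex.I * ((k:ℕ):ℂ) * ((s k : ℝ):ℂ))‖)
        = ‖c kstar‖ *
            ‖Complex.exp (Complex.I * ((kstar:ℕ):ℂ) * ((s₀ : ℝ):ℂ))
              - Complex.exp (Complex.I * ((k₀:ℕ):ℂ) * ((s₀ : ℝ):ℂ))‖ * r^(kstar:ℕ) *
           ∏ k ∈ T', ‖Complex.exp (Complex.I * ((kstar:ℕ):ℂ) * ((s k : ℝ):ℂ))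
            - Complex.exp (Complex.I * ((k:ℕ):ℂ) * ((s k : ℝ):ℂ))‖ := by rw [hs₀]; ring
      _ ≤ 2^T'.card * (2*M) := ihh
      _ = 2^(T'.card + 1) * M := by ring
lemma group_prod {ι : Type*} [DecidableEq ι] (A : Finset ι) (d : ι → ℕ) (x : ℝ) (hx : 0 ≤ x)
    (hinj : ∀ k ∈ A, ∀ k' ∈ A, d k = d k' → k = k') (hd1 : ∀ k ∈ A, 1 ≤ d k) :
    ∏ i ∈ Finset.range A.card, min (((i:ℝ)+1) * x) 1 ≤ ∏ k ∈ A, min ((d k : ℝ) * x) 1 := by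
  have hmono : Monotone (fun j : ℕ => min ((j:ℝ)*x) 1) := by
    intro i j hij
    exact min_le_min (mul_le_mul_of_nonneg_right (by exact_mod_cast hij) hx) le_rfl
  have hnn : ∀ j : ℕ, 0 ≤ min ((j:ℝ)*x) 1 := fun j => le_min (by positivity) zero_le_one
  have himg : ∏ k ∈ A, min ((d k:ℝ)*x) 1 = ∏ j ∈ A.image d, min ((j:ℝ)*x) 1 := by
    rw [Finset.prod_image hinj]
  have hcard : (A.image d).card = A.card := Finset.card_image_of_injOn fun k hk k' hk' h =>
    hinj k hk k' hk' h
  have h0 : 0 ∉ A.image d := by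
    intro h
    obtain ⟨k, hk, hk0⟩ := Finset.mem_image.1 h
    have := hd1 k hk; omega
  have := ranked_prod (fun j : ℕ => min ((j:ℝ)*x) 1) hmono hnn A.card (A.image d) hcard h0
  rw [himg]
  refine le_trans (le_of_eq ?_) this
  apply Finset.prod_congr rfl
  intro i _
  push_cast
  rfl

lemma key {n m : ℕ} (hm : 1 ≤ m) (r δ δ₁ : ℝ) (hr : 0 < r) (hδ : 0 < δ) (hδ₁ : 0 < δ₁)
    (α β : ℝ) (hαβ : α < β) (hlen : β - α ≤ 2 * π)
    (lamP lamM : Fin (n+1) → ℂ) (a : ℂ)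
    (hlam : ∀ k, (1/2) * (‖lamP k - a‖ + ‖lamM k - a‖) ≤
      ‖lamP k - lamM k‖)
    (σ : Fin (n+1) → Bool) (U₁ U₂ : Finset (Fin (n+1)))
    (hU₁ : U₁.card = m) (hU₂ : U₂.card = m) (hne : U₁ ≠ U₂)
    (hS₁ : 0 < Sof (coefOf lamP lamM (flipped σ U₁)) r)
    (hord : Sof (coefOf lamP lamM (flipped σ U₂)) r ≤ Sof (coefOf lamP lamM (flipped σ U₁)) r)
    (hδU₁ : ∀ k ∈ U₁, δ * Sof (coefOf lamP lamM (flipped σ U₁)) r ≤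
      ‖coefOf lamP lamM (flipped σ U₁) k - a‖ * r ^ (k : ℕ))
    (hmax1 : ∀ θ ∈ Set.Icc α β,
      ‖Pval (coefOf lamP lamM (flipped σ U₁))
          ((r : ℂ) * Complex.exp (Complex.I * (θ : ℂ)))‖ ≤
        δ₁ * Sof (coefOf lamP lamM (flipped σ U₁)) r)
    (hmax2 : ∀ θ ∈ Set.Icc α β,
      ‖Pval (coefOf lamP lamM (flipped σ U₂))
          ((r : ℂ) * Complex.exp (Complex.I * (θ : ℂ)))‖ ≤
        δ₁ * Sof (coefOf lamP lamM (flipped σ U₂)) r) :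
    (1/4) * δ * ((β - α)/80) ^ (2*m - 1) ≤ δ₁ := by
  classical
  set lam1 := coefOf lamP lamM (flipped σ U₁) with hlam1
  set lam2 := coefOf lamP lamM (flipped σ U₂) with hlam2
  set S₁ := Sof lam1 r with hS1def
  set S₂ := Sof lam2 r with hS2def
  set L := β - α with hLdef
  have hL0 : 0 < L := by simp [hLdef]; linarith
  have hpi : (0:ℝ) < π := Real.pi_pos
  -- the symmetric difference and the distinguished index
  set Δ : Finset (Fin (n+1)) := (U₁ \ U₂) ∪ (U₂ \ U₁) with hΔdef
  have hd1ne : (U₁ \ U₂).Nonempty := by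
    rw [Finset.sdiff_nonempty]
    intro hsub
    exact hne (Finset.eq_of_subset_of_card_le hsub (by rw [hU₁, hU₂]))
  have hd2ne : (U₂ \ U₁).Nonempty := by
    rw [Finset.sdiff_nonempty]
    intro hsub
    exact hne (Finset.eq_of_subset_of_card_le hsub (by rw [hU₁, hU₂])).symm
  obtain ⟨kstar, hkstar⟩ := hd1ne
  obtain ⟨hk1, hk2⟩ := Finset.mem_sdiff.1 hkstar
  have hkΔ : kstar ∈ Δ := Finset.mem_union_left _ hkstar
  set T : Finset (Fin (n+1)) := Δ.erase kstar with hTdef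
  set N := T.card with hNdef
  have hkT : kstar ∉ T := Finset.notMem_erase _ _
  have hΔcard : Δ.card = N + 1 := by
    rw [hNdef, hTdef, Finset.card_erase_of_mem hkΔ]
    have : 1 ≤ Δ.card := Finset.card_pos.2 ⟨kstar, hkΔ⟩
    omega
  have hΔle : Δ.card ≤ 2 * m := by
    calc Δ.card ≤ (U₁ \ U₂).card + (U₂ \ U₁).card := Finset.card_union_le _ _
      _ ≤ U₁.card + U₂.card := by
          exact add_le_add (Finset.card_le_card Finset.sdiff_subset)
            (Finset.card_le_card Finset.sdiff_subset)
      _ = 2 * m := by rw [hU₁, hU₂]; ring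
  have hN1 : 1 ≤ N := by
    obtain ⟨k₂, hk₂⟩ := hd2ne
    obtain ⟨hk₂2, hk₂1⟩ := Finset.mem_sdiff.1 hk₂
    have hnekk : kstar ≠ k₂ := fun h => hk₂1 (h ▸ hk1)
    have hpair : ({kstar, k₂} : Finset (Fin (n+1))) ⊆ Δ := by
      intro z hz
      rcases Finset.mem_insert.1 hz with rfl | hz
      · exact hkΔ
      · rw [Finset.mem_singleton.1 hz]
        exact Finset.mem_union_right _ hk₂
    have : 2 ≤ Δ.card := by
      calc 2 = ({kstar, k₂} : Finset (Fin (n+1))).card := (Finset.card_pair hnekk).symm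
        _ ≤ Δ.card := Finset.card_le_card hpair
    omega
  have hNle : N ≤ 2 * m - 1 := by omega
  have hNR : (0:ℝ) < (N:ℝ) := by exact_mod_cast hN1
  -- coefficients of the difference polynomial
  set c : Fin (n+1) → ℂ := fun k => lam1 k - lam2 k with hcdef
  have hc0 : ∀ k, k ≠ kstar → k ∉ T → c k = 0 := by
    intro k hk hkT'
    have hkΔ2 : k ∉ Δ := fun hkin => hkT' (Finset.mem_erase.2 ⟨hk, hkin⟩)
    have h12 : (k ∈ U₁ ↔ k ∈ U₂) := by
      constructor
      · intro h1; by_contra h2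
        exact hkΔ2 (Finset.mem_union_left _ (Finset.mem_sdiff.2 ⟨h1, h2⟩))
      · intro h2; by_contra h1
        exact hkΔ2 (Finset.mem_union_right _ (Finset.mem_sdiff.2 ⟨h2, h1⟩))
    have hfl : flipped σ U₁ k = flipped σ U₂ k := by
      unfold flipped
      by_cases h1 : k ∈ U₁
      · rw [if_pos h1, if_pos (h12.1 h1)]
      · rw [if_neg h1, if_neg (fun h2 => h1 (h12.2 h2))]
    show lam1 k - lam2 k = 0
    rw [hlam1, hlam2]
    unfold coefOf
    rw [hfl, sub_self]
  -- lower bound for the key coefficient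
  have hf1 : flipped σ U₁ kstar = !σ kstar := by unfold flipped; rw [if_pos hk1]
  have hf2 : flipped σ U₂ kstar = σ kstar := by unfold flipped; rw [if_neg hk2]
  have hv : (lam1 kstar = lamP kstar ∧ lam2 kstar = lamM kstar) ∨
            (lam1 kstar = lamM kstar ∧ lam2 kstar = lamP kstar) := by
    have e1 : lam1 kstar = if !σ kstar then lamP kstar else lamM kstar := by
      rw [hlam1]; unfold coefOf; rw [hf1]
    have e2 : lam2 kstar = if σ kstar then lamP kstar else lamM kstar := by
      rw [hlam2]; unfold coefOf; rw [hf2]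
    cases hσ : σ kstar
    · left; rw [hσ] at e1 e2; simp at e1 e2; exact ⟨e1, e2⟩
    · right; rw [hσ] at e1 e2; simp at e1 e2; exact ⟨e1, e2⟩
  have habs : ‖c kstar‖ = ‖lamP kstar - lamM kstar‖ := by
    rcases hv with ⟨h1, h2⟩ | ⟨h1, h2⟩
    · show ‖lam1 kstar - lam2 kstar‖ = _
      rw [h1, h2]
    · show ‖lam1 kstar - lam2 kstar‖ = _
      rw [h1, h2]
      exact norm_sub_rev _ _
  have hckey : δ * S₁ ≤ 2 * (‖c kstar‖ * r^(kstar:ℕ)) := by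
    have hup : ‖lam1 kstar - a‖ ≤ 2 * ‖lamP kstar - lamM kstar‖ := by
      have h := hlam kstar
      have t1 : (0:ℝ) ≤ ‖lamM kstar - a‖ := norm_nonneg _
      have t2 : (0:ℝ) ≤ ‖lamP kstar - a‖ := norm_nonneg _
      rcases hv with ⟨h1, _⟩ | ⟨h1, _⟩ <;> rw [h1] <;> linarith
    have hrk : (0:ℝ) ≤ r^(kstar:ℕ) := by positivity
    calc δ * S₁ ≤ ‖lam1 kstar - a‖ * r^(kstar:ℕ) := hδU₁ kstar hk1
      _ ≤ 2 * ‖lamP kstar - lamM kstar‖ * r^(kstar:ℕ) :=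
          mul_le_mul_of_nonneg_right hup hrk
      _ = 2 * (‖c kstar‖ * r^(kstar:ℕ)) := by rw [habs]; ring
  -- the sup bound for the difference
  have hbd : ∀ θ ∈ Set.Icc α β, ‖∑ k : Fin (n+1),
      c k * ((r:ℂ) * Complex.exp (Complex.I * (θ:ℂ)))^(k:ℕ)‖ ≤ 2 * (δ₁ * S₁) := by
    intro θ hθ
    have hsplit : (∑ k : Fin (n+1), c k * ((r:ℂ) * Complex.exp (Complex.I * (θ:ℂ)))^(k:ℕ))
        = Pval lam1 ((r:ℂ) * Complex.exp (Complex.I * (θ:ℂ)))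
          - Pval lam2 ((r:ℂ) * Complex.exp (Complex.I * (θ:ℂ))) := by
      unfold Pval
      rw [← Finset.sum_sub_distrib]
      apply Finset.sum_congr rfl
      intro k _
      show (lam1 k - lam2 k) * _ = _
      ring
    rw [hsplit]
    calc ‖_‖ ≤ ‖Pval lam1 ((r:ℂ) * Complex.exp (Complex.I * (θ:ℂ)))‖
          + ‖Pval lam2 ((r:ℂ) * Complex.exp (Complex.I * (θ:ℂ)))‖ :=
        norm_sub_le _ _
      _ ≤ δ₁ * S₁ + δ₁ * S₂ := add_le_add (hmax1 θ hθ) (hmax2 θ hθ)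
      _ ≤ 2 * (δ₁ * S₁) := by nlinarith
  -- the shifts
  set x : ℝ := L / (π * N) with hxdef
  have hx0 : 0 < x := by positivity
  set d : Fin (n+1) → ℕ := fun k => Nat.dist (k:ℕ) (kstar:ℕ) with hddef
  set s : Fin (n+1) → ℝ := fun k => if ((d k:ℝ)) * x ≤ 1 then L/(2*N) else π/(2*(d k)) with hsdef
  have hs0 : ∀ k, 0 ≤ s k := by
    intro k
    show (0:ℝ) ≤ if _ then _ else _
    split <;> positivity
  have hd1 : ∀ k, k ≠ kstar → 1 ≤ d k := by
    intro k hk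
    have : (k:ℕ) ≠ (kstar:ℕ) := fun h => hk (Fin.ext h)
    show 1 ≤ Nat.dist (k:ℕ) (kstar:ℕ)
    simp [Nat.dist]
    omega
  have hsle : ∀ k, k ≠ kstar → s k ≤ L/(2*N) := by
    intro k hk
    show (if ((d k:ℝ)) * x ≤ 1 then L/(2*N) else π/(2*(d k))) ≤ L/(2*N)
    split
    · exact le_rfl
    · rename_i h
      push_neg at h
      have hdk : (1:ℝ) ≤ (d k : ℝ) := by exact_mod_cast hd1 k hk
      have hdk0 : (0:ℝ) < (d k : ℝ) := by linarith
      rw [div_le_div_iff₀ (by positivity) (by positivity)]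
      have h2 : π * (N:ℝ) < (d k : ℝ) * L := by
        have h3 : (1:ℝ) * (π * (N:ℝ)) < ((d k:ℝ) * x) * (π * (N:ℝ)) :=
          mul_lt_mul_of_pos_right h (by positivity)
        have h4 : ((d k:ℝ) * x) * (π * (N:ℝ)) = (d k:ℝ) * L := by
          rw [hxdef, mul_assoc, div_mul_cancel₀ _ (ne_of_gt (by positivity : (0:ℝ) < π * (N:ℝ)))]
        linarith [h3, h4.le, h4.ge]
      nlinarith
  have hsum : (∑ k ∈ T, s k) ≤ β - α := by
    have h1 : (∑ k ∈ T, s k) ≤ ∑ _k ∈ T, L/(2*N) := by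
      apply Finset.sum_le_sum
      intro k hk
      exact hsle k (Finset.ne_of_mem_erase hk)
    rw [Finset.sum_const, nsmul_eq_mul] at h1
    have h2 : (T.card : ℝ) * (L/(2*N)) = L/2 := by
      rw [← hNdef, mul_div_assoc']
      rw [show (N:ℝ) * L / (2 * N) = L/2 * ((N:ℝ)/(N:ℝ)) by ring, div_self (ne_of_gt hNR)]
      ring
    rw [h2] at h1
    have : L/2 ≤ L := by linarith
    rw [hLdef] at this
    linarith
  -- factor lower bounds
  have hfactor : ∀ k ∈ T, min ((d k:ℝ) * x) 1 ≤
      ‖Complex.exp (Complex.I * ((kstar:ℕ):ℂ) * ((s k : ℝ):ℂ))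
        - Complex.exp (Complex.I * ((k:ℕ):ℂ) * ((s k : ℝ):ℂ))‖ := by
    intro k hk
    have hkne : k ≠ kstar := Finset.ne_of_mem_erase hk
    have hd : 1 ≤ d k := hd1 k hkne
    have hdR : (1:ℝ) ≤ (d k:ℝ) := by exact_mod_cast hd
    have hre : ∀ (j : ℕ), Complex.I * ((j:ℕ):ℂ) * ((s k : ℝ):ℂ)
        = Complex.I * (((j * s k : ℝ)):ℂ) := by
      intro j; push_cast; ring
    rw [hre (kstar:ℕ), hre (k:ℕ)]
    have hsin := sin_le_abs_exp_sub (((kstar:ℕ):ℝ) * s k) (((k:ℕ):ℝ) * s k)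
    refine le_trans ?_ hsin
    have hsabs : |Real.sin (((kstar:ℕ):ℝ) * s k - ((k:ℕ):ℝ) * s k)|
        = |Real.sin ((d k:ℝ) * s k)| := by
      rcases le_total (k:ℕ) (kstar:ℕ) with hle | hle
      · have hdk : (d k : ℝ) = ((kstar:ℕ):ℝ) - ((k:ℕ):ℝ) := by
          have h1 : d k = (kstar:ℕ) - (k:ℕ) := by
            show Nat.dist _ _ = _; simp [Nat.dist]; omega
          rw [h1]; push_cast [hle]; ring
        rw [hdk, sub_mul]
      · have hdk : (d k : ℝ) = ((k:ℕ):ℝ) - ((kstar:ℕ):ℝ) := by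
          have h1 : d k = (k:ℕ) - (kstar:ℕ) := by
            show Nat.dist _ _ = _; simp [Nat.dist]; omega
          rw [h1]; push_cast [hle]; ring
        rw [hdk, sub_mul,
          show ((k:ℕ):ℝ) * s k - ((kstar:ℕ):ℝ) * s k
            = -(((kstar:ℕ):ℝ) * s k - ((k:ℕ):ℝ) * s k) by ring,
          Real.sin_neg, abs_neg]
    rw [hsabs]
    refine le_trans ?_ (le_abs_self _)
    by_cases hcase : (d k:ℝ) * x ≤ 1
    · have hsk : s k = L/(2*N) := by
        show (if ((d k:ℝ)) * x ≤ 1 then L/(2*N) else π/(2*(d k))) = L/(2*N)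
        rw [if_pos hcase]
      have harg2 : (d k:ℝ) * s k = (π/2) * ((d k:ℝ) * x) := by
        rw [hsk, hxdef]
        field_simp
      have h0 : 0 ≤ (d k:ℝ) * s k := by rw [hsk]; positivity
      have hπ2 : (d k:ℝ) * s k ≤ π/2 := by
        rw [harg2]
        nlinarith [mul_le_mul_of_nonneg_left hcase (le_of_lt (by positivity : (0:ℝ) < π/2))]
      have hms := Real.mul_le_sin h0 hπ2
      rw [min_eq_left hcase]
      calc (d k:ℝ)*x = (2/π) * ((d k:ℝ)*s k) := by
            rw [harg2, show (2/π) * (π/2 * ((d k:ℝ)*x)) = (π/π) * ((d k:ℝ)*x) by ring,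
              div_self (ne_of_gt hpi), one_mul]
        _ ≤ Real.sin ((d k:ℝ)*s k) := hms
    · push_neg at hcase
      have hsk : s k = π/(2*(d k)) := by
        show (if ((d k:ℝ)) * x ≤ 1 then L/(2*N) else π/(2*(d k))) = π/(2*(d k))
        rw [if_neg (not_le.2 hcase)]
      have hdpos : (0:ℝ) < (d k:ℝ) := by linarith
      have harg2 : (d k:ℝ) * s k = π/2 := by
        rw [hsk]
        field_simp
      rw [harg2, Real.sin_pi_div_two, min_eq_right (le_of_lt hcase)]
  have hprodmin : ∏ k ∈ T, min ((d k:ℝ)*x) 1 ≤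
      ∏ k ∈ T, ‖Complex.exp (Complex.I * ((kstar:ℕ):ℂ) * ((s k : ℝ):ℂ))
        - Complex.exp (Complex.I * ((k:ℕ):ℂ) * ((s k : ℝ):ℂ))‖ :=
    Finset.prod_le_prod (fun k _ => le_min (by positivity) zero_le_one) hfactor
  -- split into the two monotone groups
  set Tp := T.filter (fun k : Fin (n+1) => (kstar:ℕ) < (k:ℕ)) with hTp
  set Tm := T.filter (fun k : Fin (n+1) => ¬ (kstar:ℕ) < (k:ℕ)) with hTm
  have hinjp : ∀ k ∈ Tp, ∀ k' ∈ Tp, d k = d k' → k = k' := by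
    intro k hk k' hk' hdd
    have h1 : (kstar:ℕ) < (k:ℕ) := (Finset.mem_filter.1 hk).2
    have h2 : (kstar:ℕ) < (k':ℕ) := (Finset.mem_filter.1 hk').2
    have e1 : Nat.dist (k:ℕ) (kstar:ℕ) = Nat.dist (k':ℕ) (kstar:ℕ) := hdd
    refine Fin.ext ?_
    simp [Nat.dist] at e1
    omega
  have hinjm : ∀ k ∈ Tm, ∀ k' ∈ Tm, d k = d k' → k = k' := by
    intro k hk k' hk' hdd
    have h1 : ¬ (kstar:ℕ) < (k:ℕ) := (Finset.mem_filter.1 hk).2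
    have h2 : ¬ (kstar:ℕ) < (k':ℕ) := (Finset.mem_filter.1 hk').2
    have e1 : Nat.dist (k:ℕ) (kstar:ℕ) = Nat.dist (k':ℕ) (kstar:ℕ) := hdd
    refine Fin.ext ?_
    simp [Nat.dist] at e1
    omega
  have hd1p : ∀ k ∈ Tp, 1 ≤ d k := fun k hk =>
    hd1 k (Finset.ne_of_mem_erase (Finset.mem_filter.1 hk).1)
  have hd1m : ∀ k ∈ Tm, 1 ≤ d k := fun k hk =>
    hd1 k (Finset.ne_of_mem_erase (Finset.mem_filter.1 hk).1)
  have hcardp : Tp.card ≤ N := by rw [hNdef]; exact Finset.card_filter_le _ _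
  have hcardm : Tm.card ≤ N := by rw [hNdef]; exact Finset.card_filter_le _ _
  have hcards : Tp.card + Tm.card = N := by
    rw [hNdef, hTp, hTm]
    exact Finset.card_filter_add_card_filter_not _
  have hPl : Real.exp (-(N:ℝ) - 2*(N:ℝ)/Real.exp 1) * (L/(2*π))^N ≤
      ∏ k ∈ T, min ((d k:ℝ)*x) 1 := by
    have hgb1 := group_bound N Tp.card hN1 hcardp L hL0 hlen
    rw [← hxdef] at hgb1
    have hp := le_trans hgb1 (group_prod Tp d x (le_of_lt hx0) hinjp hd1p)
    have hgb2 := group_bound N Tm.card hN1 hcardm L hL0 hlen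
    rw [← hxdef] at hgb2
    have hm' := le_trans hgb2 (group_prod Tm d x (le_of_lt hx0) hinjm hd1m)
    have hbp : (0:ℝ) ≤ ∏ k ∈ Tp, min ((d k:ℝ)*x) 1 :=
      Finset.prod_nonneg fun k _ => le_min (mul_nonneg (Nat.cast_nonneg _) (le_of_lt hx0))
        zero_le_one
    have hmm : (0:ℝ) ≤ Real.exp (-(Tm.card:ℝ) - (N:ℝ)/Real.exp 1) * (L/(2*π))^Tm.card :=
      mul_nonneg (le_of_lt (Real.exp_pos _)) (pow_nonneg (by positivity) _)
    have hmul := mul_le_mul hp hm' hmm hbp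
    have heq : Real.exp (-(Tp.card:ℝ) - (N:ℝ)/Real.exp 1) * (L/(2*π))^Tp.card *
        (Real.exp (-(Tm.card:ℝ) - (N:ℝ)/Real.exp 1) * (L/(2*π))^Tm.card)
        = Real.exp (-(N:ℝ) - 2*(N:ℝ)/Real.exp 1) * (L/(2*π))^N := by
      rw [mul_mul_mul_comm, ← Real.exp_add, ← pow_add, hcards]
      congr 1
      have hc2 : (Tp.card:ℝ) + (Tm.card:ℝ) = (N:ℝ) := by exact_mod_cast hcards
      have : -(Tp.card:ℝ) - (N:ℝ)/Real.exp 1 + (-(Tm.card:ℝ) - (N:ℝ)/Real.exp 1)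
          = -(N:ℝ) - 2*(N:ℝ)/Real.exp 1 := by
        rw [show 2*(N:ℝ)/Real.exp 1 = (N:ℝ)/Real.exp 1 + (N:ℝ)/Real.exp 1 by ring]
        linarith
      rw [this]
    rw [heq] at hmul
    refine le_trans hmul (le_of_eq ?_)
    rw [hTp, hTm]
    exact Finset.prod_filter_mul_prod_filter_not _ _ _
  -- apply the kill lemma
  have hkill := kill r hr kstar s hs0 T hkT c α β (2*(δ₁*S₁)) hc0 hsum hbd
  -- final arithmetic
  set q := Real.exp (-(1 + 2/Real.exp 1)) * (L/(2*π)) with hqdef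
  have hq0 : 0 < q := by rw [hqdef]; positivity
  have hqpow : q^N = Real.exp (-(N:ℝ) - 2*(N:ℝ)/Real.exp 1) * (L/(2*π))^N := by
    rw [hqdef, mul_pow, ← Real.exp_nat_mul]
    congr 2
    push_cast
    field_simp
    ring
  have hq2 : 2 * (L/80) ≤ q := by
    have h1 : Real.exp (1 + 2/Real.exp 1) ≤ 20/π := exp_const_bound
    have h3 : π/20 ≤ Real.exp (-(1 + 2/Real.exp 1)) := by
      rw [Real.exp_neg]
      have h4 := inv_anti₀ (Real.exp_pos (1 + 2/Real.exp 1)) h1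
      rwa [inv_div] at h4
    have h5 : (π/20) * (L/(2*π)) ≤ q := by
      rw [hqdef]
      exact mul_le_mul_of_nonneg_right h3 (by positivity)
    have h6 : (π/20) * (L/(2*π)) = L/40 := by
      field_simp
      ring
    linarith
  have hPall : q^N ≤ ∏ k ∈ T, ‖Complex.exp (Complex.I * ((kstar:ℕ):ℂ) * ((s k : ℝ):ℂ))
      - Complex.exp (Complex.I * ((k:ℕ):ℂ) * ((s k : ℝ):ℂ))‖ := by
    rw [hqpow]; exact le_trans hPl hprodmin
  have hfinal1 : δ * S₁ * q^N ≤ 2^(N+2) * (δ₁ * S₁) := by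
    have hPnn : (0:ℝ) ≤ ∏ k ∈ T, ‖Complex.exp (Complex.I * ((kstar:ℕ):ℂ) * ((s k : ℝ):ℂ))
        - Complex.exp (Complex.I * ((k:ℕ):ℂ) * ((s k : ℝ):ℂ))‖ :=
      Finset.prod_nonneg fun k _ => norm_nonneg _
    have hstep := mul_le_mul hckey hPall (by positivity) (by positivity)
    calc δ * S₁ * q^N ≤ (2 * (‖c kstar‖ * r^(kstar:ℕ))) * (∏ k ∈ T,
          ‖Complex.exp (Complex.I * ((kstar:ℕ):ℂ) * ((s k : ℝ):ℂ))
            - Complex.exp (Complex.I * ((k:ℕ):ℂ) * ((s k : ℝ):ℂ))‖) := hstep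
      _ = 2 * (‖c kstar‖ * r^(kstar:ℕ) * ∏ k ∈ T,
          ‖Complex.exp (Complex.I * ((kstar:ℕ):ℂ) * ((s k : ℝ):ℂ))
            - Complex.exp (Complex.I * ((k:ℕ):ℂ) * ((s k : ℝ):ℂ))‖) := by ring
      _ ≤ 2 * (2^N * (2*(δ₁*S₁))) := by
          have hc2 := hkill
          rw [← hNdef] at hc2
          linarith
      _ = 2^(N+2) * (δ₁*S₁) := by rw [pow_add]; ring
  have hδq : δ * q^N ≤ 2^(N+2) * δ₁ := by
    have h2 : δ * q^N * S₁ ≤ (2^(N+2) * δ₁) * S₁ := by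
      have := hfinal1
      ring_nf
      ring_nf at this
      linarith
    exact le_of_mul_le_mul_right h2 hS₁
  have hL80 : L/80 ≤ 1 := by
    have h4 : π < 4 := Real.pi_lt_four
    rw [div_le_one (by norm_num)]
    linarith
  have hstep1 : (L/80)^(2*m-1) ≤ (L/80)^N :=
    pow_le_pow_of_le_one (by positivity) hL80 hNle
  have hstep2 : (L/80)^N ≤ (q/2)^N := by
    apply pow_le_pow_left₀ (by positivity)
    linarith
  calc (1/4)*δ*(L/80)^(2*m-1) ≤ (1/4)*δ*(q/2)^N := by
        have h7 := le_trans hstep1 hstep2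
        have := mul_le_mul_of_nonneg_left h7 (by positivity : (0:ℝ) ≤ (1/4)*δ)
        linarith
    _ = δ * q^N / 2^(N+2) := by
        rw [div_pow, pow_add]
        field_simp
        ring
    _ ≤ δ₁ := by
        rw [div_le_iff₀ (by positivity)]
        calc δ*q^N ≤ 2^(N+2)*δ₁ := hδq
          _ = δ₁ * 2^(N+2) := by ring

end Helpers

/-- **Claim (dangerous configurations).** There is an absolute constant `b > 0` such that:
given `n ≥ 2`, `m ≥ 1`, `r, δ, δ₁ > 0`, an interval `I = [α,β]` with `0 < β − α ≤ 2π`,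
coefficients `(λ_k^±)` and `a` with `|λ_k^+ − λ_k^-| ≥ ½(|λ_k^+ − a| + |λ_k^- − a|)`, a
sign sequence `σ` and two distinct `m`-element sets `U₁ ≠ U₂`, if for `j = 1,2` the flipped
polynomial `P_j` has `S(r,P_j) > 0`, all flipped coefficients are `δ`-large, and
`max_{θ∈I} |P_j(re^{iθ})| ≤ δ₁ S(r,P_j)`, then `δ₁ > ¼ δ (b|I|)^{2m−1}`. -/
theorem dangerous_flips_force_large_delta :
    ∃ b : ℝ, 0 < b ∧
      ∀ (n m : ℕ), 2 ≤ n → 1 ≤ m →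
      ∀ (r δ δ₁ : ℝ), 0 < r → 0 < δ → 0 < δ₁ →
      ∀ (α β : ℝ), α < β → β - α ≤ 2 * π →
      ∀ (lamP lamM : Fin (n + 1) → ℂ) (a : ℂ),
        (∀ k : Fin (n + 1),
          (1 / 2) * (‖lamP k - a‖ + ‖lamM k - a‖) ≤
            ‖lamP k - lamM k‖) →
      ∀ (σ : Fin (n + 1) → Bool) (U₁ U₂ : Finset (Fin (n + 1))),
        U₁.card = m → U₂.card = m → U₁ ≠ U₂ →
        0 < Sof (coefOf lamP lamM (flipped σ U₁)) r →
        0 < Sof (coefOf lamP lamM (flipped σ U₂)) r →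
        (∀ k ∈ U₁, δ * Sof (coefOf lamP lamM (flipped σ U₁)) r ≤
          ‖coefOf lamP lamM (flipped σ U₁) k - a‖ * r ^ (k : ℕ)) →
        (∀ k ∈ U₂, δ * Sof (coefOf lamP lamM (flipped σ U₂)) r ≤
          ‖coefOf lamP lamM (flipped σ U₂) k - a‖ * r ^ (k : ℕ)) →
        (∀ θ ∈ Set.Icc α β,
          ‖Pval (coefOf lamP lamM (flipped σ U₁))
              ((r : ℂ) * Complex.exp (Complex.I * (θ : ℂ)))‖ ≤
            δ₁ * Sof (coefOf lamP lamM (flipped σ U₁)) r) →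
        (∀ θ ∈ Set.Icc α β,
          ‖Pval (coefOf lamP lamM (flipped σ U₂))
              ((r : ℂ) * Complex.exp (Complex.I * (θ : ℂ)))‖ ≤
            δ₁ * Sof (coefOf lamP lamM (flipped σ U₂)) r) →
        (1 / 4) * δ * (b * (β - α)) ^ (2 * m - 1) < δ₁ := by
  refine ⟨1/160, by norm_num, ?_⟩
  intro n m hn hm r δ δ₁ hr hδ hδ₁ α β hαβ hlen lamP lamM a hlam σ U₁ U₂ hU₁ hU₂ hne hS₁ hS₂
    hδU₁ hδU₂ hmax1 hmax2
  have hL0 : 0 < β - α := by linarith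
  have hkey : (1/4) * δ * ((β-α)/80) ^ (2*m-1) ≤ δ₁ := by
    rcases le_total (Sof (coefOf lamP lamM (flipped σ U₂)) r)
        (Sof (coefOf lamP lamM (flipped σ U₁)) r) with h | h
    · exact key hm r δ δ₁ hr hδ hδ₁ α β hαβ hlen lamP lamM a hlam σ U₁ U₂ hU₁ hU₂ hne hS₁ h
        hδU₁ hmax1 hmax2
    · exact key hm r δ δ₁ hr hδ hδ₁ α β hαβ hlen lamP lamM a hlam σ U₂ U₁ hU₂ hU₁ (Ne.symm hne)
        hS₂ h hδU₂ hmax2 hmax1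
  have hlt : ((1/160) * (β-α)) ^ (2*m-1) < ((β-α)/80) ^ (2*m-1) := by
    apply pow_lt_pow_left₀ ?_ (by positivity) ?_
    · linarith
    · omega
  calc (1/4) * δ * ((1/160)*(β-α))^(2*m-1) < (1/4)*δ*((β-α)/80)^(2*m-1) := by
        have := mul_lt_mul_of_pos_left hlt (by positivity : (0:ℝ) < (1/4)*δ)
        linarith
    _ ≤ δ₁ := hkey
end

section
/- Let F be analytic on the open unit disk D = {z ∈ ℂ : |z| < 1}, not identically zero, and bounded on D. Let N denote the number of zeros of F in the closed disk {|z| ≤ ½}, counted with multiplicities. Then max_{|z|≤1/2} |F(z)| ≤ (4/5)^N · sup_{|z|<1} |F(z)|. -/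
open Metric



-- inner Blaschke bound
lemma jensen_aux_inner {z ρ : ℂ} (hz : ‖z‖ ≤ 1/2) (hρ : ‖ρ‖ ≤ 1/2) :
    ‖z - ρ‖ ≤ (4/5) * ‖1 - (starRingEnd ℂ) ρ * z‖ := by
  have hz' : Complex.normSq z ≤ 1/4 := by
    rw [← Complex.sq_norm]; nlinarith [norm_nonneg z]
  have hρ' : Complex.normSq ρ ≤ 1/4 := by
    rw [← Complex.sq_norm]; nlinarith [norm_nonneg ρ]
  have key : Complex.normSq (z - ρ) ≤ (4/5)^2 * Complex.normSq (1 - (starRingEnd ℂ) ρ * z) := by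
    obtain ⟨x, y⟩ := z
    obtain ⟨u, v⟩ := ρ
    simp only [Complex.normSq_mk, Complex.normSq_apply, Complex.sub_re, Complex.sub_im,
      Complex.mul_re, Complex.mul_im, Complex.one_re, Complex.one_im] at *
    norm_num at *
    nlinarith [sq_nonneg (x+u), sq_nonneg (y+v), sq_nonneg (u*y-v*x),
      mul_nonneg (by linarith : (0:ℝ) ≤ 1/4 - (x^2+y^2)) (by linarith : (0:ℝ) ≤ 1/4 - (u^2+v^2))]
  calc ‖z - ρ‖ = Real.sqrt (Complex.normSq (z - ρ)) := Complex.norm_def _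
    _ ≤ Real.sqrt ((4/5)^2 * Complex.normSq (1 - (starRingEnd ℂ) ρ * z)) := Real.sqrt_le_sqrt key
    _ = (4/5) * ‖1 - (starRingEnd ℂ) ρ * z‖ := by
        rw [Real.sqrt_mul (by positivity), Real.sqrt_sq (by norm_num), Complex.norm_def]


lemma jensen_aux_sphere {w ρ : ℂ} {r : ℝ} (hr1 : 1/2 < r) (hr2 : r < 1)
    (hw : ‖w‖ = r) (hρ : ‖ρ‖ ≤ 1/2) :
    ‖1 - (starRingEnd ℂ) ρ * w‖
      ≤ Real.sqrt (1 + (1 - r^2)/(r - 1/2)^2) * ‖w - ρ‖ := by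
  have h1r : (0:ℝ) ≤ 1 - r^2 := by nlinarith
  have hpos : (0:ℝ) < (r - 1/2)^2 := pow_pos (by linarith) 2
  have hd : r - 1/2 ≤ ‖w - ρ‖ := by
    have h := norm_sub_norm_le w ρ
    linarith [h, hw.ge, hρ]
  have hK1 : (1:ℝ) ≤ 1 + (1 - r^2)/(r - 1/2)^2 := by
    have : (0:ℝ) ≤ (1 - r^2)/(r - 1/2)^2 := div_nonneg h1r hpos.le
    linarith
  have key : Complex.normSq (1 - (starRingEnd ℂ) ρ * w)
      ≤ (1 + (1 - r^2)/(r - 1/2)^2) * Complex.normSq (w - ρ) := by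
    have hdiff : Complex.normSq (1 - (starRingEnd ℂ) ρ * w) - Complex.normSq (w - ρ)
        ≤ 1 - r^2 := by
      have hw' : Complex.normSq w = r^2 := by rw [← Complex.sq_norm, hw]
      have hρ0 : 0 ≤ Complex.normSq ρ := Complex.normSq_nonneg ρ
      obtain ⟨x, y⟩ := w
      obtain ⟨u, v⟩ := ρ
      simp only [Complex.normSq_mk, Complex.normSq_apply, Complex.sub_re, Complex.sub_im,
        Complex.mul_re, Complex.mul_im, Complex.one_re, Complex.one_im, Complex.conj_re, Complex.conj_im] at hw' hρ0 ⊢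
      nlinarith [mul_nonneg hρ0 h1r]
    have hsq : (r - 1/2)^2 ≤ Complex.normSq (w - ρ) := by
      rw [← Complex.sq_norm]
      nlinarith [norm_nonneg (w - ρ)]
    have h2 : 1 - r^2 ≤ (1 - r^2)/(r - 1/2)^2 * Complex.normSq (w - ρ) := by
      rw [div_mul_eq_mul_div, le_div_iff₀ hpos]
      nlinarith
    nlinarith
  calc ‖1 - (starRingEnd ℂ) ρ * w‖
      = Real.sqrt (Complex.normSq (1 - (starRingEnd ℂ) ρ * w)) := Complex.norm_def _
    _ ≤ Real.sqrt ((1 + (1 - r^2)/(r - 1/2)^2) * Complex.normSq (w - ρ)) :=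
        Real.sqrt_le_sqrt key
    _ = Real.sqrt (1 + (1 - r^2)/(r - 1/2)^2) * ‖w - ρ‖ := by
        rw [Real.sqrt_mul (by linarith), Complex.norm_def]


open Finset in
/-- **Jensen's bound.** Let `F` be analytic, not identically zero, and bounded on the open
unit disk. If `F` has exactly `N` zeros (with multiplicities) in the closed disk of radius
`½` — encoded by the factorization `F(z) = ∏_{i<N} (z − ρ_i) · G(z)` with all `ρ_i` in the
closed disk of radius `½` and `G` analytic on the unit disk and zero-free on the closed
disk of radius `½` — then `max_{|z|≤1/2} |F(z)| ≤ (4/5)^N · sup_{|z|<1} |F(z)|`. -/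
theorem jensen_bound
    (F : ℂ → ℂ) (hF : DifferentiableOn ℂ F (ball (0 : ℂ) 1))
    (hFne : ∃ z ∈ ball (0 : ℂ) 1, F z ≠ 0)
    (hFbd : BddAbove ((fun w => ‖F w‖) '' ball (0 : ℂ) 1))
    (N : ℕ) (ρ : Fin N → ℂ) (hρ : ∀ i, ρ i ∈ closedBall (0 : ℂ) (1 / 2))
    (G : ℂ → ℂ) (hG : DifferentiableOn ℂ G (ball (0 : ℂ) 1))
    (hfac : ∀ z ∈ ball (0 : ℂ) 1, F z = (∏ i : Fin N, (z - ρ i)) * G z)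
    (hGne : ∀ z ∈ closedBall (0 : ℂ) (1 / 2), G z ≠ 0) :
    ∀ z ∈ closedBall (0 : ℂ) (1 / 2),
      ‖F z‖ ≤
        (4 / 5 : ℝ) ^ N * sSup ((fun w => ‖F w‖) '' ball (0 : ℂ) 1) := by
  set M := sSup ((fun w => ‖F w‖) '' ball (0 : ℂ) 1) with hM
  have hMle : ∀ w ∈ ball (0 : ℂ) 1, ‖F w‖ ≤ M :=
    fun w hw => le_csSup hFbd ⟨w, hw, rfl⟩
  have hρabs : ∀ i, ‖ρ i‖ ≤ 1/2 := by
    intro i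
    have := hρ i
    rw [mem_closedBall, dist_zero_right] at this
    linarith
  set H : ℂ → ℂ := fun w => G w * ∏ i : Fin N, (1 - (starRingEnd ℂ) (ρ i) * w) with hH
  have hHd : DifferentiableOn ℂ H (ball (0 : ℂ) 1) := by
    apply hG.mul
    apply Differentiable.differentiableOn
    apply Differentiable.fun_finsetProd
    intro i _
    exact (differentiable_const _).sub ((differentiable_const _).mul differentiable_id)
  intro z hz
  have hzabs : ‖z‖ ≤ 1/2 := by
    rw [mem_closedBall, dist_zero_right] at hz; linarith
  have hzb : z ∈ ball (0 : ℂ) 1 := by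
    rw [mem_ball, dist_zero_right]; linarith
  -- main estimate for each radius r ∈ (1/2, 1)
  have main : ∀ r : ℝ, 1/2 < r → r < 1 →
      ‖F z‖ ≤ (4/5 : ℝ)^N * (Real.sqrt (1 + (1 - r^2)/(r - 1/2)^2))^N * M := by
    intro r hr1 hr2
    set k := Real.sqrt (1 + (1 - r^2)/(r - 1/2)^2) with hk
    have hk0 : 0 ≤ k := Real.sqrt_nonneg _
    -- bound for H on the sphere of radius r
    have hHsphere : ∀ w ∈ sphere (0 : ℂ) r, ‖H w‖ ≤ k^N * M := by
      intro w hw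
      have hwabs : ‖w‖ = r := by
        rwa [mem_sphere_zero_iff_norm] at hw
      have hwb : w ∈ ball (0 : ℂ) 1 := by
        rw [mem_ball, dist_zero_right, hwabs]; exact hr2
      have hHw : ‖H w‖
          = ‖G w‖ * ∏ i : Fin N, ‖1 - (starRingEnd ℂ) (ρ i) * w‖ := by
        simp [hH, norm_mul, norm_prod]
      have hprod : ∏ i : Fin N, ‖1 - (starRingEnd ℂ) (ρ i) * w‖
          ≤ ∏ i : Fin N, (k * ‖w - ρ i‖) := by
        apply Finset.prod_le_prod (fun i _ => norm_nonneg _)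
        intro i _
        exact jensen_aux_sphere hr1 hr2 hwabs (hρabs i)
      have hFw : ‖F w‖
          = (∏ i : Fin N, ‖w - ρ i‖) * ‖G w‖ := by
        rw [hfac w hwb, norm_mul, norm_prod]
      calc ‖H w‖
          = ‖G w‖ * ∏ i : Fin N, ‖1 - (starRingEnd ℂ) (ρ i) * w‖ := hHw
        _ ≤ ‖G w‖ * ∏ i : Fin N, (k * ‖w - ρ i‖) :=
            mul_le_mul_of_nonneg_left hprod (norm_nonneg _)
        _ = k^N * ((∏ i : Fin N, ‖w - ρ i‖) * ‖G w‖) := by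
            rw [Finset.prod_mul_distrib, Finset.prod_const, Finset.card_univ, Fintype.card_fin]
            ring
        _ = k^N * ‖F w‖ := by rw [← hFw]
        _ ≤ k^N * M := by
            exact mul_le_mul_of_nonneg_left (hMle w hwb) (pow_nonneg hk0 N)
    -- maximum modulus principle
    have hr0 : (0:ℝ) < r := by linarith
    have hHz : ‖H z‖ ≤ k^N * M := by
      have hsub : closure (ball (0 : ℂ) r) ⊆ ball (0 : ℂ) 1 := by
        rw [closure_ball (0 : ℂ) hr0.ne']
        exact closedBall_subset_ball hr2
      have hdc : DiffContOnCl ℂ H (ball (0 : ℂ) r) :=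
        ⟨hHd.mono (ball_subset_ball hr2.le), hHd.continuousOn.mono hsub⟩
      have hfr : ∀ w ∈ frontier (ball (0 : ℂ) r), ‖H w‖ ≤ k^N * M := by
        rw [frontier_ball (0 : ℂ) hr0.ne']
        intro w hw
        exact hHsphere w hw
      have hzc : z ∈ closure (ball (0 : ℂ) r) := by
        rw [closure_ball (0 : ℂ) hr0.ne', mem_closedBall, dist_zero_right]
        linarith
      have := Complex.norm_le_of_forall_mem_frontier_norm_le isBounded_ball hdc hfr hzc
      exact this
    -- inner estimate
    have hprodz : ∏ i : Fin N, ‖z - ρ i‖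
        ≤ ∏ i : Fin N, ((4/5 : ℝ) * ‖1 - (starRingEnd ℂ) (ρ i) * z‖) := by
      apply Finset.prod_le_prod (fun i _ => norm_nonneg _)
      intro i _
      exact jensen_aux_inner hzabs (hρabs i)
    calc ‖F z‖
        = (∏ i : Fin N, ‖z - ρ i‖) * ‖G z‖ := by
          rw [hfac z hzb, norm_mul, norm_prod]
      _ ≤ (∏ i : Fin N, ((4/5 : ℝ) * ‖1 - (starRingEnd ℂ) (ρ i) * z‖))
            * ‖G z‖ :=
          mul_le_mul_of_nonneg_right hprodz (norm_nonneg _)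
      _ = (4/5 : ℝ)^N * ‖H z‖ := by
          rw [Finset.prod_mul_distrib, Finset.prod_const, Finset.card_univ, Fintype.card_fin,
            hH]
          simp only [norm_mul, norm_prod]
          ring
      _ ≤ (4/5 : ℝ)^N * (k^N * M) := by
          exact mul_le_mul_of_nonneg_left hHz (by positivity)
      _ = (4/5 : ℝ)^N * k^N * M := by ring
  -- take the limit r → 1⁻
  have htend : Filter.Tendsto
      (fun r : ℝ => (4/5 : ℝ)^N * (Real.sqrt (1 + (1 - r^2)/(r - 1/2)^2))^N * M)
      (nhdsWithin 1 (Set.Iio 1)) (nhds ((4/5 : ℝ)^N * M)) := by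
    have hc : ContinuousAt
        (fun r : ℝ => (4/5 : ℝ)^N * (Real.sqrt (1 + (1 - r^2)/(r - 1/2)^2))^N * M) 1 := by
      apply ContinuousAt.mul _ continuousAt_const
      apply ContinuousAt.mul continuousAt_const
      apply ContinuousAt.pow
      apply Real.continuous_sqrt.continuousAt.comp
      apply ContinuousAt.add continuousAt_const
      apply ContinuousAt.div (by fun_prop) (by fun_prop)
      norm_num
    have h1 : ((4/5 : ℝ)^N * (Real.sqrt (1 + (1 - (1:ℝ)^2)/((1:ℝ) - 1/2)^2))^N * M)
        = (4/5 : ℝ)^N * M := by norm_num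
    have := (hc.continuousWithinAt (s := Set.Iio (1:ℝ))).tendsto
    rw [h1] at this
    exact this
  refine ge_of_tendsto htend ?_
  filter_upwards [Ioo_mem_nhdsLT_of_mem (by norm_num : (1:ℝ) ∈ Set.Ioc (1/2 : ℝ) 1)] with r hr
  exact main r hr.1 hr.2
end

section
/- For every integer N ≥ 1 and every list z_1,…,z_{2N} of complex numbers (repetitions allowed), there exist a point a ∈ ℂ and a partition of the index set {1,…,2N} into N two-element blocks such that every block {i,j} satisfies |z_i − z_j| ≥ ½(|z_i − a| + |z_j − a|). -/
open Finset

private lemma pairing_aux_sum {n : ℕ} (f g : Fin n → ℝ) (p q k m : Fin n)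
    (hpq : p ≠ q) (hpk : p ≠ k) (hpm : p ≠ m) (hqk : q ≠ k) (hqm : q ≠ m) (hkm : k ≠ m)
    (hoff : ∀ x, x ≠ p → x ≠ q → x ≠ k → x ≠ m → f x = g x) :
    (∑ x, f x) + (g p + g q + g k + g m) = (∑ x, g x) + (f p + f q + f k + f m) := by
  classical
  have hsub : ({p, q, k, m} : Finset (Fin n)) ⊆ univ := subset_univ _
  have hfs : ∀ h : Fin n → ℝ,
      ∑ x ∈ ({p, q, k, m} : Finset (Fin n)), h x = h p + h q + h k + h m := by
    intro h
    rw [show ({p, q, k, m} : Finset (Fin n)) = insert p (insert q (insert k {m})) from rfl]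
    rw [Finset.sum_insert (by simp [hpq, hpk, hpm]),
        Finset.sum_insert (by simp [hqk, hqm]),
        Finset.sum_insert (by simp [hkm]), Finset.sum_singleton]
    ring
  have h1 : ∑ x ∈ univ \ ({p, q, k, m} : Finset (Fin n)), f x
      = ∑ x ∈ univ \ ({p, q, k, m} : Finset (Fin n)), g x := by
    refine Finset.sum_congr rfl fun x hx => ?_
    simp only [Finset.mem_sdiff, Finset.mem_insert, Finset.mem_singleton, Finset.mem_univ,
      true_and, not_or] at hx
    exact hoff x hx.1 hx.2.1 hx.2.2.1 hx.2.2.2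
  have h2 := Finset.sum_sdiff (f := f) hsub
  have h3 := Finset.sum_sdiff (f := g) hsub
  rw [hfs f] at h2
  rw [hfs g] at h3
  linarith

/-- **Pairing lemma.** For every `N ≥ 1` and every list `z_1,…,z_{2N}` of complex numbers
there exist a point `a ∈ ℂ` and a partition of `{1,…,2N}` into `N` two-element blocks
(encoded by a fixed-point-free involution `π` pairing each index with its partner) such
that every block `{i, π i}` satisfies `|z_i − z_{π i}| ≥ ½(|z_i − a| + |z_{π i} − a|)`. -/
theorem pairing_with_center (N : ℕ) (hN : 1 ≤ N) (z : Fin (2 * N) → ℂ) :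
    ∃ (a : ℂ) (π : Equiv.Perm (Fin (2 * N))),
      (∀ i, π (π i) = i) ∧ (∀ i, π i ≠ i) ∧
      (∀ i, (1 / 2) * (‖z i - a‖ + ‖z (π i) - a‖) ≤
        ‖z i - z (π i)‖) := by
  classical
  haveI : NeZero (2 * N) := ⟨by omega⟩
  set S : Finset (Equiv.Perm (Fin (2 * N))) :=
    univ.filter (fun π => (∀ i, π (π i) = i) ∧ ∀ i, π i ≠ i) with hS
  have hSne : S.Nonempty := by
    refine ⟨Equiv.addRight (⟨N, by omega⟩ : Fin (2 * N)), ?_⟩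
    have hcc : (⟨N, by omega⟩ : Fin (2 * N)) + ⟨N, by omega⟩ = 0 := by
      apply Fin.ext
      simp [Fin.add_def]
      rw [show N + N = 2 * N by ring, Nat.mod_self]
    simp only [hS, mem_filter, mem_univ, true_and]
    constructor
    · intro i
      show i + ⟨N, by omega⟩ + ⟨N, by omega⟩ = i
      rw [add_assoc, hcc, add_zero]
    · intro i h
      have h' : i + (⟨N, by omega⟩ : Fin (2 * N)) = i := h
      have h0 : (⟨N, by omega⟩ : Fin (2 * N)) = 0 := by
        have := add_eq_left.mp h'
        exact this
      have := congrArg Fin.val h0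
      simp at this
      omega
  obtain ⟨π, hπS, hmax'⟩ :=
    Finset.exists_max_image S (fun π => ∑ i, ‖z i - z (π i)‖) hSne
  simp only [hS, mem_filter, mem_univ, true_and] at hπS
  obtain ⟨hinv, hfpf⟩ := hπS
  have hmax : ∀ σ : Equiv.Perm (Fin (2 * N)), σ ∈ S →
      (∑ i, ‖z i - z (σ i)‖) ≤ ∑ i, ‖z i - z (π i)‖ :=
    fun σ hσ => hmax' σ hσ
  have habs : ∀ x y : Fin (2 * N),
      ‖z x - z y‖ = ‖z y - z x‖ :=
    fun x y => norm_sub_rev _ _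
  -- exchange lemma
  have swaplem : ∀ p q t u : Fin (2 * N), π p = q → π t = u →
      p ≠ q → p ≠ t → p ≠ u → q ≠ t → q ≠ u →
      ‖z p - z t‖ + ‖z q - z u‖ ≤
        ‖z p - z q‖ + ‖z t - z u‖ := by
    intro p q t u hpq' htu' hpq hpt hpu hqt hqu
    have htu : t ≠ u := fun h => hfpf t (by rw [htu', ← h])
    have hqp' : π q = p := by rw [← hpq', hinv]
    have hut' : π u = t := by rw [← htu', hinv]
    set σ : Equiv.Perm (Fin (2 * N)) := Equiv.swap q t * π * Equiv.swap q t with hσdef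
    have hσ : ∀ x, σ x = Equiv.swap q t (π (Equiv.swap q t x)) := fun x => rfl
    have hσinv : ∀ x, σ (σ x) = x := by
      intro x
      rw [hσ, hσ, Equiv.swap_apply_self, hinv, Equiv.swap_apply_self]
    have hσfpf : ∀ x, σ x ≠ x := by
      intro x hx
      have h1 : Equiv.swap q t (π (Equiv.swap q t x)) = x := by rw [← hσ]; exact hx
      have h2 := congrArg (Equiv.swap q t) h1
      rw [Equiv.swap_apply_self] at h2
      exact hfpf _ h2
    have hσS : σ ∈ S := by
      simp only [hS, mem_filter, mem_univ, true_and]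
      exact ⟨hσinv, hσfpf⟩
    have hσp : σ p = t := by
      rw [hσ, Equiv.swap_apply_of_ne_of_ne hpq hpt, hpq', Equiv.swap_apply_left]
    have hσq : σ q = u := by
      rw [hσ, Equiv.swap_apply_left, htu',
        Equiv.swap_apply_of_ne_of_ne (fun h => hqu h.symm) (fun h => htu h.symm)]
    have hσt : σ t = p := by
      rw [hσ, Equiv.swap_apply_right, hqp', Equiv.swap_apply_of_ne_of_ne hpq hpt]
    have hσu : σ u = q := by
      rw [hσ, Equiv.swap_apply_of_ne_of_ne (fun h => hqu h.symm) (fun h => htu h.symm),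
        hut', Equiv.swap_apply_right]
    have hoff' : ∀ x, x ≠ p → x ≠ q → x ≠ t → x ≠ u →
        ‖z x - z (σ x)‖ = ‖z x - z (π x)‖ := by
      intro x h1 h2 h3 h4
      have hx1 : π x ≠ q := fun h => h1 (by rw [← hinv x, h, hqp'])
      have hx2 : π x ≠ t := fun h => h4 (by rw [← hinv x, h, htu'])
      rw [hσ, Equiv.swap_apply_of_ne_of_ne h2 h3, Equiv.swap_apply_of_ne_of_ne hx1 hx2]
    have hsum : (∑ x, ‖z x - z (σ x)‖) +
        (‖z p - z (π p)‖ + ‖z q - z (π q)‖ +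
          ‖z t - z (π t)‖ + ‖z u - z (π u)‖)
        = (∑ x, ‖z x - z (π x)‖) +
        (‖z p - z (σ p)‖ + ‖z q - z (σ q)‖ +
          ‖z t - z (σ t)‖ + ‖z u - z (σ u)‖) :=
      pairing_aux_sum _ _ p q t u hpq hpt hpu hqt hqu htu hoff'
    rw [hσp, hσq, hσt, hσu, hpq', hqp', htu', hut'] at hsum
    have hle := hmax σ hσS
    have e1 := habs q p
    have e2 := habs u t
    have e3 := habs t p
    have e4 := habs u q
    linarith
  -- choose minimal pair (k, m) of the matching
  obtain ⟨k, -, hkmin⟩ := Finset.exists_min_image univ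
    (fun i => ‖z i - z (π i)‖) ⟨⟨0, by omega⟩, mem_univ _⟩
  refine ⟨(z k + z (π k)) / 2, π, hinv, hfpf, ?_⟩
  intro p
  set a : ℂ := (z k + z (π k)) / 2 with ha
  set m : Fin (2 * N) := π k with hm
  have hmk : π m = k := by rw [hm, hinv]
  have hpq : p ≠ π p := fun h => hfpf p h.symm
  have hkm : k ≠ m := fun h => hfpf k (hm ▸ h.symm)
  by_cases hpk : p = k
  · rw [hpk, ← hm]
    have e1 : z k - a = (z k - z m) / 2 := by rw [ha]; ring
    have e2 : z m - a = (z m - z k) / 2 := by rw [ha]; ring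
    rw [e1, e2, norm_div, norm_div, Complex.norm_two]
    have h3 := habs m k
    have h4 := norm_nonneg (z k - z m)
    linarith
  by_cases hpm : p = m
  · rw [hpm, hmk]
    have e1 : z m - a = (z m - z k) / 2 := by rw [ha]; ring
    have e2 : z k - a = (z k - z m) / 2 := by rw [ha]; ring
    rw [e1, e2, norm_div, norm_div, Complex.norm_two]
    have h3 := habs k m
    have h4 := norm_nonneg (z m - z k)
    linarith
  -- generic case
  set q : Fin (2 * N) := π p with hq
  have hqp : π q = p := by rw [hq, hinv]
  have hqk : q ≠ k := fun h => hpm (by rw [← hqp, h, ← hm])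
  have hqm : q ≠ m := fun h => hpk (by rw [← hqp, h, hmk])
  have A := swaplem p q k m hq.symm hm.symm hpq hpk hpm hqk hqm
  have B := swaplem p q m k hq.symm hmk hpq hpm hpk hqm hqk
  have hmin : ‖z k - z m‖ ≤ ‖z p - z q‖ := hkmin p (mem_univ p)
  have hpa : ‖z p - a‖ ≤
      (‖z p - z k‖ + ‖z p - z m‖) / 2 := by
    have e : z p - a = ((z p - z k) + (z p - z m)) / 2 := by rw [ha]; ring
    rw [e, norm_div, Complex.norm_two]
    have := norm_add_le (z p - z k) (z p - z m)
    linarith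
  have hqa : ‖z q - a‖ ≤
      (‖z q - z k‖ + ‖z q - z m‖) / 2 := by
    have e : z q - a = ((z q - z k) + (z q - z m)) / 2 := by rw [ha]; ring
    rw [e, norm_div, Complex.norm_two]
    have := norm_add_le (z q - z k) (z q - z m)
    linarith
  have e5 := habs m k
  linarith
end

section
/- For every Borel probability measure μ on ℂ there exist a point a ∈ ℂ and a Borel probability measure ρ on ℂ × ℂ such that both marginals of ρ equal μ, ρ is invariant under the coordinate swap (x,y) ↦ (y,x), and ρ({ (x,y) ∈ ℂ × ℂ : |x − y| ≥ ½(|x − a| + |y − a|) }) = 1. -/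
open MeasureTheory Set ENNReal Filter Topology


lemma geom_aux {u v : ℂ} (h1 : u.re * v.re ≤ 0) (h2 : u.im * v.im ≤ 0) :
    (1 / 2) * (‖u‖ + ‖v‖) ≤ ‖u - v‖ := by
  have hu : ‖u‖ ≤ ‖u - v‖ := by
    rw [Complex.norm_def, Complex.norm_def]
    apply Real.sqrt_le_sqrt
    simp only [Complex.normSq_apply, Complex.sub_re, Complex.sub_im]
    nlinarith [mul_self_nonneg u.re, mul_self_nonneg u.im, mul_self_nonneg v.re, mul_self_nonneg v.im]
  have hv : ‖v‖ ≤ ‖u - v‖ := by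
    rw [Complex.norm_def, Complex.norm_def]
    apply Real.sqrt_le_sqrt
    simp only [Complex.normSq_apply, Complex.sub_re, Complex.sub_im]
    nlinarith [mul_self_nonneg u.re, mul_self_nonneg u.im, mul_self_nonneg v.re, mul_self_nonneg v.im]
  linarith


/-- Split a finite measure along the level set `{f = p}` so that the left part has
prescribed total mass `t`. -/
lemma split_measure (ν : Measure ℂ) [IsFiniteMeasure ν] (f : ℂ → ℝ) (hf : Measurable f)
    (p : ℝ) (t : ℝ≥0∞) (h1 : ν {x | f x < p} ≤ t) (h2 : t ≤ ν {x | f x ≤ p}) :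
    ∃ νL νR : Measure ℂ, νL + νR = ν ∧ νL Set.univ = t ∧
      νL {x | f x ≤ p}ᶜ = 0 ∧ νR {x | p ≤ f x}ᶜ = 0 := by
  set A : Set ℂ := {x | f x < p} with hA
  set E : Set ℂ := {x | f x = p} with hE
  set B : Set ℂ := {x | p < f x} with hB
  have hAm : MeasurableSet A := measurableSet_lt hf measurable_const
  have hEm : MeasurableSet E := hf (measurableSet_singleton p)
  have hBm : MeasurableSet B := measurableSet_lt measurable_const hf
  have hAE : Disjoint A E := by
    rw [Set.disjoint_left]; intro x hx hx'
    exact absurd hx' (ne_of_lt hx)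
  have hAEB : Disjoint (A ∪ E) B := by
    rw [Set.disjoint_left]; rintro x (hx | hx) hx' <;>
      simp only [hA, hB, hE, mem_setOf_eq] at hx hx' <;> linarith
  have hmeas_le : ν {x | f x ≤ p} = ν A + ν E := by
    have hle : {x : ℂ | f x ≤ p} = A ∪ E := by
      ext x; simp only [hA, hE, mem_setOf_eq, mem_union, le_iff_lt_or_eq]
    rw [hle, measure_union hAE hEm]
  have hEfin : ν E ≠ ⊤ := measure_ne_top ν E
  have hAfin : ν A ≠ ⊤ := measure_ne_top ν A
  have htfin : t ≠ ⊤ := by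
    intro h; rw [h] at h2; exact absurd (top_le_iff.mp h2) (measure_ne_top ν _)
  refine ⟨ν.restrict A + ((t - ν A) / ν E) • ν.restrict E,
      ν.restrict B + ((ν {x | f x ≤ p} - t) / ν E) • ν.restrict E, ?_, ?_, ?_, ?_⟩
  · have hres : ((t - ν A) / ν E + (ν {x | f x ≤ p} - t) / ν E) • ν.restrict E
        = ν.restrict E := by
      by_cases hE0 : ν E = 0
      · rw [Measure.restrict_eq_zero.mpr hE0, smul_zero]
      · have key : ((t - ν A) / ν E + (ν {x | f x ≤ p} - t) / ν E) = 1 := by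
          rw [← ENNReal.add_div]
          have : (t - ν A) + (ν {x | f x ≤ p} - t) = ν E := by
            rw [add_comm, tsub_add_tsub_cancel h2 h1, hmeas_le,
              ENNReal.add_sub_cancel_left hAfin]
          rw [this, ENNReal.div_self hE0 hEfin]
        rw [key, one_smul]
    calc ν.restrict A + ((t - ν A) / ν E) • ν.restrict E +
          (ν.restrict B + ((ν {x | f x ≤ p} - t) / ν E) • ν.restrict E)
        = ν.restrict A + ν.restrict B +
          ((t - ν A) / ν E + (ν {x | f x ≤ p} - t) / ν E) • ν.restrict E := by
          rw [add_smul]; abel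
      _ = ν.restrict A + ν.restrict B + ν.restrict E := by rw [hres]
      _ = ν.restrict ((A ∪ E) ∪ B) := by
          rw [Measure.restrict_union hAEB hBm, Measure.restrict_union hAE hEm]; abel
      _ = ν := by
          have : (A ∪ E) ∪ B = univ := by
            ext x
            simp only [hA, hB, hE, mem_union, mem_setOf_eq, mem_univ, iff_true]
            rcases lt_trichotomy (f x) p with h | h | h
            · exact Or.inl (Or.inl h)
            · exact Or.inl (Or.inr h)
            · exact Or.inr h
          rw [this, Measure.restrict_univ]
  · simp only [Measure.add_apply, Measure.smul_apply, Measure.restrict_apply MeasurableSet.univ,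
      univ_inter, smul_eq_mul]
    by_cases hE0 : ν E = 0
    · have ht : t = ν A := le_antisymm (by rwa [hmeas_le, hE0, add_zero] at h2) h1
      rw [hE0, mul_zero, add_zero, ht]
    · rw [ENNReal.div_mul_cancel hE0 hEfin, add_tsub_cancel_of_le h1]
  · have hm : MeasurableSet {x : ℂ | f x ≤ p}ᶜ :=
      (measurableSet_le hf measurable_const).compl
    simp only [Measure.add_apply, Measure.smul_apply, Measure.restrict_apply hm, smul_eq_mul]
    have e1 : {x : ℂ | f x ≤ p}ᶜ ∩ A = ∅ := by
      ext x; simp only [hA, mem_inter_iff, mem_compl_iff, mem_setOf_eq, mem_empty_iff_false,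
        iff_false, not_and]
      intro hx hx'; exact hx (le_of_lt hx')
    have e2 : {x : ℂ | f x ≤ p}ᶜ ∩ E = ∅ := by
      ext x; simp only [hE, mem_inter_iff, mem_compl_iff, mem_setOf_eq, mem_empty_iff_false,
        iff_false, not_and]
      intro hx hx'; exact hx (le_of_eq hx')
    rw [e1, e2, measure_empty, mul_zero, add_zero]
  · have hm : MeasurableSet {x : ℂ | p ≤ f x}ᶜ :=
      (measurableSet_le measurable_const hf).compl
    simp only [Measure.add_apply, Measure.smul_apply, Measure.restrict_apply hm, smul_eq_mul]
    have e1 : {x : ℂ | p ≤ f x}ᶜ ∩ B = ∅ := by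
      ext x; simp only [hB, mem_inter_iff, mem_compl_iff, mem_setOf_eq, mem_empty_iff_false,
        iff_false, not_and]
      intro hx hx'; exact hx (le_of_lt hx')
    have e2 : {x : ℂ | p ≤ f x}ᶜ ∩ E = ∅ := by
      ext x; simp only [hE, mem_inter_iff, mem_compl_iff, mem_setOf_eq, mem_empty_iff_false,
        iff_false, not_and]
      intro hx hx'; exact hx (le_of_eq hx'.symm)
    rw [e1, e2, measure_empty, mul_zero, add_zero]


lemma exists_median (ν : Measure ℝ) [IsProbabilityMeasure ν] :
    ∃ p : ℝ, ν (Set.Iio p) ≤ 1 / 2 ∧ (1 / 2 : ℝ≥0∞) ≤ ν (Set.Iic p) := by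
  set s : Set ℝ := {x | (1 / 2 : ℝ≥0∞) ≤ ν (Iic x)} with hs
  have hmono : ∀ ⦃x y : ℝ⦄, x ≤ y → x ∈ s → y ∈ s := fun x y hxy hx =>
    le_trans hx (measure_mono (Iic_subset_Iic.mpr hxy))
  have hne : s.Nonempty := by
    have h := tendsto_measure_Iic_atTop ν
    rw [measure_univ] at h
    have : ∀ᶠ x : ℝ in atTop, (1 / 2 : ℝ≥0∞) ≤ ν (Iic x) :=
      h.eventually (eventually_ge_nhds (by norm_num))
    exact this.exists
  have hbot : Tendsto (fun x : ℝ => ν (Iic x)) atBot (𝓝 0) := by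
    have hempty : ⋂ x : ℝ, Iic x = ∅ := by
      ext y; simp only [mem_iInter, mem_Iic, mem_empty_iff_false, iff_false, not_forall, not_le]
      exact ⟨y - 1, by linarith⟩
    have := tendsto_measure_iInter_atBot (μ := ν) (s := fun x : ℝ => Iic x)
      (fun x => measurableSet_Iic.nullMeasurableSet) (fun x y hxy => Iic_subset_Iic.mpr hxy)
      ⟨0, measure_ne_top ν _⟩
    rwa [hempty, measure_empty] at this
  have hbdd : BddBelow s := by
    have : ∀ᶠ x : ℝ in atBot, ν (Iic x) < 1 / 2 :=
      hbot.eventually (eventually_lt_nhds (by norm_num))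
    obtain ⟨x₀, hx₀⟩ := this.exists
    refine ⟨x₀, fun x hx => ?_⟩
    by_contra h
    push_neg at h
    exact absurd (lt_of_le_of_lt (le_trans hx (measure_mono (Iic_subset_Iic.mpr h.le))) hx₀)
      (lt_irrefl _)
  set p := sInf s with hp
  refine ⟨p, ?_, ?_⟩
  · -- ν (Iio p) ≤ 1/2
    have hirio : Iio p = ⋃ n : ℕ, Iic (p - 1 / (n + 1)) := by
      ext x
      simp only [mem_Iio, mem_iUnion, mem_Iic]
      constructor
      · intro hx
        obtain ⟨n, hn⟩ := exists_nat_one_div_lt (show (0:ℝ) < p - x by linarith)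
        exact ⟨n, by linarith⟩
      · rintro ⟨n, hn⟩
        have : (0:ℝ) < 1 / (n + 1) := by positivity
        linarith
    rw [hirio]
    have hmon : Monotone fun n : ℕ => Iic (p - 1 / (n + 1)) := by
      intro m n hmn
      apply Iic_subset_Iic.mpr
      have h1 : (1:ℝ) / (n + 1) ≤ 1 / (m + 1) := by
        apply div_le_div_of_nonneg_left (by norm_num) (by positivity)
        exact_mod_cast by exact_mod_cast Nat.succ_le_succ hmn
      linarith
    have hlim := tendsto_measure_iUnion_atTop (μ := ν) hmon
    refine le_of_tendsto hlim (Eventually.of_forall fun n => ?_)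
    have hnot : p - 1 / (n + 1) ∉ s := by
      intro h
      have := csInf_le hbdd h
      have hpos : (0:ℝ) < 1 / (n + 1) := by positivity
      rw [← hp] at this; linarith
    simpa only [hs, mem_setOf_eq, not_le] using le_of_lt (not_le.mp hnot)
  · -- 1/2 ≤ ν (Iic p)
    have hiic : Iic p = ⋂ n : ℕ, Iic (p + 1 / (n + 1)) := by
      ext x
      simp only [mem_Iic, mem_iInter]
      constructor
      · intro hx n
        have : (0:ℝ) < 1 / (n + 1) := by positivity
        linarith
      · intro h
        by_contra hc
        push_neg at hc
        obtain ⟨n, hn⟩ := exists_nat_one_div_lt (show (0:ℝ) < x - p by linarith)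
        have := h n
        linarith
    rw [hiic]
    have hant : Antitone fun n : ℕ => Iic (p + 1 / (n + 1)) := by
      intro m n hmn
      apply Iic_subset_Iic.mpr
      have h1 : (1:ℝ) / (n + 1) ≤ 1 / (m + 1) := by
        apply div_le_div_of_nonneg_left (by norm_num) (by positivity)
        exact_mod_cast by exact_mod_cast Nat.succ_le_succ hmn
      linarith
    have hlim := tendsto_measure_iInter_atTop (μ := ν)
      (fun n => measurableSet_Iic.nullMeasurableSet) hant ⟨0, measure_ne_top ν _⟩
    refine ge_of_tendsto hlim (Eventually.of_forall fun n => ?_)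
    have hpos : (0:ℝ) < 1 / (n + 1) := by positivity
    obtain ⟨x, hxs, hx⟩ := exists_lt_of_csInf_lt hne (show sInf s < p + 1 / (n + 1) by
      rw [← hp]; linarith)
    exact le_trans hxs (measure_mono (Iic_subset_Iic.mpr hx.le))

/-- **Coupling lemma for complex laws.** For every Borel probability measure `μ` on `ℂ`
there exist `a ∈ ℂ` and a Borel probability measure `ρ` on `ℂ × ℂ` whose marginals are
both `μ`, which is invariant under the coordinate swap, and which gives full measure to
`{(x,y) : |x − y| ≥ ½(|x − a| + |y − a|)}`. -/
theorem swap_invariant_coupling_complex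
    (μ : Measure ℂ) (hμ : IsProbabilityMeasure μ) :
    ∃ (a : ℂ) (ρ : Measure (ℂ × ℂ)), IsProbabilityMeasure ρ ∧
      ρ.map Prod.fst = μ ∧ ρ.map Prod.snd = μ ∧
      ρ.map Prod.swap = ρ ∧
      ρ {p : ℂ × ℂ |
        (1 / 2) * (‖p.1 - a‖ + ‖p.2 - a‖) ≤
          ‖p.1 - p.2‖} = 1 := by
  have hhalf_top : (1/2 : ℝ≥0∞) < ⊤ := ENNReal.div_lt_top one_ne_top two_ne_zero
  -- medians
  haveI hm1 : IsProbabilityMeasure (μ.map Complex.re) :=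
    Measure.isProbabilityMeasure_map Complex.measurable_re.aemeasurable
  haveI hm2 : IsProbabilityMeasure (μ.map Complex.im) :=
    Measure.isProbabilityMeasure_map Complex.measurable_im.aemeasurable
  obtain ⟨p, hp1, hp2⟩ := exists_median (μ.map Complex.re)
  obtain ⟨q, hq1, hq2⟩ := exists_median (μ.map Complex.im)
  rw [Measure.map_apply Complex.measurable_re measurableSet_Iio] at hp1
  rw [Measure.map_apply Complex.measurable_re measurableSet_Iic] at hp2
  rw [Measure.map_apply Complex.measurable_im measurableSet_Iio] at hq1
  rw [Measure.map_apply Complex.measurable_im measurableSet_Iic] at hq2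
  have hp1' : μ {x : ℂ | x.re < p} ≤ 1/2 := hp1
  have hp2' : (1/2 : ℝ≥0∞) ≤ μ {x : ℂ | x.re ≤ p} := hp2
  have hq1' : μ {x : ℂ | x.im < q} ≤ 1/2 := hq1
  have hq2' : (1/2 : ℝ≥0∞) ≤ μ {x : ℂ | x.im ≤ q} := hq2
  -- horizontal split
  obtain ⟨μB, μT, hBT, hBmass, hBsupp, hTsupp⟩ :=
    split_measure μ Complex.im Complex.measurable_im q (1/2) hq1' hq2'
  have hadd : ∀ s, μB s + μT s = μ s := fun s => by
    rw [← hBT]; exact (Measure.add_apply _ _ _).symm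
  have hμTmass : μT Set.univ = 1/2 := by
    have h := hadd Set.univ
    rw [hBmass, show μ Set.univ = 1 from measure_univ] at h
    have h2 : (1:ℝ≥0∞)/2 + μT Set.univ = 1/2 + 1/2 := by rw [h, ENNReal.add_halves]
    exact (ENNReal.add_right_inj hhalf_top.ne).mp h2
  haveI : IsFiniteMeasure μT := ⟨by rw [hμTmass]; exact hhalf_top⟩
  haveI : IsFiniteMeasure μB := ⟨by rw [hBmass]; exact hhalf_top⟩
  -- choice of the vertical splitting mass
  set t : ℝ≥0∞ := max (μT {x | x.re < p}) (1/2 - μB {x | x.re ≤ p}) with ht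
  have hμB_le_half : μB {x : ℂ | x.re ≤ p} ≤ 1/2 := by
    rw [← hBmass]; exact measure_mono (subset_univ _)
  have ht_le_half : t ≤ 1/2 :=
    max_le (by rw [← hμTmass]; exact measure_mono (subset_univ _)) tsub_le_self
  have ht_top : t ≠ ⊤ := (lt_of_le_of_lt ht_le_half hhalf_top).ne
  have cT1 : μT {x : ℂ | x.re < p} ≤ t := le_max_left _ _
  have cT2 : t ≤ μT {x : ℂ | x.re ≤ p} := by
    apply max_le
    · exact measure_mono fun x hx => show x.re ≤ p from le_of_lt hx
    · rw [tsub_le_iff_right]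
      calc (1:ℝ≥0∞)/2 ≤ μ {x : ℂ | x.re ≤ p} := hp2'
        _ = μB {x : ℂ | x.re ≤ p} + μT {x : ℂ | x.re ≤ p} := (hadd _).symm
        _ = μT {x : ℂ | x.re ≤ p} + μB {x : ℂ | x.re ≤ p} := add_comm _ _
  have hsum : μB {x : ℂ | x.re < p} + t ≤ 1/2 := by
    rcases max_choice (μT {x : ℂ | x.re < p}) (1/2 - μB {x : ℂ | x.re ≤ p}) with hmax | hmax
    · rw [ht, hmax, hadd]
      exact hp1'
    · rw [ht, hmax]
      calc μB {x : ℂ | x.re < p} + (1/2 - μB {x : ℂ | x.re ≤ p})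
          ≤ μB {x : ℂ | x.re ≤ p} + (1/2 - μB {x : ℂ | x.re ≤ p}) := by
            exact add_le_add_left
              (measure_mono fun x hx => show x.re ≤ p from le_of_lt hx) _
        _ = 1/2 := add_tsub_cancel_of_le hμB_le_half
  have cB1 : μB {x : ℂ | x.re < p} ≤ 1/2 - t :=
    (ENNReal.cancel_of_ne ht_top).le_tsub_of_add_le_right hsum
  have cB2 : (1/2 : ℝ≥0∞) - t ≤ μB {x : ℂ | x.re ≤ p} := by
    rw [tsub_le_iff_right]
    calc (1:ℝ≥0∞)/2 = μB {x : ℂ | x.re ≤ p} + (1/2 - μB {x : ℂ | x.re ≤ p}) :=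
        (add_tsub_cancel_of_le hμB_le_half).symm
      _ ≤ μB {x : ℂ | x.re ≤ p} + t := add_le_add_right (le_max_right _ _) _
  -- vertical splits
  obtain ⟨ν₂, ν₁, hT, hν₂mass, hν₂supp, hν₁supp⟩ :=
    split_measure μT Complex.re Complex.measurable_re p t cT1 cT2
  obtain ⟨ν₃, ν₄, hB, hν₃mass, hν₃supp, hν₄supp⟩ :=
    split_measure μB Complex.re Complex.measurable_re p (1/2 - t) cB1 cB2
  have haddT : ∀ s, ν₂ s + ν₁ s = μT s := fun s => by
    rw [← hT]; exact (Measure.add_apply _ _ _).symm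
  have haddB : ∀ s, ν₃ s + ν₄ s = μB s := fun s => by
    rw [← hB]; exact (Measure.add_apply _ _ _).symm
  have hν₁mass : ν₁ Set.univ = 1/2 - t := by
    have h := haddT Set.univ
    rw [hν₂mass, hμTmass, add_comm] at h
    exact ENNReal.eq_sub_of_add_eq ht_top h
  have hν₄mass : ν₄ Set.univ = t := by
    have h := haddB Set.univ
    rw [hν₃mass, hBmass, add_comm] at h
    have h2 := ENNReal.eq_sub_of_add_eq (lt_of_le_of_lt tsub_le_self hhalf_top).ne h
    rwa [ENNReal.sub_sub_cancel hhalf_top.ne ht_le_half] at h2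
  -- quadrants
  set a : ℂ := ⟨p, q⟩ with ha
  set Q1 : Set ℂ := {x | p ≤ x.re} ∩ {x | q ≤ x.im} with hQ1
  set Q2 : Set ℂ := {x | x.re ≤ p} ∩ {x | q ≤ x.im} with hQ2
  set Q3 : Set ℂ := {x | x.re ≤ p} ∩ {x | x.im ≤ q} with hQ3
  set Q4 : Set ℂ := {x | p ≤ x.re} ∩ {x | x.im ≤ q} with hQ4
  have hle_T : ∀ s, ν₁ s ≤ μT s := fun s => by
    rw [← haddT]; exact le_add_self
  have hle_T' : ∀ s, ν₂ s ≤ μT s := fun s => by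
    rw [← haddT]; exact le_add_right le_rfl
  have hle_B : ∀ s, ν₃ s ≤ μB s := fun s => by
    rw [← haddB]; exact le_add_right le_rfl
  have hle_B' : ∀ s, ν₄ s ≤ μB s := fun s => by
    rw [← haddB]; exact le_add_self
  have hν₁Q : ν₁ Q1ᶜ = 0 := by
    rw [hQ1, Set.compl_inter]
    apply measure_union_null hν₁supp
    exact le_antisymm (le_trans (hle_T _) (le_of_eq hTsupp)) (zero_le)
  have hν₂Q : ν₂ Q2ᶜ = 0 := by
    rw [hQ2, Set.compl_inter]
    apply measure_union_null hν₂supp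
    exact le_antisymm (le_trans (hle_T' _) (le_of_eq hTsupp)) (zero_le)
  have hν₃Q : ν₃ Q3ᶜ = 0 := by
    rw [hQ3, Set.compl_inter]
    apply measure_union_null hν₃supp
    exact le_antisymm (le_trans (hle_B _) (le_of_eq hBsupp)) (zero_le)
  have hν₄Q : ν₄ Q4ᶜ = 0 := by
    rw [hQ4, Set.compl_inter]
    apply measure_union_null hν₄supp
    exact le_antisymm (le_trans (hle_B' _) (le_of_eq hBsupp)) (zero_le)
  -- the target set
  set S : Set (ℂ × ℂ) := {z : ℂ × ℂ |
      (1 / 2) * (‖z.1 - a‖ + ‖z.2 - a‖) ≤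
        ‖z.1 - z.2‖} with hS
  have hgeom : ∀ x y : ℂ, (x - a).re * (y - a).re ≤ 0 → (x - a).im * (y - a).im ≤ 0 →
      (x, y) ∈ S := by
    intro x y h1 h2
    have h := geom_aux h1 h2
    rw [sub_sub_sub_cancel_right] at h
    exact h
  have hare : a.re = p := rfl
  have haim : a.im = q := rfl
  have hsub13 : Q1 ×ˢ Q3 ⊆ S := by
    rintro ⟨x, y⟩ ⟨⟨hx1, hx2⟩, hy1, hy2⟩
    simp only [hQ1, hQ3, mem_inter_iff, mem_setOf_eq] at hx1 hx2 hy1 hy2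
    refine hgeom x y ?_ ?_
    · rw [Complex.sub_re, Complex.sub_re, hare]
      exact mul_nonpos_iff.mpr (Or.inl ⟨sub_nonneg.mpr hx1, sub_nonpos.mpr hy1⟩)
    · rw [Complex.sub_im, Complex.sub_im, haim]
      exact mul_nonpos_iff.mpr (Or.inl ⟨sub_nonneg.mpr hx2, sub_nonpos.mpr hy2⟩)
  have hsub31 : Q3 ×ˢ Q1 ⊆ S := by
    rintro ⟨x, y⟩ ⟨⟨hx1, hx2⟩, hy1, hy2⟩
    simp only [hQ1, hQ3, mem_inter_iff, mem_setOf_eq] at hx1 hx2 hy1 hy2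
    refine hgeom x y ?_ ?_
    · rw [Complex.sub_re, Complex.sub_re, hare]
      exact mul_nonpos_iff.mpr (Or.inr ⟨sub_nonpos.mpr hx1, sub_nonneg.mpr hy1⟩)
    · rw [Complex.sub_im, Complex.sub_im, haim]
      exact mul_nonpos_iff.mpr (Or.inr ⟨sub_nonpos.mpr hx2, sub_nonneg.mpr hy2⟩)
  have hsub24 : Q2 ×ˢ Q4 ⊆ S := by
    rintro ⟨x, y⟩ ⟨⟨hx1, hx2⟩, hy1, hy2⟩
    simp only [hQ2, hQ4, mem_inter_iff, mem_setOf_eq] at hx1 hx2 hy1 hy2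
    refine hgeom x y ?_ ?_
    · rw [Complex.sub_re, Complex.sub_re, hare]
      exact mul_nonpos_iff.mpr (Or.inr ⟨sub_nonpos.mpr hx1, sub_nonneg.mpr hy1⟩)
    · rw [Complex.sub_im, Complex.sub_im, haim]
      exact mul_nonpos_iff.mpr (Or.inl ⟨sub_nonneg.mpr hx2, sub_nonpos.mpr hy2⟩)
  have hsub42 : Q4 ×ˢ Q2 ⊆ S := by
    rintro ⟨x, y⟩ ⟨⟨hx1, hx2⟩, hy1, hy2⟩
    simp only [hQ2, hQ4, mem_inter_iff, mem_setOf_eq] at hx1 hx2 hy1 hy2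
    refine hgeom x y ?_ ?_
    · rw [Complex.sub_re, Complex.sub_re, hare]
      exact mul_nonpos_iff.mpr (Or.inl ⟨sub_nonneg.mpr hx1, sub_nonpos.mpr hy1⟩)
    · rw [Complex.sub_im, Complex.sub_im, haim]
      exact mul_nonpos_iff.mpr (Or.inr ⟨sub_nonpos.mpr hx2, sub_nonneg.mpr hy2⟩)
  -- finiteness
  haveI : IsFiniteMeasure ν₁ :=
    ⟨by rw [hν₁mass]; exact lt_of_le_of_lt tsub_le_self hhalf_top⟩
  haveI : IsFiniteMeasure ν₂ :=
    ⟨by rw [hν₂mass]; exact lt_of_le_of_lt ht_le_half hhalf_top⟩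
  haveI : IsFiniteMeasure ν₃ :=
    ⟨by rw [hν₃mass]; exact lt_of_le_of_lt tsub_le_self hhalf_top⟩
  haveI : IsFiniteMeasure ν₄ :=
    ⟨by rw [hν₄mass]; exact lt_of_le_of_lt ht_le_half hhalf_top⟩
  -- the coupling
  set ρ : Measure (ℂ × ℂ) :=
    (1/2 - t)⁻¹ • (ν₁.prod ν₃ + ν₃.prod ν₁) + t⁻¹ • (ν₂.prod ν₄ + ν₄.prod ν₂) with hρ
  have hcancel13 : ((1/2 - t)⁻¹ * (1/2 - t)) • (ν₁ + ν₃) = ν₁ + ν₃ := by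
    by_cases hz : (1/2 : ℝ≥0∞) - t = 0
    · have e1 : ν₁ = 0 := Measure.measure_univ_eq_zero.mp (by rw [hν₁mass, hz])
      have e3 : ν₃ = 0 := Measure.measure_univ_eq_zero.mp (by rw [hν₃mass, hz])
      rw [e1, e3]; simp
    · rw [ENNReal.inv_mul_cancel hz (lt_of_le_of_lt tsub_le_self hhalf_top).ne, one_smul]
  have hcancel24 : (t⁻¹ * t) • (ν₂ + ν₄) = ν₂ + ν₄ := by
    by_cases hz : t = 0
    · have e2 : ν₂ = 0 := Measure.measure_univ_eq_zero.mp (by rw [hν₂mass, hz])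
      have e4 : ν₄ = 0 := Measure.measure_univ_eq_zero.mp (by rw [hν₄mass, hz])
      rw [e2, e4]; simp
    · rw [ENNReal.inv_mul_cancel hz ht_top, one_smul]
  have hmsum : (ν₁ + ν₃) + (ν₂ + ν₄) = μ := by
    rw [← hBT, ← hT, ← hB]; abel
  have hfst : ρ.map Prod.fst = μ := by
    rw [hρ, Measure.map_add _ _ measurable_fst, Measure.map_smul, Measure.map_smul,
      Measure.map_add _ _ measurable_fst, Measure.map_add _ _ measurable_fst,
      Measure.map_fst_prod, Measure.map_fst_prod, Measure.map_fst_prod, Measure.map_fst_prod,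
      hν₁mass, hν₂mass, hν₃mass, hν₄mass, ← smul_add, ← smul_add, smul_smul, smul_smul,
      hcancel13, hcancel24, hmsum]
  have hsnd : ρ.map Prod.snd = μ := by
    rw [hρ, Measure.map_add _ _ measurable_snd, Measure.map_smul, Measure.map_smul,
      Measure.map_add _ _ measurable_snd, Measure.map_add _ _ measurable_snd,
      Measure.map_snd_prod, Measure.map_snd_prod, Measure.map_snd_prod, Measure.map_snd_prod,
      hν₁mass, hν₂mass, hν₃mass, hν₄mass, ← smul_add, ← smul_add, smul_smul, smul_smul,
      add_comm ν₃ ν₁, add_comm ν₄ ν₂, hcancel13, hcancel24, hmsum]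
  have hswap : ρ.map Prod.swap = ρ := by
    rw [hρ, Measure.map_add _ _ measurable_swap, Measure.map_smul, Measure.map_smul,
      Measure.map_add _ _ measurable_swap, Measure.map_add _ _ measurable_swap,
      Measure.prod_swap, Measure.prod_swap, Measure.prod_swap, Measure.prod_swap,
      add_comm (ν₃.prod ν₁), add_comm (ν₄.prod ν₂)]
  haveI hprob : IsProbabilityMeasure ρ := by
    constructor
    have h : ρ Set.univ = (ρ.map Prod.fst) Set.univ := by
      rw [Measure.map_apply measurable_fst MeasurableSet.univ, Set.preimage_univ]
    rw [h, hfst, measure_univ]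
  -- S is measurable
  have hc1 : Continuous fun z : ℂ × ℂ =>
      (1 / 2 : ℝ) * (‖z.1 - a‖ + ‖z.2 - a‖) :=
    continuous_const.mul ((continuous_norm.comp (continuous_fst.sub continuous_const)).add
      (continuous_norm.comp (continuous_snd.sub continuous_const)))
  have hc2 : Continuous fun z : ℂ × ℂ => ‖z.1 - z.2‖ :=
    continuous_norm.comp (continuous_fst.sub continuous_snd)
  have hSm : MeasurableSet S := (isClosed_le hc1 hc2).measurableSet
  -- full measure
  have h13 : (ν₁.prod ν₃) Sᶜ = 0 := by
    apply measure_mono_null (compl_subset_compl.mpr hsub13)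
    rw [Set.compl_prod_eq_union]
    apply measure_union_null
    · rw [Measure.prod_prod, hν₁Q, zero_mul]
    · rw [Measure.prod_prod, hν₃Q, mul_zero]
  have h31 : (ν₃.prod ν₁) Sᶜ = 0 := by
    apply measure_mono_null (compl_subset_compl.mpr hsub31)
    rw [Set.compl_prod_eq_union]
    apply measure_union_null
    · rw [Measure.prod_prod, hν₃Q, zero_mul]
    · rw [Measure.prod_prod, hν₁Q, mul_zero]
  have h24 : (ν₂.prod ν₄) Sᶜ = 0 := by
    apply measure_mono_null (compl_subset_compl.mpr hsub24)
    rw [Set.compl_prod_eq_union]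
    apply measure_union_null
    · rw [Measure.prod_prod, hν₂Q, zero_mul]
    · rw [Measure.prod_prod, hν₄Q, mul_zero]
  have h42 : (ν₄.prod ν₂) Sᶜ = 0 := by
    apply measure_mono_null (compl_subset_compl.mpr hsub42)
    rw [Set.compl_prod_eq_union]
    apply measure_union_null
    · rw [Measure.prod_prod, hν₄Q, zero_mul]
    · rw [Measure.prod_prod, hν₂Q, mul_zero]
  have hfull : ρ S = 1 := by
    rw [← prob_compl_eq_zero_iff hSm]
    rw [hρ]
    simp only [Measure.add_apply, Measure.smul_apply, smul_eq_mul, h13, h31, h24, h42,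
      add_zero, mul_zero, zero_add]
  exact ⟨a, ρ, hprob, hfst, hsnd, hswap, hfull⟩
end

section
/- Let μ be a Borel probability measure on ℝ and let a ∈ ℝ be a median of μ, i.e. μ((−∞, a]) ≥ ½ and μ([a, ∞)) ≥ ½. Then there exists a Borel probability measure ρ on ℝ × ℝ such that both marginals of ρ equal μ, ρ is invariant under the coordinate swap (x,y) ↦ (y,x), and ρ-almost every (x,y) satisfies |x − y| ≥ |x − a| + |y − a| (equivalently, a lies between x and y). -/
open MeasureTheory

/-- **Coupling lemma for real laws with a median.** Let `μ` be a Borel probability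
measure on `ℝ` and `a` a median of `μ`. Then there is a Borel probability measure `ρ` on
`ℝ × ℝ` whose marginals are both `μ`, which is swap-invariant, and such that `ρ`-almost
every `(x,y)` satisfies `|x − y| ≥ |x − a| + |y − a|`. -/
theorem swap_invariant_coupling_median
    (μ : Measure ℝ) (hμ : IsProbabilityMeasure μ) (a : ℝ)
    (hmed₁ : (1 / 2 : ENNReal) ≤ μ (Set.Iic a))
    (hmed₂ : (1 / 2 : ENNReal) ≤ μ (Set.Ici a)) :
    ∃ ρ : Measure (ℝ × ℝ), IsProbabilityMeasure ρ ∧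
      ρ.map Prod.fst = μ ∧ ρ.map Prod.snd = μ ∧
      ρ.map Prod.swap = ρ ∧
      (∀ᵐ p ∂ρ, |p.1 - a| + |p.2 - a| ≤ |p.1 - p.2|) := by
  set m₁ : ENNReal := μ (Set.Iio a) with hm₁
  set m₂ : ENNReal := μ (Set.Ioi a) with hm₂
  have hμuniv : μ Set.univ = 1 := measure_univ
  have hhalf : (1/2 : ENNReal) + 1/2 = 1 := ENNReal.add_halves 1
  have hm₁le : m₁ ≤ 1/2 := by
    have h := measure_compl (μ := μ) (measurableSet_Ici (a := a)) (measure_ne_top μ _)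
    rw [Set.compl_Ici, hμuniv] at h
    rw [hm₁, h]
    calc 1 - μ (Set.Ici a) ≤ 1 - (1/2 : ENNReal) := tsub_le_tsub_left hmed₂ 1
    _ = 1/2 := by nth_rewrite 1 [← hhalf]; rw [ENNReal.add_sub_cancel_right (by norm_num)]
  have hm₂le : m₂ ≤ 1/2 := by
    have h := measure_compl (μ := μ) (measurableSet_Iic (a := a)) (measure_ne_top μ _)
    rw [Set.compl_Iic, hμuniv] at h
    rw [hm₂, h]
    calc 1 - μ (Set.Iic a) ≤ 1 - (1/2 : ENNReal) := tsub_le_tsub_left hmed₁ 1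
    _ = 1/2 := by nth_rewrite 1 [← hhalf]; rw [ENNReal.add_sub_cancel_right (by norm_num)]
  set c₁ : ENNReal := 1/2 - m₁ with hc₁
  set c₂ : ENNReal := 1/2 - m₂ with hc₂
  have hc₁m : c₁ + m₁ = 1/2 := tsub_add_cancel_of_le hm₁le
  have hc₂m : c₂ + m₂ = 1/2 := tsub_add_cancel_of_le hm₂le
  set ν₁ : Measure ℝ := μ.restrict (Set.Iio a) + c₁ • Measure.dirac a with hν₁def
  set ν₂ : Measure ℝ := μ.restrict (Set.Ioi a) + c₂ • Measure.dirac a with hν₂def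
  have hν₁univ : ν₁ Set.univ = 1/2 := by
    rw [hν₁def]
    simp only [Measure.add_apply, Measure.restrict_apply_univ, Measure.smul_apply,
      measure_univ, smul_eq_mul, mul_one]
    rw [← hm₁, add_comm, hc₁m]
  have hν₂univ : ν₂ Set.univ = 1/2 := by
    rw [hν₂def]
    simp only [Measure.add_apply, Measure.restrict_apply_univ, Measure.smul_apply,
      measure_univ, smul_eq_mul, mul_one]
    rw [← hm₂, add_comm, hc₂m]
  haveI : IsFiniteMeasure ν₁ := ⟨by rw [hν₁univ]; norm_num⟩
  haveI : IsFiniteMeasure ν₂ := ⟨by rw [hν₂univ]; norm_num⟩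
  have h1 : Set.Iio a ∪ {a} = Set.Iic a := by
    ext x; simp [le_iff_lt_or_eq]
  have d1 : Disjoint (Set.Iio a) ({a} : Set ℝ) :=
    Set.disjoint_singleton_right.2 (by simp)
  have d2 : Disjoint (Set.Iic a) (Set.Ioi a) := Set.Iic_disjoint_Ioi le_rfl
  have hpart : m₁ + μ {a} + m₂ = 1 := by
    have e1 : μ (Set.Iic a) = m₁ + μ {a} := by
      rw [← h1, measure_union d1 (measurableSet_singleton a)]
    rw [← e1, ← measure_union d2 measurableSet_Ioi, Set.Iic_union_Ioi, hμuniv]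
  have hsum : ν₁ + ν₂ = μ := by
    have hca : c₁ + c₂ = μ {a} := by
      have h : (c₁ + c₂) + (m₁ + m₂) = μ {a} + (m₁ + m₂) := by
        have e : (c₁ + c₂) + (m₁ + m₂) = (c₁ + m₁) + (c₂ + m₂) := by ring
        rw [e, hc₁m, hc₂m, hhalf, ← hpart]; ring
      exact WithTop.add_right_cancel
        (ENNReal.add_ne_top.2 ⟨measure_ne_top μ _, measure_ne_top μ _⟩) h
    have hrs : μ.restrict {a} = μ {a} • Measure.dirac a := Measure.restrict_singleton μ a
    have d2' : Disjoint (Set.Iio a ∪ {a}) (Set.Ioi a) := by rw [h1]; exact d2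
    have key : μ.restrict (Set.Iio a) + μ.restrict {a} + μ.restrict (Set.Ioi a) = μ := by
      rw [← Measure.restrict_union d1 (measurableSet_singleton a),
        ← Measure.restrict_union d2' measurableSet_Ioi, h1, Set.Iic_union_Ioi,
        Measure.restrict_univ]
    calc ν₁ + ν₂ = μ.restrict (Set.Iio a) + μ.restrict {a} + μ.restrict (Set.Ioi a) := by
          rw [hν₁def, hν₂def, hrs, ← hca, add_smul]; abel
    _ = μ := key
  set ρ : Measure (ℝ × ℝ) := (2 : ENNReal) • (ν₁.prod ν₂ + ν₂.prod ν₁) with hρdef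
  have h2half : (2 : ENNReal) * (1/2) = 1 := by
    rw [mul_one_div, ENNReal.div_self (by norm_num) (by norm_num)]
  refine ⟨ρ, ?_, ?_, ?_, ?_, ?_⟩
  · constructor
    rw [hρdef, Measure.smul_apply, Measure.add_apply,
      show (Set.univ : Set (ℝ × ℝ)) = Set.univ ×ˢ Set.univ from (Set.univ_prod_univ).symm,
      Measure.prod_prod, Measure.prod_prod, hν₁univ, hν₂univ]
    simp only [smul_eq_mul, mul_one_div]
    rw [ENNReal.add_halves, mul_one_div, ENNReal.div_self (by norm_num) (by norm_num)]
  · rw [hρdef, Measure.map_smul, Measure.map_add _ _ measurable_fst,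
      Measure.map_fst_prod, Measure.map_fst_prod, hν₁univ, hν₂univ,
      smul_add, smul_smul, smul_smul, h2half, one_smul, one_smul, hsum]
  · rw [hρdef, Measure.map_smul, Measure.map_add _ _ measurable_snd,
      Measure.map_snd_prod, Measure.map_snd_prod, hν₁univ, hν₂univ,
      smul_add, smul_smul, smul_smul, h2half, one_smul, one_smul, add_comm, hsum]
  · rw [hρdef, Measure.map_smul, Measure.map_add _ _ measurable_swap,
      Measure.prod_swap, Measure.prod_swap, add_comm]
  · rw [ae_iff]
    have key : ∀ x y : ℝ, x ≤ a → a ≤ y → |x - a| + |y - a| ≤ |x - y| := by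
      intro x y hx hy
      rw [abs_of_nonpos (by linarith), abs_of_nonneg (by linarith),
        abs_of_nonpos (by linarith)]
      linarith
    have hν₁c : ν₁ (Set.Ioi a) = 0 := by
      rw [hν₁def, Measure.add_apply, Measure.restrict_apply measurableSet_Ioi,
        Measure.smul_apply, Measure.dirac_apply' _ measurableSet_Ioi]
      simp only [Set.indicator, Set.mem_Ioi, lt_irrefl, if_false, smul_zero, add_zero]
      rw [show Set.Ioi a ∩ Set.Iio a = ∅ from by
        ext x; simp; intro h; exact le_of_lt h]
      simp
    have hν₂c : ν₂ (Set.Iio a) = 0 := by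
      rw [hν₂def, Measure.add_apply, Measure.restrict_apply measurableSet_Iio,
        Measure.smul_apply, Measure.dirac_apply' _ measurableSet_Iio]
      simp only [Set.indicator, Set.mem_Iio, lt_irrefl, if_false, smul_zero, add_zero]
      rw [show Set.Iio a ∩ Set.Ioi a = ∅ from by
        ext x; simp; intro h; exact le_of_lt h]
      simp
    set S : Set (ℝ × ℝ) := {p : ℝ × ℝ | ¬ (|p.1 - a| + |p.2 - a| ≤ |p.1 - p.2|)} with hSdef
    have h12 : (ν₁.prod ν₂) S = 0 := by
      have hsub : S ⊆ ((Set.Ioi a) ×ˢ Set.univ) ∪ (Set.univ ×ˢ (Set.Iio a)) := by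
        intro p hp
        by_contra hcon
        simp only [Set.mem_union, Set.mem_prod, Set.mem_univ, and_true,
          true_and, not_or, not_lt, Set.mem_Ioi, Set.mem_Iio] at hcon
        exact hp (key p.1 p.2 hcon.1 hcon.2)
      refine measure_mono_null hsub (measure_union_null ?_ ?_) <;>
        rw [Measure.prod_prod] <;> simp [hν₁c, hν₂c]
    have h21 : (ν₂.prod ν₁) S = 0 := by
      have hsub : S ⊆ ((Set.Iio a) ×ˢ Set.univ) ∪ (Set.univ ×ˢ (Set.Ioi a)) := by
        intro p hp
        by_contra hcon
        simp only [Set.mem_union, Set.mem_prod, Set.mem_univ, and_true,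
          true_and, not_or, not_lt, Set.mem_Ioi, Set.mem_Iio] at hcon
        have := key p.2 p.1 hcon.2 hcon.1
        apply hp
        rw [abs_sub_comm p.1 p.2]
        linarith
      refine measure_mono_null hsub (measure_union_null ?_ ?_) <;>
        rw [Measure.prod_prod] <;> simp [hν₁c, hν₂c]
    rw [hρdef, Measure.smul_apply, Measure.add_apply, h12, h21]
    simp
end
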